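/- arXiv:1601.00296 — 13 statements merged into one kernel-verified Lean document; each statement's English description precedes it below -/
import Mathlib

section
/- Every endomorphism of an infinite-dimensional vector space over a field is the sum of four square-zero endomorphisms. -/
open Finsupp LinearMap Function

namespace SumFourSqZeroAux

/-- Sums with eventually-zero terms: `∑ᶠ` equals a range sum. -/
lemma finsum_eq_range {A : Type*} [AddCommMonoid A] (f : ℕ → A) (N : ℕ)
    (h : ∀ k, N ≤ k → f k = 0) : ∑ᶠ k, f k = ∑ k ∈ Finset.range N, f k := by
  apply finsum_eq_sum_of_support_subset
  intro k hk
  simp only [Finset.coe_range, Set.mem_Iio]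
  by_contra hlt
  exact hk (h k (by omega))

lemma finsum_shift {A : Type*} [AddCommGroup A] (f : ℕ → A) (N : ℕ)
    (h : ∀ k, N ≤ k → f k = 0) : ∑ᶠ k, f (k + 1) = (∑ᶠ k, f k) - f 0 := by
  rw [finsum_eq_range f (N + 1) (fun k hk => h k (by omega)),
    finsum_eq_range (fun k => f (k + 1)) N (fun k hk => h (k + 1) (by omega)),
    Finset.sum_range_succ']
  abel

variable (R : Type*) [Ring R] (Z : Type*) [AddCommGroup Z] [Module R Z]

/-- backward shift -/
noncomputable def Mop : (ℕ →₀ Z) →ₗ[R] (ℕ →₀ Z) :=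
  Finsupp.lcomapDomain (· + 1) (add_left_injective 1)

/-- forward shift -/
noncomputable def Sop : (ℕ →₀ Z) →ₗ[R] (ℕ →₀ Z) :=
  Finsupp.lmapDomain Z R (· + 1)

@[simp] lemma Mop_apply (x : ℕ →₀ Z) (n : ℕ) : Mop R Z x n = x (n + 1) := rfl

lemma Mop_Sop (x : ℕ →₀ Z) : Mop R Z (Sop R Z x) = x := by
  ext n
  rw [Mop_apply]
  exact Finsupp.mapDomain_apply (f := (· + 1)) (add_left_injective 1) x n

lemma Mop_pow_apply (k : ℕ) (x : ℕ →₀ Z) (n : ℕ) : ((Mop R Z) ^ k) x n = x (n + k) := by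
  induction k generalizing x n with
  | zero => simp
  | succ k ih =>
      rw [pow_succ, Module.End.mul_apply, ih, Mop_apply]
      ring_nf


lemma Mop_pow_eq_zero (x : ℕ →₀ Z) (k : ℕ) (h : x.support.sup id < k) :
    ((Mop R Z) ^ k) x = 0 := by
  ext n
  rw [Mop_pow_apply, Finsupp.coe_zero, Pi.zero_apply, ← Finsupp.notMem_support_iff]
  intro hmem
  have h2 : id (n + k) ≤ x.support.sup id := Finset.le_sup hmem
  simp only [id_eq] at h2
  omega

/-- the bound beyond which `Mop ^ k` kills `x`. -/
noncomputable def bnd (x : ℕ →₀ Z) : ℕ := x.support.sup id + 1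

lemma Mop_pow_eq_zero' (x : ℕ →₀ Z) (k : ℕ) (h : bnd Z x ≤ k) :
    ((Mop R Z) ^ k) x = 0 :=
  Mop_pow_eq_zero R Z x k (by unfold bnd at h; omega)

section theta

variable (τ : (ℕ →₀ Z) →ₗ[R] (ℕ →₀ Z))

noncomputable def thetaFun (x : ℕ →₀ Z) : ℕ →₀ Z :=
  ∑ᶠ k, ((Sop R Z) ^ (k + 1)) (τ (((Mop R Z) ^ k) x))

lemma theta_term_zero (x : ℕ →₀ Z) (k : ℕ) (h : bnd Z x ≤ k) :
    ((Sop R Z) ^ (k + 1)) (τ (((Mop R Z) ^ k) x)) = 0 := by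
  rw [Mop_pow_eq_zero' R Z x k h, map_zero, map_zero]

lemma thetaFun_eq_range (x : ℕ →₀ Z) (N : ℕ) (h : bnd Z x ≤ N) :
    thetaFun R Z τ x = ∑ k ∈ Finset.range N, ((Sop R Z) ^ (k + 1)) (τ (((Mop R Z) ^ k) x)) :=
  finsum_eq_range _ N (fun k hk => theta_term_zero R Z τ x k (le_trans h hk))

noncomputable def theta : (ℕ →₀ Z) →ₗ[R] (ℕ →₀ Z) where
  toFun := thetaFun R Z τ
  map_add' x y := by
    set N := max (bnd Z (x + y)) (max (bnd Z x) (bnd Z y)) with hN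
    rw [thetaFun_eq_range R Z τ _ N (le_max_left _ _),
      thetaFun_eq_range R Z τ x N (le_trans (le_max_left _ _) (le_max_right _ _)),
      thetaFun_eq_range R Z τ y N (le_trans (le_max_right _ _) (le_max_right _ _)),
      ← Finset.sum_add_distrib]
    exact Finset.sum_congr rfl (fun k _ => by rw [map_add, map_add, map_add])
  map_smul' r x := by
    simp only [RingHom.id_apply]
    have hterm : ∀ k, ((Sop R Z) ^ (k + 1)) (τ (((Mop R Z) ^ k) (r • x)))
        = r • ((Sop R Z) ^ (k + 1)) (τ (((Mop R Z) ^ k) x)) := by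
      intro k; rw [map_smul, map_smul, map_smul]
    show thetaFun R Z τ (r • x) = r • thetaFun R Z τ x
    have hb : bnd Z (r • x) ≤ bnd Z x :=
      Nat.succ_le_succ (Finset.sup_mono (Finsupp.support_smul))
    rw [thetaFun_eq_range R Z τ (r • x) (bnd Z x) hb,
      thetaFun_eq_range R Z τ x (bnd Z x) le_rfl, Finset.smul_sum]
    exact Finset.sum_congr rfl (fun k _ => hterm k)

lemma theta_key (x : ℕ →₀ Z) :
    Mop R Z (theta R Z τ x) - theta R Z τ (Mop R Z x) = τ x := by
  set f : ℕ → (ℕ →₀ Z) := fun k => ((Sop R Z) ^ k) (τ (((Mop R Z) ^ k) x)) with hf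
  have hfz : ∀ k, bnd Z x ≤ k → f k = 0 := by
    intro k hk; rw [hf]; simp only
    rw [Mop_pow_eq_zero' R Z x k hk, map_zero, map_zero]
  have h1 : Mop R Z (theta R Z τ x) = ∑ᶠ k, f k := by
    show Mop R Z (thetaFun R Z τ x) = _
    rw [thetaFun_eq_range R Z τ x (bnd Z x) le_rfl, map_sum,
      finsum_eq_range f (bnd Z x) hfz]
    refine Finset.sum_congr rfl (fun k _ => ?_)
    rw [hf]; simp only
    rw [pow_succ', Module.End.mul_apply, Mop_Sop]
    
  have h2 : theta R Z τ (Mop R Z x) = (∑ᶠ k, f k) - f 0 := by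
    show thetaFun R Z τ (Mop R Z x) = _
    rw [← finsum_shift f (bnd Z x) hfz]
    apply finsum_congr
    intro k
    rw [hf]; simp only
    have hM : ((Mop R Z) ^ k) (Mop R Z x) = ((Mop R Z) ^ (k + 1)) x := by
      rw [pow_succ, Module.End.mul_apply]
    rw [hM]
  rw [h1, h2, hf]
  simp

end theta


section psi

noncomputable def psiFun (x : ℕ →₀ Z) : ℕ →₀ Z :=
  ∑ᶠ k, ((-1 : ℤ) ^ k) • (((Mop R Z) ^ k) x)

lemma psiFun_eq_range (x : ℕ →₀ Z) (N : ℕ) (h : bnd Z x ≤ N) :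
    psiFun R Z x = ∑ k ∈ Finset.range N, ((-1 : ℤ) ^ k) • (((Mop R Z) ^ k) x) :=
  finsum_eq_range _ N (fun k hk => by
    rw [Mop_pow_eq_zero' R Z x k (le_trans h hk), smul_zero])

lemma bnd_M_le (x : ℕ →₀ Z) : bnd Z (Mop R Z x) ≤ bnd Z x := by
  apply Nat.succ_le_succ
  apply Finset.sup_le
  intro k hk
  have hx : x (k + 1) ≠ 0 := by
    have := Finsupp.mem_support_iff.mp hk
    rwa [Mop_apply] at this
  have h2 : id (k + 1) ≤ x.support.sup id :=
    Finset.le_sup (Finsupp.mem_support_iff.mpr hx)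
  simp only [id_eq] at h2 ⊢
  omega

lemma sum_shift_aux (x : ℕ →₀ Z) (N : ℕ) (h : bnd Z x ≤ N) :
    ∑ k ∈ Finset.range N, ((-1 : ℤ) ^ k) • (((Mop R Z) ^ (k + 1)) x)
      = x - psiFun R Z x := by
  have hterm : ∀ k : ℕ, ((-1 : ℤ) ^ k) • (((Mop R Z) ^ (k + 1)) x)
      = -(((-1 : ℤ) ^ (k + 1)) • (((Mop R Z) ^ (k + 1)) x)) := by
    intro k
    rw [pow_succ (-1 : ℤ) k, mul_neg_one, neg_smul, neg_neg]
  rw [Finset.sum_congr rfl (fun k _ => hterm k), Finset.sum_neg_distrib]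
  have h3 : psiFun R Z x
      = ∑ k ∈ Finset.range (N + 1), ((-1 : ℤ) ^ k) • (((Mop R Z) ^ k) x) :=
    psiFun_eq_range R Z x (N + 1) (by omega)
  have h2 := Finset.sum_range_succ' (fun k => ((-1 : ℤ) ^ k) • (((Mop R Z) ^ k) x)) N
  simp only [pow_zero, one_smul, Module.End.one_apply] at h2
  rw [h3, h2]
  abel

lemma psiFun_M (x : ℕ →₀ Z) :
    psiFun R Z (Mop R Z x) = x - psiFun R Z x := by
  rw [psiFun_eq_range R Z (Mop R Z x) (bnd Z x) (bnd_M_le R Z x)]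
  rw [← sum_shift_aux R Z x (bnd Z x) le_rfl]
  refine Finset.sum_congr rfl (fun k _ => ?_)
  have hM : ((Mop R Z) ^ k) (Mop R Z x) = ((Mop R Z) ^ (k + 1)) x := by
    rw [pow_succ, Module.End.mul_apply]
  rw [hM]

lemma M_psiFun (x : ℕ →₀ Z) :
    Mop R Z (psiFun R Z x) = x - psiFun R Z x := by
  have h1 : Mop R Z (psiFun R Z x)
      = ∑ k ∈ Finset.range (bnd Z x), ((-1 : ℤ) ^ k) • (((Mop R Z) ^ (k + 1)) x) := by
    rw [psiFun_eq_range R Z x (bnd Z x) le_rfl, map_sum]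
    refine Finset.sum_congr rfl (fun k _ => ?_)
    rw [map_zsmul]
    congr 1
    rw [pow_succ', Module.End.mul_apply]
  rw [h1, sum_shift_aux R Z x (bnd Z x) le_rfl]

noncomputable def psi : (ℕ →₀ Z) →ₗ[R] (ℕ →₀ Z) where
  toFun := psiFun R Z
  map_add' x y := by
    set N := max (bnd Z (x + y)) (max (bnd Z x) (bnd Z y)) with hN
    rw [psiFun_eq_range R Z _ N (le_max_left _ _),
      psiFun_eq_range R Z x N (le_trans (le_max_left _ _) (le_max_right _ _)),
      psiFun_eq_range R Z y N (le_trans (le_max_right _ _) (le_max_right _ _)),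
      ← Finset.sum_add_distrib]
    refine Finset.sum_congr rfl (fun k _ => ?_)
    rw [map_add, smul_add]
  map_smul' r x := by
    simp only [RingHom.id_apply]
    have hb : bnd Z (r • x) ≤ bnd Z x :=
      Nat.succ_le_succ (Finset.sup_mono (Finsupp.support_smul))
    rw [psiFun_eq_range R Z (r • x) (bnd Z x) hb,
      psiFun_eq_range R Z x (bnd Z x) le_rfl, Finset.smul_sum]
    refine Finset.sum_congr rfl (fun k _ => ?_)
    rw [map_smul, smul_comm]

lemma psi_one (x : ℕ →₀ Z) : psi R Z x + Mop R Z (psi R Z x) = x := by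
  show psiFun R Z x + Mop R Z (psiFun R Z x) = x
  rw [M_psiFun]
  abel

lemma psi_two (x : ℕ →₀ Z) : psi R Z (x + Mop R Z x) = x := by
  show psiFun R Z (x + Mop R Z x) = x
  have : psiFun R Z (x + Mop R Z x) = psiFun R Z x + psiFun R Z (Mop R Z x) :=
    map_add (psi R Z) x (Mop R Z x)
  rw [this, psiFun_M]
  abel

end psi


section model

variable (u : ((ℕ →₀ Z) × (ℕ →₀ Z)) →ₗ[R] ((ℕ →₀ Z) × (ℕ →₀ Z)))

/-- upper-left block of `u` -/
noncomputable def bA : (ℕ →₀ Z) →ₗ[R] (ℕ →₀ Z) :=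
  (fst R (ℕ →₀ Z) (ℕ →₀ Z)) ∘ₗ u ∘ₗ (inl R (ℕ →₀ Z) (ℕ →₀ Z))

/-- lower-right block of `u` -/
noncomputable def bD : (ℕ →₀ Z) →ₗ[R] (ℕ →₀ Z) :=
  (snd R (ℕ →₀ Z) (ℕ →₀ Z)) ∘ₗ u ∘ₗ (inr R (ℕ →₀ Z) (ℕ →₀ Z))

noncomputable def tmap : (ℕ →₀ Z) →ₗ[R] (ℕ →₀ Z) :=
  (bA R Z u) ∘ₗ (LinearMap.id + Mop R Z) + (LinearMap.id + Mop R Z) ∘ₗ (bD R Z u)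

noncomputable def cmap : (ℕ →₀ Z) →ₗ[R] (ℕ →₀ Z) := - theta R Z (tmap R Z u)

noncomputable def bmap : (ℕ →₀ Z) →ₗ[R] (ℕ →₀ Z) :=
  - (Mop R Z ∘ₗ cmap R Z u) - Mop R Z ∘ₗ bD R Z u - bA R Z u

lemma tmap_apply (y : ℕ →₀ Z) :
    tmap R Z u y = bA R Z u y + bA R Z u (Mop R Z y) + (bD R Z u y + Mop R Z (bD R Z u y)) := by
  simp only [tmap, LinearMap.add_apply, LinearMap.comp_apply, LinearMap.id_apply, map_add]

lemma bmap_apply (y : ℕ →₀ Z) :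
    bmap R Z u y = - Mop R Z (cmap R Z u y) - Mop R Z (bD R Z u y) - bA R Z u y := by
  simp only [bmap, LinearMap.sub_apply, LinearMap.neg_apply, LinearMap.comp_apply]

lemma key_c (y : ℕ →₀ Z) :
    Mop R Z (cmap R Z u y) - cmap R Z u (Mop R Z y) = -(tmap R Z u y) := by
  have h := theta_key R Z (tmap R Z u) y
  have hc : ∀ z, cmap R Z u z = -(theta R Z (tmap R Z u) z) := fun z => rfl
  rw [hc, hc, map_neg, ← h]
  abel

lemma key_c' (y : ℕ →₀ Z) :
    cmap R Z u (Mop R Z y) = Mop R Z (cmap R Z u y) + tmap R Z u y := by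
  have h := key_c R Z u y
  rw [sub_eq_iff_eq_add] at h
  rw [h]
  abel

lemma cond1 (y : ℕ →₀ Z) :
    bA R Z u y + bmap R Z u y = -(Mop R Z (cmap R Z u y + bD R Z u y)) := by
  rw [bmap_apply, map_add]
  abel

lemma cond2 (y : ℕ →₀ Z) :
    cmap R Z u (-(Mop R Z y)) + bD R Z u y
      = bA R Z u (-(Mop R Z y)) + bmap R Z u y := by
  rw [map_neg, map_neg, key_c' R Z u y, bmap_apply, tmap_apply]
  abel

noncomputable def wmap : ((ℕ →₀ Z) × (ℕ →₀ Z)) →ₗ[R] ((ℕ →₀ Z) × (ℕ →₀ Z)) :=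
  prod (coprod (bA R Z u) (bmap R Z u)) (coprod (cmap R Z u) (bD R Z u))

noncomputable def vmap : ((ℕ →₀ Z) × (ℕ →₀ Z)) →ₗ[R] ((ℕ →₀ Z) × (ℕ →₀ Z)) :=
  u - wmap R Z u

noncomputable def emap : ((ℕ →₀ Z) × (ℕ →₀ Z)) →ₗ[R] ((ℕ →₀ Z) × (ℕ →₀ Z)) :=
  prod (coprod LinearMap.id (-(Mop R Z))) (coprod LinearMap.id LinearMap.id)

noncomputable def emap' : ((ℕ →₀ Z) × (ℕ →₀ Z)) →ₗ[R] ((ℕ →₀ Z) × (ℕ →₀ Z)) :=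
  prod (coprod (psi R Z) (LinearMap.id - psi R Z)) (coprod (-(psi R Z)) (psi R Z))

lemma emap_apply (p : (ℕ →₀ Z) × (ℕ →₀ Z)) :
    emap R Z p = (p.1 + -(Mop R Z p.2), p.1 + p.2) := by
  simp [emap]

lemma emap'_apply (p : (ℕ →₀ Z) × (ℕ →₀ Z)) :
    emap' R Z p = (psi R Z p.1 + (p.2 - psi R Z p.2), -(psi R Z p.1) + psi R Z p.2) := by
  simp [emap']

lemma wmap_apply (p : (ℕ →₀ Z) × (ℕ →₀ Z)) :
    wmap R Z u p = (bA R Z u p.1 + bmap R Z u p.2, cmap R Z u p.1 + bD R Z u p.2) := by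
  simp [wmap]

lemma psi_M' (y : ℕ →₀ Z) : psi R Z (Mop R Z y) = y - psi R Z y := psiFun_M R Z y

lemma M_psi' (y : ℕ →₀ Z) : Mop R Z (psi R Z y) = y - psi R Z y := M_psiFun R Z y

lemma he (p : (ℕ →₀ Z) × (ℕ →₀ Z)) : emap R Z (emap' R Z p) = p := by
  obtain ⟨x, y⟩ := p
  rw [emap'_apply, emap_apply]
  simp only [Prod.mk.injEq, map_add, map_neg, map_sub, M_psi']
  constructor <;> abel

lemma he' (p : (ℕ →₀ Z) × (ℕ →₀ Z)) : emap' R Z (emap R Z p) = p := by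
  obtain ⟨x, y⟩ := p
  rw [emap_apply, emap'_apply]
  simp only [Prod.mk.injEq, map_add, map_neg, map_sub, psi_M']
  constructor <;> abel

noncomputable def mhat : ((ℕ →₀ Z) × (ℕ →₀ Z)) →ₗ[R] ((ℕ →₀ Z) × (ℕ →₀ Z)) :=
  emap' R Z ∘ₗ wmap R Z u ∘ₗ emap R Z

lemma hm1 (x : ℕ →₀ Z) : (mhat R Z u (x, 0)).1 = 0 := by
  have h0 : emap R Z (x, 0) = (x, x) := by rw [emap_apply]; simp
  have h1 : mhat R Z u (x, 0) = emap' R Z (wmap R Z u (x, x)) := by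
    simp only [mhat, LinearMap.comp_apply, h0]
  rw [h1, wmap_apply, cond1, emap'_apply]
  show psi R Z (-(Mop R Z ((cmap R Z u) x + (bD R Z u) x)))
    + (((cmap R Z u) x + (bD R Z u) x) - psi R Z ((cmap R Z u) x + (bD R Z u) x)) = 0
  rw [map_neg, psi_M']
  abel

lemma hm2 (y : ℕ →₀ Z) : (mhat R Z u (0, y)).2 = 0 := by
  have h0 : emap R Z (0, y) = (-(Mop R Z y), y) := by rw [emap_apply]; simp
  have h1 : mhat R Z u (0, y) = emap' R Z (wmap R Z u (-(Mop R Z y), y)) := by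
    simp only [mhat, LinearMap.comp_apply, h0]
  rw [h1, wmap_apply]
  show (emap' R Z (bA R Z u (-(Mop R Z y)) + bmap R Z u y,
    cmap R Z u (-(Mop R Z y)) + bD R Z u y)).2 = 0
  rw [cond2, emap'_apply]
  exact neg_add_cancel _


noncomputable def n1 : ((ℕ →₀ Z) × (ℕ →₀ Z)) →ₗ[R] ((ℕ →₀ Z) × (ℕ →₀ Z)) :=
  (inl R (ℕ →₀ Z) (ℕ →₀ Z)) ∘ₗ
    ((fst R (ℕ →₀ Z) (ℕ →₀ Z)) ∘ₗ mhat R Z u ∘ₗ (inr R (ℕ →₀ Z) (ℕ →₀ Z))) ∘ₗ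
      (snd R (ℕ →₀ Z) (ℕ →₀ Z))

noncomputable def n2 : ((ℕ →₀ Z) × (ℕ →₀ Z)) →ₗ[R] ((ℕ →₀ Z) × (ℕ →₀ Z)) :=
  (inr R (ℕ →₀ Z) (ℕ →₀ Z)) ∘ₗ
    ((snd R (ℕ →₀ Z) (ℕ →₀ Z)) ∘ₗ mhat R Z u ∘ₗ (inl R (ℕ →₀ Z) (ℕ →₀ Z))) ∘ₗ
      (fst R (ℕ →₀ Z) (ℕ →₀ Z))

lemma n1_apply (p : (ℕ →₀ Z) × (ℕ →₀ Z)) :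
    n1 R Z u p = ((mhat R Z u (0, p.2)).1, 0) := by
  simp [n1]

lemma n2_apply (p : (ℕ →₀ Z) × (ℕ →₀ Z)) :
    n2 R Z u p = (0, (mhat R Z u (p.1, 0)).2) := by
  simp [n2]

lemma msplit : mhat R Z u = n1 R Z u + n2 R Z u := by
  refine LinearMap.ext fun p => ?_
  have h2 : mhat R Z u p = mhat R Z u (p.1, 0) + mhat R Z u (0, p.2) := by
    rw [← map_add]
    congr 1
    ext <;> simp
  rw [LinearMap.add_apply, h2, n1_apply, n2_apply, Prod.ext_iff]
  constructor
  · simp [hm1]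
  · simp [hm2]

noncomputable def w1 : ((ℕ →₀ Z) × (ℕ →₀ Z)) →ₗ[R] ((ℕ →₀ Z) × (ℕ →₀ Z)) :=
  emap R Z ∘ₗ n1 R Z u ∘ₗ emap' R Z

noncomputable def w2 : ((ℕ →₀ Z) × (ℕ →₀ Z)) →ₗ[R] ((ℕ →₀ Z) × (ℕ →₀ Z)) :=
  emap R Z ∘ₗ n2 R Z u ∘ₗ emap' R Z

lemma wsplit : wmap R Z u = w1 R Z u + w2 R Z u := by
  refine LinearMap.ext fun p => ?_
  rw [LinearMap.add_apply]
  have h1 : w1 R Z u p + w2 R Z u p = emap R Z (mhat R Z u (emap' R Z p)) := by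
    simp only [w1, w2, LinearMap.comp_apply, ← map_add, ← LinearMap.add_apply, ← msplit]
  rw [h1]
  simp only [mhat, LinearMap.comp_apply, he]

lemma w1_sq (p : (ℕ →₀ Z) × (ℕ →₀ Z)) : w1 R Z u (w1 R Z u p) = 0 := by
  simp only [w1, LinearMap.comp_apply, he', n1_apply]
  have : ((0 : ℕ →₀ Z), (0 : ℕ →₀ Z)) = (0 : (ℕ →₀ Z) × (ℕ →₀ Z)) := rfl
  simp [this]

lemma w2_sq (p : (ℕ →₀ Z) × (ℕ →₀ Z)) : w2 R Z u (w2 R Z u p) = 0 := by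
  simp only [w2, LinearMap.comp_apply, he', n2_apply]
  have : ((0 : ℕ →₀ Z), (0 : ℕ →₀ Z)) = (0 : (ℕ →₀ Z) × (ℕ →₀ Z)) := rfl
  simp [this]

noncomputable def v1 : ((ℕ →₀ Z) × (ℕ →₀ Z)) →ₗ[R] ((ℕ →₀ Z) × (ℕ →₀ Z)) :=
  (inl R (ℕ →₀ Z) (ℕ →₀ Z)) ∘ₗ
    ((fst R (ℕ →₀ Z) (ℕ →₀ Z)) ∘ₗ vmap R Z u ∘ₗ (inr R (ℕ →₀ Z) (ℕ →₀ Z))) ∘ₗ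
      (snd R (ℕ →₀ Z) (ℕ →₀ Z))

noncomputable def v2 : ((ℕ →₀ Z) × (ℕ →₀ Z)) →ₗ[R] ((ℕ →₀ Z) × (ℕ →₀ Z)) :=
  (inr R (ℕ →₀ Z) (ℕ →₀ Z)) ∘ₗ
    ((snd R (ℕ →₀ Z) (ℕ →₀ Z)) ∘ₗ vmap R Z u ∘ₗ (inl R (ℕ →₀ Z) (ℕ →₀ Z))) ∘ₗ
      (fst R (ℕ →₀ Z) (ℕ →₀ Z))

lemma v1_apply (p : (ℕ →₀ Z) × (ℕ →₀ Z)) :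
    v1 R Z u p = ((vmap R Z u (0, p.2)).1, 0) := by
  simp [v1]

lemma v2_apply (p : (ℕ →₀ Z) × (ℕ →₀ Z)) :
    v2 R Z u p = (0, (vmap R Z u (p.1, 0)).2) := by
  simp [v2]

lemma hv1 (x : ℕ →₀ Z) : (vmap R Z u (x, 0)).1 = 0 := by
  have hw : (wmap R Z u (x, 0)).1 = bA R Z u x := by
    rw [wmap_apply]
    simp
  have hu : ((u (x, 0)).1 : ℕ →₀ Z) = bA R Z u x := by
    simp [bA]
  simp only [vmap, LinearMap.sub_apply, Prod.fst_sub, hw, hu, sub_self]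

lemma hv2 (y : ℕ →₀ Z) : (vmap R Z u (0, y)).2 = 0 := by
  have hw : (wmap R Z u (0, y)).2 = bD R Z u y := by
    rw [wmap_apply]
    simp
  have hu : ((u (0, y)).2 : ℕ →₀ Z) = bD R Z u y := by
    simp [bD]
  simp only [vmap, LinearMap.sub_apply, Prod.snd_sub, hw, hu, sub_self]

lemma vsplit : vmap R Z u = v1 R Z u + v2 R Z u := by
  refine LinearMap.ext fun p => ?_
  have h2 : vmap R Z u p = vmap R Z u (p.1, 0) + vmap R Z u (0, p.2) := by
    rw [← map_add]
    congr 1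
    ext <;> simp
  rw [LinearMap.add_apply, h2, v1_apply, v2_apply, Prod.ext_iff]
  constructor
  · simp [hv1]
  · simp [hv2]

lemma v1_sq (p : (ℕ →₀ Z) × (ℕ →₀ Z)) : v1 R Z u (v1 R Z u p) = 0 := by
  rw [v1_apply, v1_apply]
  have : ((0 : ℕ →₀ Z), (0 : ℕ →₀ Z)) = (0 : (ℕ →₀ Z) × (ℕ →₀ Z)) := rfl
  simp [this]

lemma v2_sq (p : (ℕ →₀ Z) × (ℕ →₀ Z)) : v2 R Z u (v2 R Z u p) = 0 := by
  rw [v2_apply, v2_apply]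
  have : ((0 : ℕ →₀ Z), (0 : ℕ →₀ Z)) = (0 : (ℕ →₀ Z) × (ℕ →₀ Z)) := rfl
  simp [this]

theorem model_four :
    ∃ a b c d : Module.End R ((ℕ →₀ Z) × (ℕ →₀ Z)),
      u = a + b + c + d ∧ a * a = 0 ∧ b * b = 0 ∧ c * c = 0 ∧ d * d = 0 := by
  refine ⟨v1 R Z u, v2 R Z u, w1 R Z u, w2 R Z u, ?_, ?_, ?_, ?_, ?_⟩
  · have h0 : u = vmap R Z u + wmap R Z u := by
      rw [vmap]
      abel
    conv_lhs => rw [h0, vsplit, wsplit]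
    abel
  · exact LinearMap.ext fun p => by rw [Module.End.mul_apply]; exact v1_sq R Z u p
  · exact LinearMap.ext fun p => by rw [Module.End.mul_apply]; exact v2_sq R Z u p
  · exact LinearMap.ext fun p => by rw [Module.End.mul_apply]; exact w1_sq R Z u p
  · exact LinearMap.ext fun p => by rw [Module.End.mul_apply]; exact w2_sq R Z u p

end model

end SumFourSqZeroAux

/-- Every endomorphism of an infinite-dimensional vector space over a field is
the sum of four square-zero endomorphisms. -/
theorem sum_four_square_zero (F : Type*) [Field F] (V : Type*) [AddCommGroup V]
    [Module F V] (hV : ¬ Module.Finite F V) (u : Module.End F V) :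
    ∃ a b c d : Module.End F V,
      u = a + b + c + d ∧ a * a = 0 ∧ b * b = 0 ∧ c * c = 0 ∧ d * d = 0 := by
  classical
  set ι := Module.Basis.ofVectorSpaceIndex F V with hι
  let bV : Module.Basis ι F V := Module.Basis.ofVectorSpace F V
  have hinf : Infinite ι := by
    by_contra hfin
    rw [not_infinite_iff_finite] at hfin
    exact hV (Module.Finite.of_basis bV)
  have h1 : Cardinal.mk ((ℕ × ι) ⊕ (ℕ × ι)) = Cardinal.mk ι := by
    have hprod : Cardinal.mk (ℕ × ι) = Cardinal.mk ι := by
      rw [Cardinal.mk_prod, Cardinal.mk_nat]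
      simp only [Cardinal.lift_aleph0, Cardinal.lift_id, Cardinal.lift_uzero]
      exact Cardinal.mul_eq_right (Cardinal.aleph0_le_mk ι) (Cardinal.aleph0_le_mk ι)
        Cardinal.aleph0_ne_zero
    rw [Cardinal.mk_sum, hprod]
    simp only [Cardinal.lift_id, Cardinal.lift_uzero]
    exact Cardinal.add_eq_self (Cardinal.aleph0_le_mk ι)
  obtain ⟨ε⟩ := Cardinal.eq.1 h1
  let σ : V ≃ₗ[F] ((ℕ →₀ (ι →₀ F)) × (ℕ →₀ (ι →₀ F))) :=
    bV.repr ≪≫ₗ (Finsupp.domLCongr ε.symm) ≪≫ₗ (Finsupp.sumFinsuppLEquivProdFinsupp F) ≪≫ₗ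
      (LinearEquiv.prodCongr (Finsupp.finsuppProdLEquiv F) (Finsupp.finsuppProdLEquiv F))
  set X := ((ℕ →₀ (ι →₀ F)) × (ℕ →₀ (ι →₀ F))) with hX
  let uhat : Module.End F X := σ.toLinearMap ∘ₗ u ∘ₗ σ.symm.toLinearMap
  obtain ⟨a, b, c, d, hsum, ha, hb, hc, hd⟩ :=
    SumFourSqZeroAux.model_four F (ι →₀ F) uhat
  let π : Module.End F X → Module.End F V :=
    fun n => σ.symm.toLinearMap ∘ₗ n ∘ₗ σ.toLinearMap
  have hπsq : ∀ n : Module.End F X, n * n = 0 → (π n) * (π n) = 0 := by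
    intro n hn
    apply LinearMap.ext
    intro v
    have h := LinearMap.ext_iff.mp hn (σ v)
    rw [Module.End.mul_apply] at h
    rw [Module.End.mul_apply]
    show σ.symm (n (σ (σ.symm (n (σ v))))) = (0 : Module.End F V) v
    rw [LinearEquiv.apply_symm_apply, h]
    simp
  refine ⟨π a, π b, π c, π d, ?_, hπsq a ha, hπsq b hb, hπsq c hc, hπsq d hd⟩
  apply LinearMap.ext
  intro v
  have h := LinearMap.ext_iff.mp hsum (σ v)
  simp only [LinearMap.add_apply] at h
  show u v = σ.symm (a (σ v)) + σ.symm (b (σ v)) + σ.symm (c (σ v)) + σ.symm (d (σ v))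
  rw [← map_add, ← map_add, ← map_add, ← h]
  show u v = σ.symm (σ (u (σ.symm (σ v))))
  rw [LinearEquiv.symm_apply_apply, LinearEquiv.symm_apply_apply]
end

section
/- Every endomorphism of an infinite-dimensional vector space over a field is the sum of four idempotent endomorphisms. -/
namespace SumFourIdemAux

variable {F : Type*} [Field F] {W : Type*} [AddCommGroup W] [Module F W]

/-- Block endomorphism of `W × W`. -/
noncomputable def blk (a b c d : Module.End F W) : Module.End F (W × W) :=
  ((a ∘ₗ LinearMap.fst F W W) + (b ∘ₗ LinearMap.snd F W W)).prod
    ((c ∘ₗ LinearMap.fst F W W) + (d ∘ₗ LinearMap.snd F W W))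

lemma blk_apply (a b c d : Module.End F W) (x : W × W) :
    blk a b c d x = (a x.1 + b x.2, c x.1 + d x.2) := rfl

lemma blk_mul (a b c d a' b' c' d' : Module.End F W) :
    blk a b c d * blk a' b' c' d' =
      blk (a * a' + b * c') (a * b' + b * d') (c * a' + d * c') (c * b' + d * d') := by
  apply LinearMap.ext; intro x
  simp only [Module.End.mul_apply, blk_apply, LinearMap.add_apply, map_add, Prod.mk.injEq]
  constructor <;> abel

lemma blk_add (a b c d a' b' c' d' : Module.End F W) :
    blk a b c d + blk a' b' c' d' = blk (a + a') (b + b') (c + c') (d + d') := by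
  apply LinearMap.ext; intro x
  simp only [LinearMap.add_apply, blk_apply, Prod.mk_add_mk, Prod.mk.injEq]
  constructor <;> abel

lemma blk_decomp (t : Module.End F (W × W)) :
    t = blk (LinearMap.fst F W W ∘ₗ t ∘ₗ LinearMap.inl F W W)
            (LinearMap.fst F W W ∘ₗ t ∘ₗ LinearMap.inr F W W)
            (LinearMap.snd F W W ∘ₗ t ∘ₗ LinearMap.inl F W W)
            (LinearMap.snd F W W ∘ₗ t ∘ₗ LinearMap.inr F W W) := by
  apply LinearMap.ext; intro x
  have hx : (x.1, (0:W)) + ((0:W), x.2) = x := by simp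
  calc t x = t ((x.1, (0:W)) + ((0:W), x.2)) := by rw [hx]
    _ = t (x.1, 0) + t (0, x.2) := map_add _ _ _
    _ = _ := by
        rw [blk_apply]
        rfl

/-- Every endomorphism of `(ι × ℕ) →₀ F` is a commutator. -/
theorem exists_commutator {ι : Type*} (G : Module.End F ((ι × ℕ) →₀ F)) :
    ∃ S B : Module.End F ((ι × ℕ) →₀ F), S * B - B * S = G := by
  classical
  set S : Module.End F ((ι × ℕ) →₀ F) :=
    Finsupp.lmapDomain F F (fun p : ι × ℕ => (p.1, p.2 + 1)) with hSdef
  set w : ι × ℕ → ((ι × ℕ) →₀ F) := fun p =>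
    - ∑ k ∈ Finset.range p.2, (S ^ k) (G (Finsupp.single (p.1, p.2 - 1 - k) 1)) with hw
  refine ⟨S, Finsupp.linearCombination F w, ?_⟩
  apply Finsupp.lhom_ext
  intro p c
  obtain ⟨i, j⟩ := p
  have hsingle : (Finsupp.single (i, j) c : (ι × ℕ) →₀ F)
      = c • Finsupp.single (i, j) (1 : F) := by
    rw [Finsupp.smul_single, smul_eq_mul, mul_one]
  rw [hsingle, map_smul, map_smul]
  congr 1
  have hSs : ∀ q : ι × ℕ, S (Finsupp.single q (1 : F))
      = Finsupp.single (q.1, q.2 + 1) (1 : F) := by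
    intro q
    rw [hSdef]
    rw [Finsupp.lmapDomain_apply, Finsupp.mapDomain_single]
  rw [LinearMap.sub_apply, Module.End.mul_apply, Module.End.mul_apply,
    Finsupp.linearCombination_single, one_smul, hSs, Finsupp.linearCombination_single,
    one_smul]
  have hw1 : w (i, j) = - ∑ k ∈ Finset.range j,
      (S ^ k) (G (Finsupp.single (i, j - 1 - k) 1)) := by rw [hw]
  have hw2 : w ((i, j).1, (i, j).2 + 1) = - ∑ k ∈ Finset.range (j + 1),
      (S ^ k) (G (Finsupp.single (i, (j + 1) - 1 - k) 1)) := by rw [hw]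
  rw [hw1, hw2, map_neg, map_sum]
  have h1 : ∀ k ∈ Finset.range j, S ((S ^ k) (G (Finsupp.single (i, j - 1 - k) 1)))
      = (S ^ (k + 1)) (G (Finsupp.single (i, j - 1 - k) 1)) := by
    intro k _
    rw [pow_succ']
    rfl
  rw [Finset.sum_congr rfl h1, Finset.sum_range_succ']
  have e1 : ∀ k, (j + 1) - 1 - (k + 1) = j - 1 - k := by intro k; omega
  have e0 : (j + 1) - 1 - 0 = j := by omega
  simp only [e1, e0, pow_zero, Module.End.one_apply]
  abel

/-- If every endomorphism of `W` is a commutator, then every endomorphism of `W × W`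
is a sum of four idempotents. -/
theorem model_case
    (hcomm : ∀ G : Module.End F W, ∃ S B : Module.End F W, S * B - B * S = G)
    (t : Module.End F (W × W)) :
    ∃ p q r s, t = p + q + r + s ∧ p * p = p ∧ q * q = q ∧ r * r = r ∧ s * s = s := by
  classical
  set a : Module.End F W := LinearMap.fst F W W ∘ₗ t ∘ₗ LinearMap.inl F W W with ha
  set b : Module.End F W := LinearMap.fst F W W ∘ₗ t ∘ₗ LinearMap.inr F W W with hb
  set c : Module.End F W := LinearMap.snd F W W ∘ₗ t ∘ₗ LinearMap.inl F W W with hc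
  set d : Module.End F W := LinearMap.snd F W W ∘ₗ t ∘ₗ LinearMap.inr F W W with hd
  obtain ⟨S, B, hSB⟩ := hcomm (a + d - 1 - 1 - 1 - 1)
  rw [sub_eq_iff_eq_add] at hSB
  set γ : Module.End F W := a - 1 - 1 + B * S with hγ
  refine ⟨blk (1 - B * S) B (S - S * B * S) (S * B),
          blk 0 0 ((c - γ + S * B * S) - S) 1,
          blk 1 (γ + (b - B) - 1) 0 0,
          blk γ (1 - γ) γ (1 - γ), ?_, ?_, ?_, ?_, ?_⟩
  · rw [blk_decomp t, ← ha, ← hb, ← hc, ← hd, blk_add, blk_add, blk_add]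
    have h1 : (1 - B * S) + 0 + 1 + γ = a := by rw [hγ]; abel
    have h2 : B + 0 + (γ + (b - B) - 1) + (1 - γ) = b := by abel
    have h3 : (S - S * B * S) + ((c - γ + S * B * S) - S) + 0 + γ = c := by abel
    have h4 : S * B + 1 + 0 + (1 - γ) = d := by rw [hSB, hγ]; abel
    rw [h1, h2, h3, h4]
  · rw [blk_mul]
    have h1 : (1 - B * S) * (1 - B * S) + B * (S - S * B * S) = 1 - B * S := by noncomm_ring
    have h2 : (1 - B * S) * B + B * (S * B) = B := by noncomm_ring
    have h3 : (S - S * B * S) * (1 - B * S) + S * B * (S - S * B * S) = S - S * B * S := by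
      noncomm_ring
    have h4 : (S - S * B * S) * B + S * B * (S * B) = S * B := by noncomm_ring
    rw [h1, h2, h3, h4]
  · rw [blk_mul]
    have h1 : (0 : Module.End F W) * 0 + 0 * ((c - γ + S * B * S) - S) = 0 := by noncomm_ring
    have h2 : (0 : Module.End F W) * 0 + 0 * 1 = 0 := by noncomm_ring
    have h3 : ((c - γ + S * B * S) - S) * 0 + 1 * ((c - γ + S * B * S) - S)
        = (c - γ + S * B * S) - S := by noncomm_ring
    have h4 : ((c - γ + S * B * S) - S) * 0 + (1 : Module.End F W) * 1 = 1 := by noncomm_ring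
    rw [h1, h2, h3, h4]
  · rw [blk_mul]
    have h1 : (1 : Module.End F W) * 1 + (γ + (b - B) - 1) * 0 = 1 := by noncomm_ring
    have h2 : 1 * (γ + (b - B) - 1) + (γ + (b - B) - 1) * 0 = γ + (b - B) - 1 := by
      noncomm_ring
    have h3 : (0 : Module.End F W) * 1 + 0 * 0 = 0 := by noncomm_ring
    have h4 : (0 : Module.End F W) * (γ + (b - B) - 1) + 0 * 0 = 0 := by noncomm_ring
    rw [h1, h2, h3, h4]
  · rw [blk_mul]
    have h1 : γ * γ + (1 - γ) * γ = γ := by noncomm_ring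
    have h2 : γ * (1 - γ) + (1 - γ) * (1 - γ) = 1 - γ := by noncomm_ring
    rw [h1, h2]

end SumFourIdemAux

/-- Every endomorphism of an infinite-dimensional vector space over a field is
the sum of four idempotent endomorphisms. -/
theorem sum_four_idempotents (F : Type*) [Field F] (V : Type*) [AddCommGroup V]
    [Module F V] (hV : ¬ Module.Finite F V) (u : Module.End F V) :
    ∃ p q r s : Module.End F V,
      u = p + q + r + s ∧ p * p = p ∧ q * q = q ∧ r * r = r ∧ s * s = s := by
  classical
  let ι := Module.Free.ChooseBasisIndex F V
  let bV : Module.Basis ι F V := Module.Free.chooseBasis F V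
  have hinf : Infinite ι := by
    by_contra h
    rw [not_infinite_iff_finite] at h
    exact hV (Module.Finite.of_basis bV)
  obtain ⟨eqv⟩ : Nonempty (ι ≃ ((ι × ℕ) ⊕ (ι × ℕ))) := by
    rw [← Cardinal.eq]
    have hmk : Cardinal.mk ((ι × ℕ) ⊕ (ι × ℕ))
        = Cardinal.mk ι * Cardinal.aleph0 + Cardinal.mk ι * Cardinal.aleph0 := by
      simp [Cardinal.mk_sum, Cardinal.mk_prod]
    rw [hmk, Cardinal.mul_aleph0_eq (Cardinal.aleph0_le_mk ι),
      Cardinal.add_eq_self (Cardinal.aleph0_le_mk ι)]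
  let e : V ≃ₗ[F] (((ι × ℕ) →₀ F) × ((ι × ℕ) →₀ F)) :=
    bV.repr ≪≫ₗ (Finsupp.domLCongr eqv : (ι →₀ F) ≃ₗ[F] (((ι × ℕ) ⊕ (ι × ℕ)) →₀ F)) ≪≫ₗ
      Finsupp.sumFinsuppLEquivProdFinsupp F
  set t : Module.End F (((ι × ℕ) →₀ F) × ((ι × ℕ) →₀ F)) :=
    e.toLinearMap ∘ₗ u ∘ₗ e.symm.toLinearMap with ht
  obtain ⟨p, q, r, s, hsum, hp, hq, hr, hs⟩ :=
    SumFourIdemAux.model_case (SumFourIdemAux.exists_commutator (ι := ι)) t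
  let Ψ : Module.End F (((ι × ℕ) →₀ F) × ((ι × ℕ) →₀ F)) → Module.End F V :=
    fun f => e.symm.toLinearMap ∘ₗ f ∘ₗ e.toLinearMap
  have hΨmul : ∀ f g, Ψ f * Ψ g = Ψ (f * g) := by
    intro f g
    apply LinearMap.ext; intro x
    simp [Ψ, Module.End.mul_apply]
  have hΨadd : ∀ f g, Ψ (f + g) = Ψ f + Ψ g := by
    intro f g
    apply LinearMap.ext; intro x
    simp [Ψ]
  have hΨt : Ψ t = u := by
    apply LinearMap.ext; intro x
    simp [Ψ, ht]
  refine ⟨Ψ p, Ψ q, Ψ r, Ψ s, ?_, ?_, ?_, ?_, ?_⟩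
  · rw [← hΨt, hsum, hΨadd, hΨadd, hΨadd]
  · rw [hΨmul, hp]
  · rw [hΨmul, hq]
  · rw [hΨmul, hr]
  · rw [hΨmul, hs]
end

section
/- Let p1 and p2 be split (i.e., products of linear factors) polynomials of degree 2 over a field F. Every elementary endomorphism u of an F-vector space V can be written as u = u1 + u2 with p1(u1) = 0 and p2(u2) = 0. -/
open Polynomial

namespace ElementaryAux

variable {F : Type*} [Field F]

/-- The model space: `ℕ →₀ F`. -/
abbrev N (F : Type*) [Field F] := ℕ →₀ F

/-- basis vectors -/
noncomputable def w (F : Type*) [Field F] (n : ℕ) : N F := Finsupp.single n (1 : F)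

variable (a b c d : F)

/-- action of `x` on the basis -/
noncomputable def gx : ℕ → N F
  | 0 => a • w F 0
  | (n+1) => if Even n then w F (n+2) else (a+b) • w F (n+1) - (a*b) • w F n

/-- action of `y` on the basis -/
noncomputable def gy : ℕ → N F
  | 0 => w F 1
  | (n+1) => if Even n then (c+d) • w F (n+1) - (c*d) • w F n else w F (n+2)

/-- linear map from images of basis vectors -/
noncomputable def L (g : ℕ → N F) : Module.End F (N F) :=
  Finsupp.lsum F fun n => LinearMap.toSpanSingleton F (N F) (g n)

lemma L_single (g : ℕ → N F) (n : ℕ) (r : F) :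
    L g (Finsupp.single n r) = r • g n := by
  simp [L, Finsupp.lsum_single, LinearMap.toSpanSingleton_apply]

lemma L_w (g : ℕ → N F) (n : ℕ) : L g (w F n) = g n := by
  simp [w, L_single]

noncomputable def xi : Module.End F (N F) := L (gx a b)
noncomputable def ups : Module.End F (N F) := L (gy c d)
noncomputable def tau : Module.End F (N F) := xi a b + ups c d

lemma gx_odd (m : ℕ) (hm : ¬ Even m) : gx a b m = w F (m+1) := by
  cases m with
  | zero => exact absurd Even.zero hm
  | succ l =>
      have hl : Even l := by
        rcases Nat.even_or_odd l with h | h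
        · exact h
        · exact absurd (Odd.add_one h) hm
      simp [gx, hl]

lemma gy_even (m : ℕ) (hm : Even m) : gy c d m = w F (m+1) := by
  cases m with
  | zero => simp [gy]
  | succ l =>
      have hl : ¬ Even l := fun h => (Nat.even_add_one.mp hm) h
      simp [gy, hl]

lemma xi_gx (n : ℕ) : xi a b (gx a b n) = (a+b) • gx a b n - (a*b) • w F n := by
  cases n with
  | zero =>
      show xi a b (a • w F 0) = (a+b) • (a • w F 0) - (a*b) • w F 0
      rw [map_smul]
      show a • (L (gx a b)) (w F 0) = _
      rw [L_w]
      show a • (a • w F 0) = _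
      rw [smul_smul, smul_smul, ← sub_smul]
      congr 1; ring
  | succ m =>
      by_cases hm : Even m
      · have h1 : ¬ Even (m+1) := by simp [Nat.even_add_one, hm]
        have e1 : gx a b (m+1) = w F (m+2) := by simp [gx, hm]
        have e2 : gx a b (m+2) = (a+b) • w F (m+2) - (a*b) • w F (m+1) := by
          show gx a b ((m+1)+1) = _
          simp [gx, h1]
        rw [e1]
        show (L (gx a b)) (w F (m+2)) = _
        rw [L_w, e2]
      · have e1 : gx a b (m+1) = (a+b) • w F (m+1) - (a*b) • w F m := by simp [gx, hm]
        rw [e1, map_sub, map_smul, map_smul]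
        show (a+b) • (L (gx a b)) (w F (m+1)) - (a*b) • (L (gx a b)) (w F m) = _
        rw [L_w, L_w, gx_odd a b m hm, e1]

lemma ups_gy (n : ℕ) : ups c d (gy c d n) = (c+d) • gy c d n - (c*d) • w F n := by
  cases n with
  | zero =>
      show ups c d (w F 1) = _
      show (L (gy c d)) (w F 1) = _
      rw [L_w]
      have e1 : gy c d 1 = (c+d) • w F 1 - (c*d) • w F 0 := by simp [gy]
      rw [e1]
      show _ = (c+d) • gy c d 0 - (c*d) • w F 0
      rw [show gy c d 0 = w F 1 from rfl]
  | succ m =>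
      by_cases hm : Even m
      · have e1 : gy c d (m+1) = (c+d) • w F (m+1) - (c*d) • w F m := by simp [gy, hm]
        rw [e1, map_sub, map_smul, map_smul]
        show (c+d) • (L (gy c d)) (w F (m+1)) - (c*d) • (L (gy c d)) (w F m) = _
        rw [L_w, L_w, gy_even c d m hm, e1]
      · have h1 : Even (m+1) := Nat.even_add_one.mpr hm
        have e1 : gy c d (m+1) = w F (m+2) := by simp [gy, hm]
        have e2 : gy c d (m+2) = (c+d) • w F (m+2) - (c*d) • w F (m+1) := by
          show gy c d ((m+1)+1) = _
          simp [gy, h1]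
        rw [e1]
        show (L (gy c d)) (w F (m+2)) = _
        rw [L_w, e2]

/-- general quadratic identity for `L g` from identity on basis vectors -/
lemma L_quad (g : ℕ → N F) (s t : F) (h : ∀ n, L g (g n) = s • g n - t • w F n) :
    (L g) ∘ₗ (L g) = s • L g - t • LinearMap.id := by
  refine Finsupp.lhom_ext fun n r => ?_
  have hs : (Finsupp.single n r : N F) = r • w F n := by
    simp [w, Finsupp.smul_single]
  rw [LinearMap.comp_apply, LinearMap.sub_apply, LinearMap.smul_apply, LinearMap.smul_apply,
    LinearMap.id_apply, hs, map_smul, map_smul, L_w, h n, smul_sub, smul_smul, smul_smul,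
    smul_smul, smul_smul, mul_comm r s, mul_comm r t]

lemma xi_quad : (xi a b) ∘ₗ (xi a b) = (a+b) • xi a b - (a*b) • LinearMap.id :=
  L_quad _ _ _ (xi_gx a b)

lemma ups_quad : (ups c d) ∘ₗ (ups c d) = (c+d) • ups c d - (c*d) • LinearMap.id :=
  L_quad _ _ _ (ups_gy c d)

/-- band structure of `gx` -/
lemma gx_supported (n : ℕ) : gx a b n ∈ Finsupp.supported F F (Set.Iio (n+2)) := by
  have hw : ∀ k m : ℕ, k < m → w F k ∈ Finsupp.supported F F (Set.Iio m) :=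
    fun k m hk => Finsupp.single_mem_supported F 1 hk
  cases n with
  | zero => exact Submodule.smul_mem _ _ (hw 0 2 (by norm_num))
  | succ m =>
      by_cases hm : Even m
      · simpa [gx, hm] using hw (m+2) (m+3) (by omega)
      · simp only [gx, if_neg hm]
        exact sub_mem (Submodule.smul_mem _ _ (hw (m+1) (m+3) (by omega)))
          (Submodule.smul_mem _ _ (hw m (m+3) (by omega)))

lemma gy_supported (n : ℕ) : gy c d n ∈ Finsupp.supported F F (Set.Iio (n+2)) := by
  have hw : ∀ k m : ℕ, k < m → w F k ∈ Finsupp.supported F F (Set.Iio m) :=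
    fun k m hk => Finsupp.single_mem_supported F 1 hk
  cases n with
  | zero => exact hw 1 2 (by norm_num)
  | succ m =>
      by_cases hm : Even m
      · simp only [gy, if_pos hm]
        exact sub_mem (Submodule.smul_mem _ _ (hw (m+1) (m+3) (by omega)))
          (Submodule.smul_mem _ _ (hw m (m+3) (by omega)))
      · simpa [gy, hm] using hw (m+2) (m+3) (by omega)

/-- `L g` raises supports by at most one step -/
lemma L_supported (g : ℕ → N F) (hg : ∀ m, g m ∈ Finsupp.supported F F (Set.Iio (m+2)))
    {n : ℕ} {z : N F} (hz : z ∈ Finsupp.supported F F (Set.Iio n)) :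
    L g z ∈ Finsupp.supported F F (Set.Iio (n+1)) := by
  have hrep : L g z = z.sum fun m r => r • g m := by
    rw [L, Finsupp.lsum_apply]
    exact Finsupp.sum_congr fun m _ => rfl
  rw [hrep]
  refine Submodule.finsuppSum_mem F (Finsupp.supported F F (Set.Iio (n+1))) z
    (fun m r => r • g m) fun m hm => ?_
  have hmn : m < n := by
    have h2 := (Finsupp.mem_supported F z).mp hz
    exact h2 (Finsupp.mem_support_iff.mpr hm)
  exact Submodule.smul_mem _ _
    (Finsupp.supported_mono (Set.Iio_subset_Iio (by omega)) (hg m))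

lemma tau_w (n : ℕ) :
    ∃ z ∈ Finsupp.supported F F (Set.Iio (n+1)), tau a b c d (w F n) = w F (n+1) + z := by
  have hw : ∀ k m : ℕ, k < m → w F k ∈ Finsupp.supported F F (Set.Iio m) :=
    fun k m hk => Finsupp.single_mem_supported F 1 hk
  have ht : tau a b c d (w F n) = gx a b n + gy c d n := by
    show xi a b (w F n) + ups c d (w F n) = _
    show (L (gx a b)) (w F n) + (L (gy c d)) (w F n) = _
    rw [L_w, L_w]
  cases n with
  | zero =>
      refine ⟨a • w F 0, Submodule.smul_mem _ _ (hw 0 1 one_pos), ?_⟩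
      rw [ht]
      show a • w F 0 + w F 1 = _
      abel
  | succ m =>
      by_cases hm : Even m
      · refine ⟨(c+d) • w F (m+1) - (c*d) • w F m,
          sub_mem (Submodule.smul_mem _ _ (hw (m+1) (m+2) (by omega)))
            (Submodule.smul_mem _ _ (hw m (m+2) (by omega))), ?_⟩
        rw [ht]
        simp only [gx, gy, if_pos hm]
      · refine ⟨(a+b) • w F (m+1) - (a*b) • w F m,
          sub_mem (Submodule.smul_mem _ _ (hw (m+1) (m+2) (by omega)))
            (Submodule.smul_mem _ _ (hw m (m+2) (by omega))), ?_⟩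
        rw [ht]
        simp only [gx, gy, if_neg hm]
        abel

lemma tau_supported {n : ℕ} {z : N F} (hz : z ∈ Finsupp.supported F F (Set.Iio n)) :
    tau a b c d z ∈ Finsupp.supported F F (Set.Iio (n+1)) := by
  show xi a b z + ups c d z ∈ _
  exact add_mem (L_supported _ (gx_supported a b) hz) (L_supported _ (gy_supported c d) hz)

/-- powers of `tau` applied to `w 0` are unitriangular -/
lemma tau_pow (n : ℕ) :
    ∃ z ∈ Finsupp.supported F F (Set.Iio n), (tau a b c d ^ n) (w F 0) = w F n + z := by
  induction n with
  | zero =>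
      exact ⟨0, zero_mem _, by simp⟩
  | succ n ih =>
      obtain ⟨z, hz, he⟩ := ih
      obtain ⟨z', hz', he'⟩ := tau_w a b c d n
      refine ⟨z' + tau a b c d z, add_mem hz' (tau_supported a b c d hz), ?_⟩
      rw [pow_succ', Module.End.mul_apply, he, map_add, he']
      abel

/-- the `F`-linear map `F[X] → N` given by `p ↦ p(τ)(w 0)` -/
noncomputable def Phi : Polynomial F →ₗ[F] N F where
  toFun p := (Polynomial.aeval (tau a b c d) p) (w F 0)
  map_add' p q := by simp
  map_smul' r p := by simp

lemma Phi_Xpow (n : ℕ) : Phi a b c d (X ^ n) = (tau a b c d ^ n) (w F 0) := by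
  simp [Phi]

lemma Phi_key (p : Polynomial F) :
    ∃ z ∈ Finsupp.supported F F (Set.Iio p.natDegree),
      Phi a b c d p = p.leadingCoeff • w F p.natDegree + z := by
  classical
  have key := fun n => tau_pow a b c d n
  choose z hz hze using key
  set n := p.natDegree with hn
  have hPhi : Phi a b c d p = ∑ i ∈ Finset.range (n+1), p.coeff i • (w F i + z i) := by
    show (Polynomial.aeval (tau a b c d) p) (w F 0) = _
    rw [Polynomial.aeval_eq_sum_range]
    rw [LinearMap.sum_apply]
    refine Finset.sum_congr rfl fun i _ => ?_
    rw [LinearMap.smul_apply, hze i]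
  refine ⟨(∑ i ∈ Finset.range n, p.coeff i • (w F i + z i)) + p.coeff n • z n, ?_, ?_⟩
  · refine add_mem (Submodule.sum_mem _ fun i hi => ?_) (Submodule.smul_mem _ _ (hz n))
    have hi' : i < n := Finset.mem_range.mp hi
    refine Submodule.smul_mem _ _ (add_mem ?_ ?_)
    · exact Finsupp.single_mem_supported F 1 hi'
    · exact Finsupp.supported_mono (Set.Iio_subset_Iio (by omega)) (hz i)
  · rw [hPhi, Finset.sum_range_succ, smul_add]
    show _ = p.coeff n • w F n + _
    abel

lemma Phi_injective : Function.Injective (Phi a b c d) := by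
  have hker : ∀ p, Phi a b c d p = 0 → p = 0 := by
    intro p hp
    by_contra hp0
    obtain ⟨z, hz, he⟩ := Phi_key a b c d p
    have hzn : z p.natDegree = 0 :=
      (Finsupp.mem_supported' F z).mp hz _ (by simp)
    have := congrArg (fun f : N F => f p.natDegree) (he.symm.trans hp)
    simp only [Finsupp.coe_add, Pi.add_apply, Finsupp.coe_smul, Pi.smul_apply, w,
      Finsupp.single_eq_same, smul_eq_mul, mul_one, hzn, add_zero, Finsupp.coe_zero,
      Pi.zero_apply] at this
    exact (Polynomial.leadingCoeff_ne_zero.mpr hp0) this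
  intro p q h
  have : Phi a b c d (p - q) = 0 := by rw [map_sub, h, sub_self]
  exact sub_eq_zero.mp (hker _ this)

lemma w_mem_range (n : ℕ) : w F n ∈ LinearMap.range (Phi a b c d) := by
  induction n using Nat.strong_induction_on with
  | _ n ih =>
      obtain ⟨z, hz, he⟩ := tau_pow a b c d n
      have hzr : z ∈ LinearMap.range (Phi a b c d) := by
        have hsp : z ∈ Submodule.span F ((fun i => Finsupp.single i (1:F)) '' Set.Iio n) := by
          rw [← Finsupp.supported_eq_span_single]; exact hz
        refine Submodule.span_le.mpr ?_ hsp
        rintro _ ⟨i, hi, rfl⟩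
        exact ih i hi
      have : w F n = Phi a b c d (X ^ n) - z := by
        rw [Phi_Xpow, he]; abel
      rw [this]
      exact sub_mem (LinearMap.mem_range_self _ _) hzr

lemma Phi_surjective : Function.Surjective (Phi a b c d) := by
  intro x
  have hx : x ∈ LinearMap.range (Phi a b c d) := by
    have : x ∈ (⊤ : Submodule F (N F)) := trivial
    rw [← Finsupp.supported_univ (M := F) (R := F), Finsupp.supported_eq_span_single] at this
    refine Submodule.span_le.mpr ?_ this
    rintro _ ⟨i, _, rfl⟩
    exact w_mem_range a b c d i
  exact hx

/-- the triangular linear equivalence `F[X] ≃ N` -/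
noncomputable def PhiE : Polynomial F ≃ₗ[F] N F :=
  LinearEquiv.ofBijective (Phi a b c d) ⟨Phi_injective a b c d, Phi_surjective a b c d⟩

lemma PhiE_X_mul (p : Polynomial F) :
    PhiE a b c d (X * p) = tau a b c d (PhiE a b c d p) := by
  show Phi a b c d (X * p) = tau a b c d (Phi a b c d p)
  show (Polynomial.aeval (tau a b c d) (X * p)) (w F 0) = _
  rw [map_mul, Polynomial.aeval_X, Module.End.mul_apply]
  rfl

/-- transfer of a quadratic identity along conjugation -/
lemma conj_quad {M M' : Type*} [AddCommGroup M] [Module F M] [AddCommGroup M'] [Module F M']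
    (e : M ≃ₗ[F] M') (f : Module.End F M) (s t : F)
    (h : f ∘ₗ f = s • f - t • LinearMap.id) :
    (e.conj f) ∘ₗ (e.conj f) = s • e.conj f - t • LinearMap.id := by
  rw [← LinearEquiv.conj_comp, h, map_sub, map_smul, map_smul, LinearEquiv.conj_id]

/-- Everything packaged at the level of `F[X]`: two quadratic operators summing to
multiplication by `X`. -/
theorem exists_quad_sum_mulX (a b c d : F) :
    ∃ v₁ v₂ : Module.End F (Polynomial F),
      (∀ p, v₁ p + v₂ p = X * p) ∧
      v₁ ∘ₗ v₁ = (a+b) • v₁ - (a*b) • LinearMap.id ∧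
      v₂ ∘ₗ v₂ = (c+d) • v₂ - (c*d) • LinearMap.id := by
  refine ⟨(PhiE a b c d).symm.conj (xi a b), (PhiE a b c d).symm.conj (ups c d), ?_, ?_, ?_⟩
  · intro p
    rw [LinearEquiv.conj_apply_apply, LinearEquiv.conj_apply_apply, LinearEquiv.symm_symm,
      ← map_add]
    have : xi a b (PhiE a b c d p) + ups c d (PhiE a b c d p)
        = tau a b c d (PhiE a b c d p) := rfl
    rw [this, ← PhiE_X_mul, LinearEquiv.symm_apply_apply]
  · exact conj_quad _ _ _ _ (xi_quad a b)
  · exact conj_quad _ _ _ _ (ups_quad c d)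

/-- transfer of a quadratic identity to `Finsupp.mapRange` -/
lemma mapRange_quad {ι : Type*} {M : Type*} [AddCommGroup M] [Module F M]
    (f : Module.End F M) (s t : F) (h : f ∘ₗ f = s • f - t • LinearMap.id) :
    (Finsupp.mapRange.linearMap f : Module.End F (ι →₀ M)) ∘ₗ Finsupp.mapRange.linearMap f
      = s • Finsupp.mapRange.linearMap f - t • LinearMap.id := by
  refine Finsupp.lhom_ext fun i m => ?_
  have hm : f (f m) = s • f m - t • m := by
    have := LinearMap.ext_iff.mp h m
    simpa using this
  simp only [LinearMap.comp_apply, LinearMap.sub_apply, LinearMap.smul_apply, LinearMap.id_apply,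
    Finsupp.mapRange.linearMap_apply, Finsupp.mapRange_single, hm, Finsupp.single_sub,
    Finsupp.smul_single]

/-- from the quadratic identity to annihilation by the split polynomial -/
lemma aeval_eq_zero_of_quad {V : Type*} [AddCommGroup V] [Module F V]
    (u₁ : Module.End F V) (a b l : F)
    (h : u₁ ∘ₗ u₁ = (a+b) • u₁ - (a*b) • LinearMap.id) :
    Polynomial.aeval u₁ (C l * ((X - C a) * (X - C b))) = 0 := by
  have h' : u₁ * u₁ = (a+b) • u₁ - (a*b) • (1 : Module.End F V) := h
  have e1 : u₁ * (b • (1 : Module.End F V)) = b • u₁ := by rw [mul_smul_comm, mul_one]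
  have e2 : (a • (1 : Module.End F V)) * u₁ = a • u₁ := by rw [smul_mul_assoc, one_mul]
  have e3 : (a • (1 : Module.End F V)) * (b • (1 : Module.End F V)) = (a*b) • 1 := by
    rw [smul_mul_assoc, mul_smul_comm, mul_one, smul_smul]
  have expand : (u₁ - a • 1) * (u₁ - b • 1) = 0 := by
    rw [sub_mul, mul_sub, mul_sub, e1, e2, e3, h', add_smul]
    abel
  simp only [map_mul, map_sub, Polynomial.aeval_X, Polynomial.aeval_C,
    Module.algebraMap_end_eq_smul_id]
  have : (LinearMap.id : Module.End F V) = 1 := rfl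
  rw [this, expand, mul_zero]

/-- extraction of the two roots -/
lemma exists_two_roots (p : Polynomial F) (hs : (p.map (RingHom.id F)).Splits) (hd : p.degree = 2) :
    ∃ a b, p = C p.leadingCoeff * ((X - C a) * (X - C b)) := by
  have h0 : p ≠ 0 := fun h => by simp [h] at hd
  have hnd : p.natDegree = 2 := natDegree_eq_of_degree_eq_some hd
  have hcard : p.roots.card = 2 := by
    have := (Polynomial.Splits.natDegree_eq_card_roots hs)
    rwa [Polynomial.map_id, hnd, eq_comm] at this
  obtain ⟨a, b, hab⟩ := Multiset.card_eq_two.mp hcard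
  refine ⟨a, b, ?_⟩
  have := Polynomial.Splits.eq_prod_roots (show p.Splits by simpa using hs)
  rw [this, hab]
  simp [Multiset.map_cons, Multiset.prod_cons, mul_assoc]

end ElementaryAux

/-- An endomorphism `u` of an `F`-vector space `V` is elementary if `V`,
viewed as an `F[t]`-module where `t` acts as `u`, is a free `F[t]`-module. -/
def IsElementary {F : Type*} [Field F] {V : Type*} [AddCommGroup V] [Module F V]
    (u : Module.End F V) : Prop :=
  Module.Free (Polynomial F) (Module.AEval' u)

/-- Every elementary endomorphism is a `(p₁, p₂)`-sum, for any split polynomials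
`p₁, p₂` of degree 2. -/
theorem elementary_sum_two_quadratic (F : Type*) [Field F] (V : Type*) [AddCommGroup V]
    [Module F V] (p₁ p₂ : Polynomial F)
    (h₁ : (p₁.map (RingHom.id F)).Splits) (h₁d : p₁.degree = 2)
    (h₂ : (p₂.map (RingHom.id F)).Splits) (h₂d : p₂.degree = 2)
    (u : Module.End F V) (hu : IsElementary u) :
    ∃ u₁ u₂ : Module.End F V,
      u = u₁ + u₂ ∧ Polynomial.aeval u₁ p₁ = 0 ∧ Polynomial.aeval u₂ p₂ = 0 := by
  classical
  obtain ⟨a, b, hp1⟩ := ElementaryAux.exists_two_roots p₁ h₁ h₁d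
  obtain ⟨c, d, hp2⟩ := ElementaryAux.exists_two_roots p₂ h₂ h₂d
  haveI hfree : Module.Free (Polynomial F) (Module.AEval' u) := hu
  set ι := Module.Free.ChooseBasisIndex (Polynomial F) (Module.AEval' u) with hι
  let bb : Module.Basis ι (Polynomial F) (Module.AEval' u) := Module.Free.chooseBasis _ _
  obtain ⟨v₁, v₂, hvsum, hv₁, hv₂⟩ := ElementaryAux.exists_quad_sum_mulX (F := F) a b c d
  -- the global linear equivalence V ≃ (ι →₀ F[X])
  let E : V ≃ₗ[F] (ι →₀ Polynomial F) :=
    (Module.AEval'.of u).trans (bb.repr.restrictScalars F)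
  have hE : ∀ v : V, E (u v) = (X : Polynomial F) • E v := by
    intro v
    show bb.repr (Module.AEval'.of u (u v)) = X • bb.repr (Module.AEval'.of u v)
    rw [← Module.AEval'.X_smul_of, map_smul]
  -- the two operators on ι →₀ F[X]
  let W₁ : Module.End F (ι →₀ Polynomial F) := Finsupp.mapRange.linearMap v₁
  let W₂ : Module.End F (ι →₀ Polynomial F) := Finsupp.mapRange.linearMap v₂
  have hWsum : ∀ g : ι →₀ Polynomial F, W₁ g + W₂ g = (X : Polynomial F) • g := by
    intro g
    refine Finsupp.ext fun i => ?_
    simp only [Finsupp.coe_add, Pi.add_apply, W₁, W₂, Finsupp.mapRange.linearMap_apply,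
      Finsupp.mapRange_apply, Finsupp.smul_apply, smul_eq_mul]
    exact hvsum (g i)
  refine ⟨E.symm.conj W₁, E.symm.conj W₂, ?_, ?_, ?_⟩
  · ext v
    rw [LinearMap.add_apply, LinearEquiv.conj_apply_apply, LinearEquiv.conj_apply_apply,
      LinearEquiv.symm_symm, ← map_add, hWsum, ← hE, LinearEquiv.symm_apply_apply]
  · rw [hp1]
    exact ElementaryAux.aeval_eq_zero_of_quad _ a b _
      (ElementaryAux.conj_quad _ _ _ _ (ElementaryAux.mapRange_quad v₁ _ _ hv₁))
  · rw [hp2]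
    exact ElementaryAux.aeval_eq_zero_of_quad _ c d _
      (ElementaryAux.conj_quad _ _ _ _ (ElementaryAux.mapRange_quad v₂ _ _ hv₂))
end

section
/- Let p1, p2, p3, p4 be split polynomials of degree 2 over a field F and let V be an infinite-dimensional F-vector space. Every endomorphism u of V can be written as u = u1 + u2 + u3 + u4 with pk(uk) = 0 for k = 1, 2, 3, 4. -/
open Finsupp LinearMap Polynomial


open Finsupp LinearMap Polynomial

section Shift
variable (F : Type*) [Field F] (N : Type*) [AddCommGroup N] [Module F N]

/-- forward shift on `ℕ →₀ N` -/
noncomputable def myS : Module.End F (ℕ →₀ N) :=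
  Finsupp.lsum F fun n => Finsupp.lsingle (n + 1)

/-- backward shift -/
noncomputable def myW : Module.End F (ℕ →₀ N) :=
  Finsupp.lsum F fun n => match n with
    | 0 => 0
    | m + 1 => Finsupp.lsingle m

/-- inverse of `1 - myW` -/
noncomputable def myC : Module.End F (ℕ →₀ N) :=
  Finsupp.lsum F fun n => ∑ j ∈ Finset.range (n + 1), Finsupp.lsingle j

variable {F N}

@[simp] lemma myS_single (n : ℕ) (v : N) : myS F N (Finsupp.single n v) = Finsupp.single (n+1) v := by
  simp [myS]

@[simp] lemma myW_single_zero (v : N) : myW F N (Finsupp.single 0 v) = 0 := by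
  simp [myW]

@[simp] lemma myW_single_succ (n : ℕ) (v : N) :
    myW F N (Finsupp.single (n+1) v) = Finsupp.single n v := by
  simp [myW]

lemma myC_single (n : ℕ) (v : N) :
    myC F N (Finsupp.single n v) = ∑ j ∈ Finset.range (n + 1), Finsupp.single j v := by
  simp [myC]

lemma myW_mul_myS : myW F N * myS F N = 1 := by
  apply Finsupp.lhom_ext
  intro n v
  simp [Module.End.mul_apply]

lemma myW_mul_myS_pow (k : ℕ) : myW F N * (myS F N) ^ (k + 1) = (myS F N) ^ k := by
  rw [pow_succ', ← mul_assoc, myW_mul_myS, one_mul]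

lemma one_sub_myW_mul_myC : (1 - myW F N) * myC F N = 1 := by
  apply Finsupp.lhom_ext
  intro n v
  rw [Module.End.mul_apply]
  rw [myC_single]
  induction n with
  | zero => simp
  | succ m ih =>
    rw [Finset.sum_range_succ, map_add, ih, LinearMap.sub_apply, Module.End.one_apply,
      myW_single_succ]
    abel

lemma myC_mul_one_sub_myW : myC F N * (1 - myW F N) = 1 := by
  apply Finsupp.lhom_ext
  intro n v
  rw [Module.End.mul_apply]
  cases n with
  | zero => simp [myC_single]
  | succ m =>
    simp only [LinearMap.sub_apply, Module.End.one_apply, myW_single_succ, map_sub]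
    rw [myC_single, myC_single, Finset.sum_range_succ]
    abel

lemma myC_comm_myW : myC F N * myW F N = myW F N * myC F N := by
  have h1 := one_sub_myW_mul_myC (F := F) (N := N)
  have h2 := myC_mul_one_sub_myW (F := F) (N := N)
  have key : myW F N * (1 - myW F N) = (1 - myW F N) * myW F N := by
    rw [mul_sub, sub_mul, mul_one, one_mul]
  calc myC F N * myW F N = myC F N * myW F N * ((1 - myW F N) * myC F N) := by
        rw [h1, mul_one]
    _ = myC F N * (myW F N * (1 - myW F N)) * myC F N := by simp only [mul_assoc]
    _ = myC F N * ((1 - myW F N) * myW F N) * myC F N := by rw [key]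
    _ = (myC F N * (1 - myW F N)) * (myW F N * myC F N) := by simp only [mul_assoc]
    _ = myW F N * myC F N := by rw [h2, one_mul]

/-- surjectivity of `z ↦ w z - z w` -/
lemma ad_myW_surj (r : Module.End F (ℕ →₀ N)) :
    ∃ z : Module.End F (ℕ →₀ N), myW F N * z - z * myW F N = r := by
  refine ⟨Finsupp.lsum F fun n => ∑ k ∈ Finset.range (n+1),
    ((myS F N) ^ (k+1) * r) ∘ₗ Finsupp.lsingle (n - k), ?_⟩
  apply Finsupp.lhom_ext
  intro n v
  rw [LinearMap.sub_apply, Module.End.mul_apply, Module.End.mul_apply]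
  simp only [Finsupp.lsum_single, LinearMap.sum_apply, LinearMap.comp_apply,
    Finsupp.lsingle_apply]
  cases n with
  | zero =>
    simp only [zero_add, Finset.range_one, Finset.sum_singleton, Nat.sub_zero, pow_one]
    rw [myW_single_zero, map_zero, sub_zero, Module.End.mul_apply,
      ← Module.End.mul_apply (myW F N) (myS F N), myW_mul_myS, Module.End.one_apply]
  | succ m =>
    rw [myW_single_succ, Finsupp.lsum_single]
    simp only [LinearMap.sum_apply, LinearMap.comp_apply, Finsupp.lsingle_apply]
    rw [map_sum]
    rw [Finset.sum_range_succ' (fun k => myW F N (((myS F N)^(k+1) * r) (Finsupp.single (m+1-k) v))) (m+1)]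
    have hW : ∀ k, myW F N (((myS F N)^(k+1) * r) (Finsupp.single (m+1-k) v))
        = ((myS F N)^k * r) (Finsupp.single (m+1-k) v) := by
      intro k
      rw [← Module.End.mul_apply, ← mul_assoc, myW_mul_myS_pow]
    simp only [hW]
    simp only [Nat.succ_sub_succ_eq_sub]
    rw [pow_zero, one_mul, Nat.sub_zero]
    abel
end Shift


section Block
variable {F : Type*} [Field F] {M : Type*} [AddCommGroup M] [Module F M]

/-- 2×2 block endomorphism of `M × M` -/
noncomputable def blk (a x y b : Module.End F M) : Module.End F (M × M) :=
  LinearMap.prod (a ∘ₗ LinearMap.fst F M M + x ∘ₗ LinearMap.snd F M M)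
    (y ∘ₗ LinearMap.fst F M M + b ∘ₗ LinearMap.snd F M M)

@[simp] lemma blk_apply (a x y b : Module.End F M) (p q : M) :
    blk a x y b (p, q) = (a p + x q, y p + b q) := rfl

lemma blk_mul (a x y b a' x' y' b' : Module.End F M) :
    blk a x y b * blk a' x' y' b'
      = blk (a*a' + x*y') (a*x' + x*b') (y*a' + b*y') (y*x' + b*b') := by
  apply LinearMap.ext
  rintro ⟨p, q⟩
  simp [Module.End.mul_apply, map_add]
  constructor <;> abel

lemma blk_add (a x y b a' x' y' b' : Module.End F M) :
    blk a x y b + blk a' x' y' b' = blk (a+a') (x+x') (y+y') (b+b') := by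
  apply LinearMap.ext
  rintro ⟨p, q⟩
  simp
  constructor <;> abel

lemma blk_smul (d : F) (a x y b : Module.End F M) :
    d • blk a x y b = blk (d•a) (d•x) (d•y) (d•b) := by
  apply LinearMap.ext
  rintro ⟨p, q⟩
  simp

lemma blk_one : (blk 1 0 0 1 : Module.End F (M × M)) = 1 := by
  apply LinearMap.ext
  rintro ⟨p, q⟩
  simp

lemma blk_decomp (t : Module.End F (M × M)) :
    t = blk (LinearMap.fst F M M ∘ₗ t ∘ₗ LinearMap.inl F M M)
          (LinearMap.fst F M M ∘ₗ t ∘ₗ LinearMap.inr F M M)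
          (LinearMap.snd F M M ∘ₗ t ∘ₗ LinearMap.inl F M M)
          (LinearMap.snd F M M ∘ₗ t ∘ₗ LinearMap.inr F M M) := by
  apply LinearMap.ext
  rintro ⟨p, q⟩
  have : (p, q) = (p, (0:M)) + ((0:M), q) := by simp
  rw [blk_apply]
  simp only [LinearMap.comp_apply, LinearMap.inl_apply, LinearMap.inr_apply]
  rw [this, map_add]
  simp [Prod.ext_iff]

end Block

section Core
variable {F : Type*} [Field F] {M : Type*} [AddCommGroup M] [Module F M]

theorem abstract_core (w c : Module.End F M)
    (h1 : (1 - w) * c = 1) (h2 : c * (1 - w) = 1) (hcw : c * w = w * c)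
    (hsurj : ∀ r : Module.End F M, ∃ z, w * z - z * w = r)
    (d₁ d₂ d₃ d₄ : F) (t : Module.End F (M × M)) :
    ∃ v₁ v₂ v₃ v₄ : Module.End F (M × M),
      t = v₁ + v₂ + v₃ + v₄ ∧ v₁ * v₁ = d₁ • v₁ ∧ v₂ * v₂ = d₂ • v₂ ∧
        v₃ * v₃ = d₃ • v₃ ∧ v₄ * v₄ = d₄ • v₄ := by
  obtain ⟨a, ha⟩ : ∃ a, a = LinearMap.fst F M M ∘ₗ t ∘ₗ LinearMap.inl F M M := ⟨_, rfl⟩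
  obtain ⟨x₀, hx₀⟩ : ∃ x₀, x₀ = LinearMap.fst F M M ∘ₗ t ∘ₗ LinearMap.inr F M M := ⟨_, rfl⟩
  obtain ⟨y₀, hy₀⟩ : ∃ y₀, y₀ = LinearMap.snd F M M ∘ₗ t ∘ₗ LinearMap.inl F M M := ⟨_, rfl⟩
  obtain ⟨b, hb⟩ : ∃ b, b = LinearMap.snd F M M ∘ₗ t ∘ₗ LinearMap.inr F M M := ⟨_, rfl⟩
  have ht : t = blk a x₀ y₀ b := by rw [ha, hx₀, hy₀, hb]; exact blk_decomp t
  obtain ⟨δ₁, hδ₁⟩ : ∃ δ, δ = d₁ • (1 : Module.End F M) := ⟨_, rfl⟩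
  obtain ⟨δ₂, hδ₂⟩ : ∃ δ, δ = d₂ • (1 : Module.End F M) := ⟨_, rfl⟩
  obtain ⟨δ₃, hδ₃⟩ : ∃ δ, δ = d₃ • (1 : Module.End F M) := ⟨_, rfl⟩
  obtain ⟨δ₄, hδ₄⟩ : ∃ δ, δ = d₄ • (1 : Module.End F M) := ⟨_, rfl⟩
  have hcd : ∀ d : F, c * (d • (1 : Module.End F M)) = (d • (1 : Module.End F M)) * c := by
    intro d; rw [mul_smul_comm, smul_mul_assoc, mul_one, one_mul]
  obtain ⟨A, hA⟩ : ∃ A, A = a - δ₁ := ⟨_, rfl⟩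
  obtain ⟨B, hB⟩ : ∃ B, B = b - δ₂ := ⟨_, rfl⟩
  obtain ⟨R, hR⟩ : ∃ R, R = (δ₃ + δ₄) * (1 - w) - A * (1 - w) - (1 - w) * B := ⟨_, rfl⟩
  obtain ⟨y, hy⟩ := hsurj (-R)
  have e1 : y * w = R + w * y := by
    have e0 : y * w - w * y = R := by rw [← neg_sub (w*y) (y*w), hy, neg_neg]
    exact sub_eq_iff_eq_add.mp e0
  obtain ⟨x, hx⟩ : ∃ x, x = δ₃ * (1 - w) - A + w * y + w * B := ⟨_, rfl⟩
  obtain ⟨n, hn⟩ : ∃ n, n = -c * (A + x) + c * (y + B) := ⟨_, rfl⟩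
  obtain ⟨m, hm⟩ : ∃ m, m = c * (A * w + x) + -(c * w) * (y * w + B) := ⟨_, rfl⟩
  obtain ⟨Φ, hΦ⟩ : ∃ Φ, Φ = blk (1 : Module.End F M) w 1 1 := ⟨_, rfl⟩
  obtain ⟨Ψ, hΨ⟩ : ∃ Ψ, Ψ = blk c (-(c*w)) (-c) c := ⟨_, rfl⟩
  have hΦΨ : Φ * Ψ = 1 := by
    rw [hΦ, hΨ, blk_mul, ← blk_one]
    congr 1
    · rw [show (1:Module.End F M)*c + w*(-c) = (1-w)*c by noncomm_ring, h1]
    · rw [one_mul, hcw]; exact neg_add_cancel _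
    · rw [one_mul, one_mul]; exact add_neg_cancel _
    · rw [show (1:Module.End F M)*(-(c*w)) + 1*c = c*(1-w) by noncomm_ring, h2]
  have hΨΦ : Ψ * Φ = 1 := by
    rw [hΦ, hΨ, blk_mul, ← blk_one]
    congr 1
    · rw [show c*1 + (-(c*w))*1 = c*(1-w) by noncomm_ring, h2]
    · rw [mul_one]; exact add_neg_cancel _
    · rw [mul_one, mul_one]; exact neg_add_cancel _
    · rw [show (-c)*w + c*1 = c*(1-w) by noncomm_ring, h2]
  have comp11 : c*(A+x) + -(c*w)*(y+B) = δ₃ := by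
    have k1 : (A+x) - w*(y+B) = δ₃*(1-w) := by rw [hx]; noncomm_ring
    calc c*(A+x) + -(c*w)*(y+B) = c*((A+x) - w*(y+B)) := by
          rw [mul_sub, ← mul_assoc, neg_mul]; abel
      _ = c*(δ₃*(1-w)) := by rw [k1]
      _ = (c*δ₃)*(1-w) := by rw [mul_assoc]
      _ = (δ₃*c)*(1-w) := by rw [hδ₃, hcd]
      _ = δ₃*(c*(1-w)) := by rw [mul_assoc]
      _ = δ₃ := by rw [h2, mul_one]
  have comp22 : (-c)*(A*w+x) + c*(y*w+B) = δ₄ := by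
    have k2 : (y*w+B) - (A*w+x) = δ₄*(1-w) := by rw [e1, hx, hR]; noncomm_ring
    calc (-c)*(A*w+x) + c*(y*w+B) = c*((y*w+B) - (A*w+x)) := by
          rw [mul_sub, neg_mul]; abel
      _ = c*(δ₄*(1-w)) := by rw [k2]
      _ = (c*δ₄)*(1-w) := by rw [mul_assoc]
      _ = (δ₄*c)*(1-w) := by rw [hδ₄, hcd]
      _ = δ₄*(c*(1-w)) := by rw [mul_assoc]
      _ = δ₄ := by rw [h2, mul_one]
  have hdiag : Ψ * (blk A x y B * Φ) = blk δ₃ m n δ₄ := by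
    rw [hΦ, hΨ, blk_mul]
    simp only [mul_one]
    rw [blk_mul, comp11, comp22, ← hn, ← hm]
  refine ⟨blk δ₁ 0 (y₀ - y) 0, blk 0 (x₀ - x) 0 δ₂,
    Φ * blk δ₃ 0 n 0 * Ψ, Φ * blk 0 m 0 δ₄ * Ψ, ?_, ?_, ?_, ?_, ?_⟩
  · have hs34 : Φ * blk δ₃ 0 n 0 * Ψ + Φ * blk 0 m 0 δ₄ * Ψ = blk A x y B := by
      have hdist : Φ * blk δ₃ 0 n 0 * Ψ + Φ * blk 0 m 0 δ₄ * Ψ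
          = Φ * (blk δ₃ 0 n 0 + blk 0 m 0 δ₄) * Ψ := by
        rw [mul_add, add_mul]
      rw [hdist, blk_add, add_zero, add_zero, zero_add, zero_add, ← hdiag]
      calc Φ * (Ψ * (blk A x y B * Φ)) * Ψ
          = (Φ * Ψ) * (blk A x y B) * (Φ * Ψ) := by
            simp only [mul_assoc]
        _ = blk A x y B := by rw [hΦΨ, one_mul, mul_one]
    rw [ht, add_assoc, hs34, blk_add, blk_add]
    congr 1
    · rw [hA]; abel
    · abel
    · abel
    · rw [hB]; abel
  · rw [blk_mul, blk_smul]
    congr 1 <;> simp [hδ₁, smul_mul_assoc, mul_smul_comm]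
  · rw [blk_mul, blk_smul]
    congr 1 <;> simp [hδ₂, smul_mul_assoc, mul_smul_comm]
  · have hq : blk δ₃ 0 n 0 * blk δ₃ 0 n 0 = d₃ • blk δ₃ 0 n 0 := by
      rw [blk_mul, blk_smul]
      congr 1 <;> simp [hδ₃, smul_mul_assoc, mul_smul_comm]
    calc (Φ * blk δ₃ 0 n 0 * Ψ) * (Φ * blk δ₃ 0 n 0 * Ψ)
        = Φ * blk δ₃ 0 n 0 * ((Ψ * Φ) * (blk δ₃ 0 n 0 * Ψ)) := by
          simp only [mul_assoc]
      _ = Φ * (blk δ₃ 0 n 0 * blk δ₃ 0 n 0) * Ψ := by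
          rw [hΨΦ, one_mul]; simp only [mul_assoc]
      _ = d₃ • (Φ * blk δ₃ 0 n 0 * Ψ) := by
          rw [hq]; simp only [smul_mul_assoc, mul_smul_comm]
  · have hq : blk 0 m 0 δ₄ * blk 0 m 0 δ₄ = d₄ • blk 0 m 0 δ₄ := by
      rw [blk_mul, blk_smul]
      congr 1 <;> simp [hδ₄, smul_mul_assoc, mul_smul_comm]
    calc (Φ * blk 0 m 0 δ₄ * Ψ) * (Φ * blk 0 m 0 δ₄ * Ψ)
        = Φ * blk 0 m 0 δ₄ * ((Ψ * Φ) * (blk 0 m 0 δ₄ * Ψ)) := by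
          simp only [mul_assoc]
      _ = Φ * (blk 0 m 0 δ₄ * blk 0 m 0 δ₄) * Ψ := by
          rw [hΨΦ, one_mul]; simp only [mul_assoc]
      _ = d₄ • (Φ * blk 0 m 0 δ₄ * Ψ) := by
          rw [hq]; simp only [smul_mul_assoc, mul_smul_comm]
end Core

section Concrete
variable {F : Type*} [Field F] {N : Type*} [AddCommGroup N] [Module F N]

theorem concrete_core (d₁ d₂ d₃ d₄ : F) (t : Module.End F ((ℕ →₀ N) × (ℕ →₀ N))) :
    ∃ v₁ v₂ v₃ v₄ : Module.End F ((ℕ →₀ N) × (ℕ →₀ N)),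
      t = v₁ + v₂ + v₃ + v₄ ∧ v₁ * v₁ = d₁ • v₁ ∧ v₂ * v₂ = d₂ • v₂ ∧
        v₃ * v₃ = d₃ • v₃ ∧ v₄ * v₄ = d₄ • v₄ :=
  abstract_core (myW F N) (myC F N) one_sub_myW_mul_myC myC_mul_one_sub_myW
    myC_comm_myW ad_myW_surj d₁ d₂ d₃ d₄ t
end Concrete

section Aux
variable {F : Type*} [Field F] {V : Type*} [AddCommGroup V] [Module F V]

lemma halg (z : F) : algebraMap F (Module.End F V) z = z • (1 : Module.End F V) := by
  ext w
  simp [Module.algebraMap_end_apply]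

lemma quad_aeval (c r s : F) (v : Module.End F V)
    (hv : v * v = (s - r) • v) :
    Polynomial.aeval (v + r • (1 : Module.End F V))
      (Polynomial.C c * ((Polynomial.X - Polynomial.C r) * (Polynomial.X - Polynomial.C s))) = 0 := by
  rw [map_mul, map_mul, map_sub, map_sub, Polynomial.aeval_X, Polynomial.aeval_C,
    Polynomial.aeval_C, Polynomial.aeval_C, halg, halg, halg]
  have e1 : v + r • (1 : Module.End F V) - r • 1 = v := add_sub_cancel_right v _
  have e2 : v + r • (1 : Module.End F V) - s • 1 = v - (s - r) • 1 := by
    rw [sub_smul]; abel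
  rw [e1, e2, mul_sub, mul_smul_comm, mul_one, hv, sub_self, mul_zero]

lemma quad_factor (p : Polynomial F) (hs : (p.map (RingHom.id F)).Splits) (hd : p.degree = 2) :
    ∃ c r s : F, p = Polynomial.C c *
      ((Polynomial.X - Polynomial.C r) * (Polynomial.X - Polynomial.C s)) := by
  rw [Polynomial.map_id] at hs
  have hroots := (Polynomial.splits_iff_card_roots.mp hs)
  have hnd : p.natDegree = 2 := Polynomial.natDegree_eq_of_degree_eq_some hd
  rw [hnd] at hroots
  obtain ⟨r, s, hrs⟩ := Multiset.card_eq_two.mp hroots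
  refine ⟨p.leadingCoeff, r, s, ?_⟩
  have := hs.eq_prod_roots
  rw [hrs] at this
  simpa using this
end Aux

/-- Every endomorphism of an infinite-dimensional vector space is a
`(p₁, p₂, p₃, p₄)`-sum, for any split polynomials `p₁, p₂, p₃, p₄` of degree 2. -/
theorem sum_four_quadratic (F : Type*) [Field F] (V : Type*) [AddCommGroup V]
    [Module F V] (hV : ¬ Module.Finite F V) (p₁ p₂ p₃ p₄ : Polynomial F)
    (h₁ : (p₁.map (RingHom.id F)).Splits) (h₁d : p₁.degree = 2)
    (h₂ : (p₂.map (RingHom.id F)).Splits) (h₂d : p₂.degree = 2)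
    (h₃ : (p₃.map (RingHom.id F)).Splits) (h₃d : p₃.degree = 2)
    (h₄ : (p₄.map (RingHom.id F)).Splits) (h₄d : p₄.degree = 2)
    (u : Module.End F V) :
    ∃ u₁ u₂ u₃ u₄ : Module.End F V,
      u = u₁ + u₂ + u₃ + u₄ ∧ Polynomial.aeval u₁ p₁ = 0 ∧
        Polynomial.aeval u₂ p₂ = 0 ∧ Polynomial.aeval u₃ p₃ = 0 ∧
        Polynomial.aeval u₄ p₄ = 0 := by
  classical
  obtain ⟨c₁, r₁, s₁, hp₁⟩ := quad_factor p₁ h₁ h₁d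
  obtain ⟨c₂, r₂, s₂, hp₂⟩ := quad_factor p₂ h₂ h₂d
  obtain ⟨c₃, r₃, s₃, hp₃⟩ := quad_factor p₃ h₃ h₃d
  obtain ⟨c₄, r₄, s₄, hp₄⟩ := quad_factor p₄ h₄ h₄d
  -- the model
  set ι := Module.Basis.ofVectorSpaceIndex F V with hι
  let bV : Module.Basis ι F V := Module.Basis.ofVectorSpace F V
  have hinf : Infinite ι := by
    rw [← not_finite_iff_infinite]
    intro h
    exact hV (Module.Finite.of_basis bV)
  have hcard : Cardinal.mk ((ℕ × ι) ⊕ (ℕ × ι)) = Cardinal.mk ι := by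
    simp only [Cardinal.mk_sum, Cardinal.mk_prod, Cardinal.mk_nat, Cardinal.lift_aleph0,
      Cardinal.lift_uzero, Cardinal.lift_id,
      Cardinal.aleph0_mul_eq (Cardinal.aleph0_le_mk (↑ι : Type _)),
      Cardinal.add_eq_self (Cardinal.aleph0_le_mk (↑ι : Type _))]
  obtain ⟨e⟩ : Nonempty (((ℕ × ι) ⊕ (ℕ × ι)) ≃ ι) := Cardinal.eq.mp hcard
  let E : V ≃ₗ[F] (ℕ →₀ (ι →₀ F)) × (ℕ →₀ (ι →₀ F)) :=
    bV.repr ≪≫ₗ Finsupp.domLCongr e.symm ≪≫ₗ Finsupp.sumFinsuppLEquivProdFinsupp F ≪≫ₗ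
      LinearEquiv.prodCongr (Finsupp.finsuppProdLEquiv F) (Finsupp.finsuppProdLEquiv F)
  set t : Module.End F V := u - (r₁ + r₂ + r₃ + r₄) • 1 with hts
  let t' : Module.End F ((ℕ →₀ (ι →₀ F)) × (ℕ →₀ (ι →₀ F))) :=
    E.toLinearMap ∘ₗ t ∘ₗ E.symm.toLinearMap
  obtain ⟨v₁', v₂', v₃', v₄', hsum', hq₁', hq₂', hq₃', hq₄'⟩ :=
    concrete_core (s₁ - r₁) (s₂ - r₂) (s₃ - r₃) (s₄ - r₄) t'
  -- pull back
  have pull_quad : ∀ (v' : Module.End F ((ℕ →₀ (ι →₀ F)) × (ℕ →₀ (ι →₀ F)))) (d : F),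
      v' * v' = d • v' →
      (E.symm.toLinearMap ∘ₗ v' ∘ₗ E.toLinearMap) * (E.symm.toLinearMap ∘ₗ v' ∘ₗ E.toLinearMap)
        = d • (E.symm.toLinearMap ∘ₗ v' ∘ₗ E.toLinearMap) := by
    intro v' d hv'
    apply LinearMap.ext
    intro z
    simp only [Module.End.mul_apply, LinearMap.comp_apply, LinearEquiv.coe_coe,
      LinearMap.smul_apply]
    rw [E.apply_symm_apply, ← Module.End.mul_apply v' v', hv', LinearMap.smul_apply, map_smul]
  have hsum : (E.symm.toLinearMap ∘ₗ v₁' ∘ₗ E.toLinearMap)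
      + (E.symm.toLinearMap ∘ₗ v₂' ∘ₗ E.toLinearMap)
      + (E.symm.toLinearMap ∘ₗ v₃' ∘ₗ E.toLinearMap)
      + (E.symm.toLinearMap ∘ₗ v₄' ∘ₗ E.toLinearMap) = t := by
    apply LinearMap.ext
    intro z
    simp only [LinearMap.add_apply, LinearMap.comp_apply, LinearEquiv.coe_coe]
    rw [← map_add, ← map_add, ← map_add, ← LinearMap.add_apply, ← LinearMap.add_apply,
      ← LinearMap.add_apply, ← hsum']
    show E.symm (t' (E z)) = t z
    simp only [t', LinearMap.comp_apply, LinearEquiv.coe_coe, E.symm_apply_apply]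
  refine ⟨(E.symm.toLinearMap ∘ₗ v₁' ∘ₗ E.toLinearMap) + r₁ • 1,
    (E.symm.toLinearMap ∘ₗ v₂' ∘ₗ E.toLinearMap) + r₂ • 1,
    (E.symm.toLinearMap ∘ₗ v₃' ∘ₗ E.toLinearMap) + r₃ • 1,
    (E.symm.toLinearMap ∘ₗ v₄' ∘ₗ E.toLinearMap) + r₄ • 1, ?_, ?_, ?_, ?_, ?_⟩
  · have hu : u = t + (r₁ + r₂ + r₃ + r₄) • (1 : Module.End F V) := by
      rw [hts]; abel
    rw [hu, ← hsum, add_smul, add_smul, add_smul]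
    abel
  · rw [hp₁]; exact quad_aeval c₁ r₁ s₁ _ (pull_quad v₁' _ hq₁')
  · rw [hp₂]; exact quad_aeval c₂ r₂ s₂ _ (pull_quad v₂' _ hq₂')
  · rw [hp₃]; exact quad_aeval c₃ r₃ s₃ _ (pull_quad v₃' _ hq₃')
  · rw [hp₄]; exact quad_aeval c₄ r₄ s₄ _ (pull_quad v₄' _ hq₄')
end

section
/- If a finite-rank endomorphism u of a vector space V over a field is the sum of three square-zero endomorphisms of V, then the trace of u is zero. -/
open LinearMap Submodule

/-- Trace of the restriction of an endomorphism to an invariant finite-dimensional submodule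
containing its range does not depend on the choice of such a submodule (monotone version). -/
lemma trace_restrict_eq_trace_restrict_of_le {F : Type*} [Field F] {V : Type*}
    [AddCommGroup V] [Module F V] (u : Module.End F V) {W T : Submodule F V}
    (hWT : W ≤ T) [FiniteDimensional F T]
    (hrange : ∀ x, u x ∈ W)
    (hW : ∀ x ∈ W, u x ∈ W) (hT : ∀ x ∈ T, u x ∈ T) :
    LinearMap.trace F W (u.restrict hW) = LinearMap.trace F T (u.restrict hT) := by
  set W' : Submodule F T := W.comap T.subtype with hW'
  have hf : ∀ x : T, (u.restrict hT) x ∈ W' := by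
    intro x
    simp only [hW', Submodule.mem_comap, Submodule.coe_subtype]
    exact hrange (x : V)
  have hf' : ∀ x ∈ W', (u.restrict hT) x ∈ W' := fun x _ => hf x
  rw [← LinearMap.trace_restrict_eq_of_forall_mem W' (u.restrict hT) hf hf']
  set e : W' ≃ₗ[F] W := Submodule.comapSubtypeEquivOfLe hWT with he
  have hconj : e.conj ((u.restrict hT).restrict hf') = u.restrict hW := by
    ext x
    simp only [LinearEquiv.conj_apply, LinearMap.coe_comp, Function.comp_apply,
      LinearEquiv.coe_coe, LinearMap.restrict_coe_apply]
    rfl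
  rw [← hconj, LinearMap.trace_conj']

/-- The trace of a square-zero endomorphism restricted to an invariant
finite-dimensional submodule vanishes. -/
lemma trace_restrict_eq_zero_of_sq_zero {F : Type*} [Field F] {V : Type*}
    [AddCommGroup V] [Module F V] {x : Module.End F V} (hx : x * x = 0)
    {S : Submodule F V} [FiniteDimensional F S] (hS : ∀ v ∈ S, x v ∈ S) :
    LinearMap.trace F S (x.restrict hS) = 0 := by
  have hnil : IsNilpotent (x.restrict hS) := by
    refine ⟨2, ?_⟩
    ext v
    have : x (x (v : V)) = 0 := by
      have := congrArg (fun f : Module.End F V => f (v : V)) hx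
      simpa [Module.End.mul_apply] using this
    simp [pow_two, Module.End.mul_apply, LinearMap.restrict_coe_apply, this]
  have := LinearMap.isNilpotent_trace_of_isNilpotent hnil
  exact this.eq_zero

/-- If a finite-rank endomorphism `u` of a vector space `V` is the sum of three
square-zero endomorphisms, then the trace of `u` is zero.  The trace of `u` is
computed as the trace of the endomorphism induced by `u` on any
finite-dimensional subspace `W` containing the image of `u`. -/
theorem trace_eq_zero_of_sum_three_square_zero (F : Type*) [Field F] (V : Type*)
    [AddCommGroup V] [Module F V] (u : Module.End F V)
    (W : Submodule F V) (hW : FiniteDimensional F W) (hle : LinearMap.range u ≤ W)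
    (hstab : ∀ x ∈ W, u x ∈ W)
    (a b c : Module.End F V) (ha : a * a = 0) (hb : b * b = 0) (hc : c * c = 0)
    (hu : u = a + b + c) :
    LinearMap.trace F W (u.restrict hstab) = 0 := by
  classical
  -- the "Laplacian" z = bc + cb = (u-a)² is a finite-rank operator with range inside X below
  set z : Module.End F V := u * u - u * a - a * u with hzdef
  have key : b * c + c * b = z := by
    have h1 : b + c = u - a := by rw [hu]; abel
    have h2 : (b + c) * (b + c) = b * c + c * b := by
      rw [add_mul, mul_add, mul_add, hb, hc]; abel
    have h3 : (u - a) * (u - a) = z := by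
      rw [sub_mul, mul_sub, mul_sub, ha, hzdef]; abel
    rw [← h2, h1, h3]
  -- key collapsing identities
  have hbcb : b * c * b = z * b := by
    rw [← key, add_mul, mul_assoc c b b, hb, mul_zero, add_zero]
  have hcbc : c * (b * c) = z * c := by
    rw [← key, add_mul, mul_assoc b c c, hc, mul_zero, zero_add, mul_assoc]
  -- the finite-dimensional core
  set r : Submodule F V := LinearMap.range u with hrdef
  haveI : FiniteDimensional F r := Submodule.finiteDimensional_of_le hle
  set X : Submodule F V := r ⊔ r.map a with hXdef
  haveI : FiniteDimensional F X := by
    apply Submodule.finiteDimensional_sup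
  have hrX : r ≤ X := le_sup_left
  have hzX : LinearMap.range z ≤ X := by
    rintro - ⟨x, rfl⟩
    have h1 : u (u x) ∈ r := ⟨u x, rfl⟩
    have h2 : u (a x) ∈ r := ⟨a x, rfl⟩
    have h3 : a (u x) ∈ r.map a := ⟨u x, ⟨x, rfl⟩, rfl⟩
    have : z x = u (u x) - u (a x) - a (u x) := by
      simp [hzdef, LinearMap.sub_apply, Module.End.mul_apply]
    rw [this]
    exact sub_mem (sub_mem (hrX h1) (hrX h2)) (le_sup_right (α := Submodule F V) h3)
  -- S = X + bX + cX + bcX + cbX is finite-dimensional and invariant under a, b, c, u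
  set S : Submodule F V :=
    X ⊔ X.map b ⊔ X.map c ⊔ (X.map c).map b ⊔ (X.map b).map c with hSdef
  haveI : FiniteDimensional F S := by
    apply Submodule.finiteDimensional_sup
  have hXS : X ≤ S :=
    le_sup_of_le_left (le_sup_of_le_left (le_sup_of_le_left le_sup_left))
  have hXbS : X.map b ≤ S :=
    le_sup_of_le_left (le_sup_of_le_left (le_sup_of_le_left le_sup_right))
  have hXcS : X.map c ≤ S := le_sup_of_le_left (le_sup_of_le_left le_sup_right)
  have hXcbS : (X.map c).map b ≤ S := le_sup_of_le_left le_sup_right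
  have hXbcS : (X.map b).map c ≤ S := le_sup_right
  -- helper: map by a composite
  have map_map : ∀ (p : Submodule F V) (f g : Module.End F V),
      (p.map f).map g = p.map (g * f) := by
    intro p f g
    rw [Module.End.mul_eq_comp, Submodule.map_comp]
  have hmul_zero_bot : ∀ (p : Submodule F V), p.map (0 : Module.End F V) ≤ S := by
    intro p
    rw [Submodule.map_zero]
    exact bot_le
  -- b-invariance of S
  have hbS : S.map b ≤ S := by
    rw [hSdef]
    simp only [Submodule.map_sup]
    refine sup_le (sup_le (sup_le (sup_le ?_ ?_) ?_) ?_) ?_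
    · exact hXbS
    · rw [map_map, hb]; exact hmul_zero_bot X
    · exact hXcbS
    · -- b (b (c X)) = ⊥
      rw [map_map, map_map, hb, zero_mul]
      exact hmul_zero_bot X
    · -- b (c (b X)) = (bcb) X = (z*b) X ≤ range z ≤ X
      rw [map_map, map_map, hbcb]
      refine le_trans (LinearMap.map_le_range) (le_trans ?_ (hzX.trans hXS))
      rw [Module.End.mul_eq_comp]
      exact LinearMap.range_comp_le_range _ _
  -- c-invariance of S
  have hcS : S.map c ≤ S := by
    rw [hSdef]
    simp only [Submodule.map_sup]
    refine sup_le (sup_le (sup_le (sup_le ?_ ?_) ?_) ?_) ?_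
    · exact hXcS
    · exact hXbcS
    · rw [map_map, hc]; exact hmul_zero_bot X
    · -- c (b (c X)) = (cbc) X = (z*c) X ≤ X
      rw [map_map, map_map, mul_assoc, hcbc]
      refine le_trans (LinearMap.map_le_range) (le_trans ?_ (hzX.trans hXS))
      rw [Module.End.mul_eq_comp]
      exact LinearMap.range_comp_le_range _ _
    · -- c (c (b X)) = ⊥
      rw [map_map, map_map, hc, zero_mul]
      exact hmul_zero_bot X
  -- membership versions
  have hbS' : ∀ x ∈ S, b x ∈ S := fun x hx => hbS ⟨x, hx, rfl⟩
  have hcS' : ∀ x ∈ S, c x ∈ S := fun x hx => hcS ⟨x, hx, rfl⟩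
  have hrS : r ≤ S := hrX.trans hXS
  have huS' : ∀ x ∈ S, u x ∈ S := fun x _ => hrS ⟨x, rfl⟩
  have haS' : ∀ x ∈ S, a x ∈ S := by
    intro x hx
    have : a x = u x - b x - c x := by
      have := congrArg (fun f : Module.End F V => f x) hu
      simp only [LinearMap.add_apply] at this
      rw [this]; abel
    rw [this]
    exact sub_mem (sub_mem (huS' x hx) (hbS' x hx)) (hcS' x hx)
  -- trace of u on S is the sum of traces of three nilpotents
  have hdecomp : u.restrict huS' = a.restrict haS' + b.restrict hbS' + c.restrict hcS' := by
    ext v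
    simp only [LinearMap.restrict_coe_apply, LinearMap.add_apply, Submodule.coe_add, hu]
  have htrS : LinearMap.trace F S (u.restrict huS') = 0 := by
    rw [hdecomp, map_add, map_add,
      trace_restrict_eq_zero_of_sq_zero ha haS',
      trace_restrict_eq_zero_of_sq_zero hb hbS',
      trace_restrict_eq_zero_of_sq_zero hc hcS']
    simp
  -- compare the two traces through W ⊔ S
  haveI : FiniteDimensional F (W ⊔ S : Submodule F V) := Submodule.finiteDimensional_sup W S
  have hrangeW : ∀ x, u x ∈ W := fun x => hle ⟨x, rfl⟩
  have hrangeS : ∀ x, u x ∈ S := fun x => hrS ⟨x, rfl⟩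
  have hWT : W ≤ W ⊔ S := le_sup_left
  have hST : S ≤ W ⊔ S := le_sup_right
  have hT' : ∀ x ∈ (W ⊔ S : Submodule F V), u x ∈ (W ⊔ S : Submodule F V) :=
    fun x _ => hWT (hrangeW x)
  rw [trace_restrict_eq_trace_restrict_of_le u hWT hrangeW hstab hT',
    ← trace_restrict_eq_trace_restrict_of_le u hST hrangeS huS' hT', htrS]
end

section
/- Let F be a field and α ∈ F with α ∉ {0, 1, 2, 3} and 2α ≠ 3, and let V be a nonzero F-vector space. Then α·id_V is not the sum of three idempotent endomorphisms of V. -/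
/-- If `α ∉ {0, 1, 2, 3}` and `2α ≠ 3`, then `α • id` is not the sum of three
idempotent endomorphisms of a nonzero vector space. -/
theorem smul_id_not_sum_three_idempotents (F : Type*) [Field F] (V : Type*)
    [AddCommGroup V] [Module F V] [Nontrivial V] (α : F)
    (h0 : α ≠ 0) (h1 : α ≠ 1) (h2 : α ≠ 2) (h3 : α ≠ 3) (h23 : 2 * α ≠ 3) :
    ¬ ∃ p q r : Module.End F V,
        p * p = p ∧ q * q = q ∧ r * r = r ∧ α • (1 : Module.End F V) = p + q + r := by
  rintro ⟨p, q, r, hp, hq, hr, heq⟩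
  have hone : (1 : Module.End F V) ≠ 0 := by
    obtain ⟨v, hv⟩ := exists_ne (0 : V)
    intro h
    exact hv (by simpa using LinearMap.ext_iff.mp h v)
  have hsmul1 : ∀ c : F, c • (1 : Module.End F V) = 0 → c = 0 := by
    intro c h
    by_contra hc
    exact hone (by rw [← inv_smul_smul₀ hc (1 : Module.End F V), h, smul_zero])
  have hcancel : ∀ (c : F) (x y : Module.End F V), c ≠ 0 → c • x = c • y → x = y := by
    intro c x y hc h
    have := congrArg (fun z => c⁻¹ • z) h
    simpa [inv_smul_smul₀ hc] using this
  have hp' : ∀ x : Module.End F V, p * (p * x) = p * x := fun x => by rw [← mul_assoc, hp]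
  have hq' : ∀ x : Module.End F V, q * (q * x) = q * x := fun x => by rw [← mul_assoc, hq]
  have hrdef : r = α • (1 : Module.End F V) - p - q := by rw [heq]; abel
  subst hrdef
  have hE := hr
  simp only [sub_mul, mul_sub, smul_mul_assoc, mul_smul_comm, one_mul, mul_one, hp, hq,
    smul_smul] at hE
  have E1 : p * q + q * p = (α - α^2) • (1 : Module.End F V) + (2*α - 2) • p + (2*α - 2) • q := by
    linear_combination (norm := module) hE
  have hL : p * q + p * (q * p)
      = (α - α^2) • p + (2*α - 2) • p + (2*α - 2) • (p * q) := by
    have h := congrArg (fun x => p * x) E1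
    simp only [mul_add, mul_smul_comm, mul_one, mul_assoc, hp, hp'] at h
    linear_combination (norm := module) h
  have hRr : p * (q * p) + q * p
      = (α - α^2) • p + (2*α - 2) • p + (2*α - 2) • (q * p) := by
    have h := congrArg (fun x => x * p) E1
    simp only [add_mul, smul_mul_assoc, one_mul, mul_assoc, hp, hq] at h
    linear_combination (norm := module) h
  have hcm : p * q = q * p := by
    refine hcancel (2*α - 3) _ _ (sub_ne_zero.mpr h23) ?_
    linear_combination (norm := module) hRr - hL
  have hpqp : p * (q * p) = p * q := by rw [← hcm, hp']
  have E2 : (4 - 2*α) • (p * q) = (3*α - α^2 - 2) • p := by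
    linear_combination (norm := module) hL - hpqp
  have hQr : p * q + q * (p * q)
      = (α - α^2) • q + (2*α - 2) • (p * q) + (2*α - 2) • q := by
    have h := congrArg (fun x => x * q) E1
    simp only [add_mul, smul_mul_assoc, one_mul, mul_assoc, hq, hq'] at h
    linear_combination (norm := module) h
  have hqpq : q * (p * q) = p * q := by rw [hcm, hq']
  have E2' : (4 - 2*α) • (p * q) = (3*α - α^2 - 2) • q := by
    linear_combination (norm := module) hQr - hqpq
  have hc2 : (3*α - α^2 - 2 : F) ≠ 0 := by
    have hne := mul_ne_zero (sub_ne_zero.mpr h1) (sub_ne_zero.mpr h2)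
    intro h
    exact hne (by linear_combination -h)
  by_cases h4 : (4 - 2*α : F) = 0
  · -- characteristic 2 case: p = q = 0
    have hp0 : p = 0 := by
      refine hcancel _ _ _ hc2 ?_
      rw [smul_zero, ← E2, h4, zero_smul]
    have hq0 : q = 0 := by
      refine hcancel _ _ _ hc2 ?_
      rw [smul_zero, ← E2', h4, zero_smul]
    rw [hp0, hq0] at hr
    simp only [sub_zero, smul_mul_assoc, one_mul, mul_smul_comm, smul_smul] at hr
    have : (α * α - α) • (1 : Module.End F V) = 0 := by
      rw [sub_smul, hr, sub_self]
    have := hsmul1 _ this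
    exact mul_ne_zero h0 (sub_ne_zero.mpr h1) (by linear_combination this)
  · have h2ne : (2 : F) ≠ 0 := fun h => h4 (by linear_combination (2 - α) * h)
    have hqp : q = p := by
      refine (hcancel _ _ _ hc2 (E2.symm.trans E2')).symm
    subst hqp
    rw [hp] at E1
    have h6 : (6 - 4*α : F) ≠ 0 := by
      intro h
      exact h23 (mul_left_cancel₀ h2ne (by linear_combination -h))
    have hP : (6 - 4*α) • q = (α - α^2) • (1 : Module.End F V) := by
      linear_combination (norm := module) E1
    set μ : F := (α - α^2) / (6 - 4*α) with hμdef
    have hμs : (6 - 4*α) • (μ • (1 : Module.End F V)) = (α - α^2) • (1 : Module.End F V) := by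
      rw [smul_smul, mul_div_cancel₀ _ h6]
    have hpμ : q = μ • (1 : Module.End F V) := hcancel _ _ _ h6 (hP.trans hμs.symm)
    have hμμ : μ * μ = μ := by
      have := hp
      rw [hpμ, smul_mul_assoc, mul_smul_comm, one_mul, smul_smul] at this
      have h0' : (μ * μ - μ) • (1 : Module.End F V) = 0 := by rw [sub_smul, this, sub_self]
      have := hsmul1 _ h0'
      linear_combination this
    have hrs : ((α - 2*μ) * (α - 2*μ) - (α - 2*μ)) • (1 : Module.End F V) = 0 := by
      have hh := hr
      rw [hpμ] at hh
      have hx : α • (1 : Module.End F V) - μ • (1 : Module.End F V) - μ • (1 : Module.End F V) = (α - 2*μ) • (1 : Module.End F V) := by module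
      rw [hx, smul_mul_assoc, mul_smul_comm, one_mul, smul_smul] at hh
      rw [sub_smul, hh, sub_self]
    have hsc := hsmul1 _ hrs
    -- μ = 0 or 1; α - 2μ = 0 or 1
    have hμ01 : μ = 0 ∨ μ = 1 := by
      rcases mul_eq_zero.mp (show μ * (μ - 1) = 0 by linear_combination hμμ) with h | h
      · exact Or.inl h
      · exact Or.inr (by linear_combination h)
    have hα01 : α - 2*μ = 0 ∨ α - 2*μ = 1 := by
      rcases mul_eq_zero.mp (show (α - 2*μ) * (α - 2*μ - 1) = 0 by linear_combination hsc)
        with h | h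
      · exact Or.inl h
      · exact Or.inr (by linear_combination h)
    rcases hμ01 with h | h <;> rcases hα01 with h' | h'
    · exact h0 (by linear_combination h' + 2*h)
    · exact h1 (by linear_combination h' + 2*h)
    · exact h2 (by linear_combination h' + 2*h)
    · exact h3 (by linear_combination h' + 2*h)
end

section
/- If p, q, r are idempotent endomorphisms of a vector space V with p + q + r = α·id_V, where α ∈ F satisfies 2α ≠ 3, then p, q, and r pairwise commute. -/
private lemma aux_comm {F : Type*} [Field F] {V : Type*} [AddCommGroup V] [Module F V]
    {α : F} (h23 : 2 * α ≠ 3) {a b : Module.End F V} (ha : a * a = a) (hb : b * b = b)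
    (hc : (α • (1 : Module.End F V) - a - b) * (α • (1 : Module.End F V) - a - b)
        = α • (1 : Module.End F V) - a - b) : Commute a b := by
  set c : Module.End F V := α • (1 : Module.End F V) - a - b with hcdef
  have h1 : a * (a * b) = a * b := by rw [← mul_assoc, ha]
  have h2 : b * (b * a) = b * a := by rw [← mul_assoc, hb]
  have h4 : a * b * b = a * b := by rw [mul_assoc, hb]
  have h5 : b * a * a = b * a := by rw [mul_assoc, ha]
  have key : (3 - 2 * α) • (a * b - b * a)
      = a * (c * c - c) - (c * c - c) * a := by
    simp only [hcdef, mul_sub, sub_mul, mul_add, add_mul, smul_mul_assoc,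
      mul_smul_comm, mul_one, one_mul, mul_assoc, ha, hb, h1, h2, h4, h5, smul_smul]
    module
  rw [hc, sub_self, mul_zero, zero_mul, sub_zero] at key
  have hne : (3 : F) - 2 * α ≠ 0 := by
    intro h
    exact h23 (by linear_combination -h)
  have := (smul_eq_zero.mp key).resolve_left hne
  exact (sub_eq_zero.mp this)

/-- If idempotent endomorphisms `p, q, r` of a vector space satisfy
`p + q + r = α • id` with `2α ≠ 3`, then `p, q, r` pairwise commute. -/
theorem commute_of_sum_three_idempotents_eq_smul_id (F : Type*) [Field F] (V : Type*)
    [AddCommGroup V] [Module F V] (α : F) (h23 : 2 * α ≠ 3)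
    (p q r : Module.End F V) (hp : p * p = p) (hq : q * q = q) (hr : r * r = r)
    (hsum : p + q + r = α • (1 : Module.End F V)) :
    Commute p q ∧ Commute p r ∧ Commute q r := by
  have hr' : r = α • (1 : Module.End F V) - p - q := by rw [← hsum]; abel
  have hq' : q = α • (1 : Module.End F V) - p - r := by rw [← hsum]; abel
  have hp' : p = α • (1 : Module.End F V) - q - r := by rw [← hsum]; abel
  refine ⟨aux_comm h23 hp hq ?_, aux_comm h23 hp hr ?_, aux_comm h23 hq hr ?_⟩
  · rw [← hr']; exact hr
  · rw [← hq']; exact hq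
  · rw [← hp']; exact hp
end

section
/- Let V be a vector space over a field with countable basis (e_n)_{n∈ℕ}, and let u be an endomorphism of V such that for every n, u(e_n) ≡ e_{n+1} modulo the span of e_0, …, e_n. Then (u^n(e_0))_{n∈ℕ} is a basis of V. -/
/-- If `(eₙ)` is a basis of `V` and `u (eₙ) ≡ e_{n+1}` modulo the span of
`e₀, …, eₙ` for every `n`, then `(uⁿ (e₀))ₙ` is a basis of `V`. -/
theorem basis_of_iterates (F : Type*) [Field F] (V : Type*) [AddCommGroup V]
    [Module F V] (e : Module.Basis ℕ F V) (u : Module.End F V)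
    (hu : ∀ n : ℕ, u (e n) - e (n + 1) ∈
      Submodule.span F (Set.range fun i : Fin (n + 1) => e i)) :
    ∃ b : Module.Basis ℕ F V, ∀ n : ℕ, b n = (u ^ n) (e 0) := by
  set v : ℕ → V := fun n => (u ^ n) (e 0) with hv
  have hrange : ∀ n : ℕ, (Set.range fun i : Fin (n + 1) => e (i : ℕ)) = e '' Set.Iio (n + 1) := by
    intro n; ext x; constructor
    · rintro ⟨i, rfl⟩; exact ⟨i, i.isLt, rfl⟩
    · rintro ⟨k, hk, rfl⟩; exact ⟨⟨k, hk⟩, rfl⟩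
  have hu' : ∀ n : ℕ, u (e n) - e (n + 1) ∈ Submodule.span F (e '' Set.Iio (n + 1)) := by
    intro n; rw [← hrange n]; exact hu n
  -- key triangularity
  have hB : ∀ n : ℕ, v n - e n ∈ Submodule.span F (e '' Set.Iio n) := by
    intro n
    induction n with
    | zero => simp [hv]
    | succ n ih =>
      have h1 : v (n + 1) - e (n + 1) = u (v n - e n) + (u (e n) - e (n + 1)) := by
        simp only [hv, pow_succ', Module.End.mul_apply, map_sub]
        abel
      rw [h1]
      refine Submodule.add_mem _ ?_ (hu' n)
      have : u (v n - e n) ∈ Submodule.map u (Submodule.span F (e '' Set.Iio n)) :=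
        Submodule.mem_map_of_mem ih
      rw [Submodule.map_span] at this
      refine Submodule.span_le.2 ?_ this
      rintro x ⟨y, ⟨k, hk, rfl⟩, rfl⟩
      have h2 : u (e k) = (u (e k) - e (k + 1)) + e (k + 1) := by abel
      rw [h2]
      refine Submodule.add_mem _ ?_ (Submodule.subset_span ⟨k + 1, Set.mem_Iio.2 (by have := Set.mem_Iio.1 hk; omega), rfl⟩)
      exact Submodule.span_mono (Set.image_mono fun i hi =>
        Set.mem_Iio.2 (by have h1 := Set.mem_Iio.1 hi; have h2 := Set.mem_Iio.1 hk; omega)) (hu' k)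
  have hmem : ∀ n : ℕ, v n ∈ Submodule.span F (e '' Set.Iio (n + 1)) := by
    intro n
    have : v n = (v n - e n) + e n := by abel
    rw [this]
    refine Submodule.add_mem _ ?_ (Submodule.subset_span ⟨n, Set.mem_Iio.2 (Nat.lt_succ_self n), rfl⟩)
    exact Submodule.span_mono (Set.image_mono fun i hi =>
      Set.mem_Iio.2 (by have := Set.mem_Iio.1 hi; omega)) (hB n)
  -- repr facts
  have hrepr0 : ∀ {i m : ℕ}, i < m → e.repr (v i) m = 0 := by
    intro i m him
    have hs := Module.Basis.repr_support_subset_of_mem_span e _ (hmem i)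
    by_contra h
    have : m ∈ (e.repr (v i)).support := Finsupp.mem_support_iff.2 h
    have := hs this
    simp only [Set.mem_Iio] at this; omega
  have hrepr1 : ∀ n : ℕ, e.repr (v n) n = 1 := by
    intro n
    have hs := Module.Basis.repr_support_subset_of_mem_span e _ (hB n)
    have h0 : e.repr (v n - e n) n = 0 := by
      by_contra h
      have := hs (Finsupp.mem_support_iff.2 h)
      simp only [Set.mem_Iio] at this; omega
    have h1 : e.repr (v n) n - 1 = 0 := by
      rw [map_sub, Finsupp.sub_apply, Module.Basis.repr_self, Finsupp.single_eq_same] at h0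
      exact h0
    exact sub_eq_zero.mp h1
  -- linear independence
  have hli : LinearIndependent F v := by
    rw [linearIndependent_iff']
    intro s g hsum i hi
    classical
    by_contra hgi
    have hne : (s.filter fun j => g j ≠ 0).Nonempty := ⟨i, Finset.mem_filter.2 ⟨hi, hgi⟩⟩
    set m := (s.filter fun j => g j ≠ 0).max' hne with hm
    have hms : m ∈ s ∧ g m ≠ 0 := by
      have := (s.filter fun j => g j ≠ 0).max'_mem hne
      exact Finset.mem_filter.1 this
    have : e.repr (∑ j ∈ s, g j • v j) m = 0 := by rw [hsum]; simp
    rw [map_sum] at this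
    simp only [map_smul] at this
    rw [Finsupp.finset_sum_apply] at this
    have hterm : ∀ j ∈ s, (g j • e.repr (v j)) m = if j = m then g m else 0 := by
      intro j hj
      rcases lt_trichotomy j m with h | h | h
      · have hjm : j ≠ m := Nat.ne_of_lt h
        simp [Finsupp.smul_apply, hrepr0 h, hjm]
      · subst h; simp [Finsupp.smul_apply, hrepr1, smul_eq_mul]
      · have : g j = 0 := by
          by_contra hg
          have : j ≤ m := Finset.le_max' _ j (Finset.mem_filter.2 ⟨hj, hg⟩)
          omega
        have hjm : j ≠ m := Nat.ne_of_gt h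
        simp [Finsupp.smul_apply, this, hjm]
    rw [Finset.sum_congr rfl hterm, Finset.sum_ite_eq' s m (fun _ => g m)] at this
    simp [hms.1] at this
    exact hms.2 this
  -- spanning
  have hsp : ⊤ ≤ Submodule.span F (Set.range v) := by
    have hEn : ∀ n : ℕ, e n ∈ Submodule.span F (Set.range v) := by
      intro n
      induction n using Nat.strong_induction_on with
      | _ n ih =>
        have : e n = v n - (v n - e n) := by abel
        rw [this]
        refine Submodule.sub_mem _ (Submodule.subset_span ⟨n, rfl⟩) ?_
        refine Submodule.span_le.2 ?_ (hB n)
        rintro x ⟨k, hk, rfl⟩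
        exact ih k hk
    rw [← e.span_eq]
    exact Submodule.span_le.2 (by rintro x ⟨n, rfl⟩; exact hEn n)
  exact ⟨Module.Basis.mk hli hsp, fun n => Module.Basis.mk_apply hli hsp n⟩
end

section
/- Let F be a field, a, b ∈ F, and let u be an elementary endomorphism of an F-vector space V. Then there exist endomorphisms v, w of V with u = v + w, v² = a·v, and w² = b·w. -/
open Polynomial

noncomputable section EAQ
namespace EAQ

variable {F : Type*} [Field F]

/-- the alternating diagonal coefficients -/
def cc (a b : F) (n : ℕ) : F := if n = 0 then 0 else if Even n then a else b

/-- monomial basis of `F[X]` -/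
noncomputable def mb (F : Type*) [Field F] : Module.Basis ℕ F (Polynomial F) :=
  Polynomial.basisMonomials F

lemma mb_apply (n : ℕ) : mb F n = monomial n 1 := by
  simp [mb]

variable (a b : F)

/-- the `x`-operator: `m₀ ↦ 0`, `m₂ₖ ↦ a m₂ₖ (k>0)`, `m₂ₖ₊₁ ↦ m₂ₖ₊₂` -/
noncomputable def xop : Polynomial F →ₗ[F] Polynomial F :=
  (mb F).constr F fun n =>
    if n = 0 then 0 else if Even n then a • mb F n else mb F (n + 1)

/-- the `y`-operator: `m₂ₖ ↦ m₂ₖ₊₁`, `m₂ₖ₊₁ ↦ b m₂ₖ₊₁` -/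
noncomputable def yop : Polynomial F →ₗ[F] Polynomial F :=
  (mb F).constr F fun n => if Even n then mb F (n + 1) else b • mb F n

lemma xop_mb (n : ℕ) : xop a (mb F n)
    = if n = 0 then 0 else if Even n then a • mb F n else mb F (n + 1) := by
  simp [xop]

lemma yop_mb (n : ℕ) : yop b (mb F n)
    = if Even n then mb F (n + 1) else b • mb F n := by
  simp [yop]

lemma xop_sq : xop (F := F) a ∘ₗ xop a = a • xop a := by
  refine (mb F).ext fun n => ?_
  simp only [LinearMap.comp_apply, LinearMap.smul_apply, xop_mb]
  rcases eq_or_ne n 0 with rfl | h0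
  · simp
  · by_cases he : Even n
    · simp [he, h0, xop_mb, map_smul, smul_smul]
    · have h1 : Even (n + 1) := Nat.even_add_one.mpr he
      have h1' : n + 1 ≠ 0 := Nat.succ_ne_zero n
      simp [he, h0, xop_mb, h1, h1']

lemma yop_sq : yop (F := F) b ∘ₗ yop b = b • yop b := by
  refine (mb F).ext fun n => ?_
  simp only [LinearMap.comp_apply, LinearMap.smul_apply, yop_mb]
  by_cases he : Even n
  · have h1 : ¬ Even (n + 1) := by simp [Nat.even_add_one, he]
    simp [he, yop_mb, h1]
  · simp [he, yop_mb, map_smul, smul_smul]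

lemma sop_mb (n : ℕ) :
    (xop a + yop b) (mb F n) = mb F (n + 1) + cc a b n • mb F n := by
  simp only [LinearMap.add_apply, xop_mb, yop_mb, cc]
  rcases eq_or_ne n 0 with rfl | h0
  · simp
  · by_cases he : Even n
    · simp [he, h0, add_comm]
    · simp [he, h0, add_comm]

/-- `X •`-multiplication as an `F`-linear map -/
noncomputable def mulX : Polynomial F →ₗ[F] Polynomial F :=
  LinearMap.mulLeft F (X : Polynomial F)

lemma mulX_mb (n : ℕ) : mulX (mb F n) = mb F (n + 1) := by
  simp [mulX, mb_apply, X_mul_monomial]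

/-- vectors of the intertwiner `k` -/
noncomputable def kv : ℕ → Polynomial F
  | 0 => mb F 0
  | n + 1 => (xop a + yop b) (kv n)

/-- vectors of the inverse intertwiner `h` -/
noncomputable def hv : ℕ → Polynomial F
  | 0 => mb F 0
  | n + 1 => mulX (hv n) - cc a b n • hv n

noncomputable def kop : Polynomial F →ₗ[F] Polynomial F := (mb F).constr F (kv a b)

noncomputable def hop : Polynomial F →ₗ[F] Polynomial F := (mb F).constr F (hv a b)

lemma kop_mb (n : ℕ) : kop a b (mb F n) = kv a b n := by simp [kop]
lemma hop_mb (n : ℕ) : hop a b (mb F n) = hv a b n := by simp [hop]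

lemma kop_mulX : kop a b ∘ₗ mulX = (xop a + yop b) ∘ₗ kop a b := by
  refine (mb F).ext fun n => ?_
  simp only [LinearMap.comp_apply, mulX_mb, kop_mb]
  rfl

lemma hop_sop : hop a b ∘ₗ (xop a + yop b) = mulX ∘ₗ hop a b := by
  refine (mb F).ext fun n => ?_
  simp only [LinearMap.comp_apply, sop_mb, map_add, map_smul, hop_mb]
  have : hv a b (n + 1) = mulX (hv a b n) - cc a b n • hv a b n := rfl
  rw [this]
  ring_nf

lemma hop_kop : hop a b ∘ₗ kop a b = LinearMap.id := by
  have key : ∀ n, hop a b (kv a b n) = mb F n := by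
    intro n
    induction n with
    | zero => exact hop_mb a b 0
    | succ n ih =>
      have : kv a b (n + 1) = (xop a + yop b) (kv a b n) := rfl
      rw [this, ← LinearMap.comp_apply, hop_sop, LinearMap.comp_apply, ih, mulX_mb]
  refine (mb F).ext fun n => ?_
  simp [kop_mb, key]

lemma kop_hop : kop a b ∘ₗ hop a b = LinearMap.id := by
  have key : ∀ n, kop a b (hv a b n) = mb F n := by
    intro n
    induction n with
    | zero => exact kop_mb a b 0
    | succ n ih =>
      have : hv a b (n + 1) = mulX (hv a b n) - cc a b n • hv a b n := rfl
      rw [this, map_sub, map_smul, ← LinearMap.comp_apply, kop_mulX,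
        LinearMap.comp_apply, ih, sop_mb]
      abel
  refine (mb F).ext fun n => ?_
  simp [hop_mb, key]

/-- the intertwining equivalence -/
noncomputable def kE : Polynomial F ≃ₗ[F] Polynomial F :=
  LinearEquiv.ofLinear (kop a b) (hop a b) (kop_hop a b) (hop_kop a b)

lemma kE_mulX (p : Polynomial F) : kE a b (X * p) = (xop a + yop b) (kE a b p) := by
  have := LinearMap.congr_fun (kop_mulX a b) p
  simpa [kE, mulX] using this

end EAQ
end EAQ

/-- Abstract conjugation lemma. -/
theorem EAQ.conj_lemma {F V W : Type*} [Field F] [AddCommGroup V] [Module F V]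
    [AddCommGroup W] [Module F W] (E : V ≃ₗ[F] W) (u : Module.End F V)
    (A B : Module.End F W) (a b : F)
    (hAB : ∀ x, E (u x) = A (E x) + B (E x))
    (hA : A ∘ₗ A = a • A) (hB : B ∘ₗ B = b • B) :
    ∃ v w : Module.End F V, u = v + w ∧ v * v = a • v ∧ w * w = b • w := by
  refine ⟨E.symm.toLinearMap ∘ₗ A ∘ₗ E.toLinearMap,
          E.symm.toLinearMap ∘ₗ B ∘ₗ E.toLinearMap, ?_, ?_, ?_⟩
  · ext x
    simp only [LinearMap.add_apply, LinearMap.comp_apply, LinearEquiv.coe_coe]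
    rw [← map_add, ← hAB, E.symm_apply_apply]
  · ext x
    simp only [Module.End.mul_apply, LinearMap.comp_apply, LinearEquiv.coe_coe,
      LinearMap.smul_apply]
    rw [E.apply_symm_apply, ← LinearMap.comp_apply A A, hA, LinearMap.smul_apply,
      map_smul]
  · ext x
    simp only [Module.End.mul_apply, LinearMap.comp_apply, LinearEquiv.coe_coe,
      LinearMap.smul_apply]
    rw [E.apply_symm_apply, ← LinearMap.comp_apply B B, hB, LinearMap.smul_apply,
      map_smul]



/-- Every elementary endomorphism `u` splits as `u = v + w` with `v² = a·v`
and `w² = b·w`, for any scalars `a, b`. -/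
theorem elementary_eq_add_quadratic (F : Type*) [Field F] (V : Type*) [AddCommGroup V]
    [Module F V] (a b : F) (u : Module.End F V) (hu : IsElementary u) :
    ∃ v w : Module.End F V, u = v + w ∧ v * v = a • v ∧ w * w = b • w := by
  classical
  haveI : Module.Free (Polynomial F) (Module.AEval' u) := hu
  set ι := Module.Free.ChooseBasisIndex (Polynomial F) (Module.AEval' u) with hι
  let cb : Module.Basis ι (Polynomial F) (Module.AEval' u) := Module.Free.chooseBasis _ _
  -- the `F`-linear identification of `V` with `ι →₀ F[X]`
  let E0 : V ≃ₗ[F] (ι →₀ Polynomial F) :=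
    (Module.AEval'.of u).trans (cb.repr.restrictScalars F)
  have hE0 : ∀ x : V, E0 (u x) = (X : Polynomial F) • E0 x := by
    intro x
    show (cb.repr.restrictScalars F) ((Module.AEval'.of u) (u x)) = _
    rw [← Module.AEval'.X_smul_of]
    simp only [LinearEquiv.restrictScalars_apply, LinearEquiv.trans_apply, E0]
    exact map_smul cb.repr _ _
  let E : V ≃ₗ[F] (ι →₀ Polynomial F) :=
    E0.trans (Finsupp.mapRange.linearEquiv (EAQ.kE a b))
  have hEapp : ∀ (x : V) (i : ι), E x i = EAQ.kE a b (E0 x i) := by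
    intro x i
    simp [E, Finsupp.mapRange.linearEquiv, Finsupp.mapRange.linearMap]
    rfl
  let mr : (Polynomial F →ₗ[F] Polynomial F) →
      ((ι →₀ Polynomial F) →ₗ[F] (ι →₀ Polynomial F)) := Finsupp.mapRange.linearMap
  have hmr : ∀ (φ : Polynomial F →ₗ[F] Polynomial F) (y : ι →₀ Polynomial F) (i : ι),
      mr φ y i = φ (y i) := by
    intro φ y i
    simp [mr, Finsupp.mapRange.linearMap]
    rfl
  refine EAQ.conj_lemma E u (mr (EAQ.xop a)) (mr (EAQ.yop b)) a b ?_ ?_ ?_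
  · intro x
    refine Finsupp.ext fun i => ?_
    rw [Finsupp.add_apply, hmr, hmr, hEapp, hEapp, hE0, Finsupp.smul_apply, smul_eq_mul,
      EAQ.kE_mulX]
    exact LinearMap.add_apply _ _ _
  · refine LinearMap.ext fun y => Finsupp.ext fun i => ?_
    rw [LinearMap.comp_apply, LinearMap.smul_apply, Finsupp.smul_apply, hmr]
    exact LinearMap.congr_fun (EAQ.xop_sq a) (y i)
  · refine LinearMap.ext fun y => Finsupp.ext fun i => ?_
    rw [LinearMap.comp_apply, LinearMap.smul_apply, Finsupp.smul_apply, hmr]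
    exact LinearMap.congr_fun (EAQ.yop_sq b) (y i)
end

section
/- Every elementary endomorphism of a vector space over a field is the sum of two square-zero endomorphisms. -/
/-- Every elementary endomorphism is the sum of two square-zero endomorphisms. -/
theorem elementary_sum_two_square_zero (F : Type*) [Field F] (V : Type*) [AddCommGroup V]
    [Module F V] (u : Module.End F V) (hu : IsElementary u) :
    ∃ v w : Module.End F V, u = v + w ∧ v * v = 0 ∧ w * w = 0 := by
  have hfree : Module.Free (Polynomial F) (Module.AEval' u) := hu
  obtain ⟨⟨I, b⟩⟩ := hfree
  set e := Module.AEval'.of u with he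
  set B : Module.Basis (ℕ × I) F (Module.AEval' u) := (Polynomial.basisMonomials F).smulTower b with hBdef
  set C : Module.Basis (ℕ × I) F V := B.map e.symm with hCdef
  have hB : ∀ m (i : I), B (m, i) = (Polynomial.monomial m 1 : Polynomial F) • b i := by
    intro m i
    simp [hBdef, Module.Basis.smulTower_apply, Polynomial.coe_basisMonomials]
  have hC : ∀ n (i : I), u (C (n, i)) = C (n + 1, i) := by
    intro n i
    simp only [hCdef, Module.Basis.map_apply]
    rw [← Module.AEval'.of_symm_X_smul]
    congr 1
    rw [hB, hB, smul_smul, Polynomial.X_mul_monomial]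
  set v : Module.End F V := C.constr F (fun p => if Even p.1 then C (p.1 + 1, p.2) else 0) with hv
  set w : Module.End F V := C.constr F (fun p => if Even p.1 then 0 else C (p.1 + 1, p.2)) with hw
  have hvC : ∀ p : ℕ × I, v (C p) = if Even p.1 then C (p.1 + 1, p.2) else 0 := by
    intro p; simp [hv, Module.Basis.constr_basis]
  have hwC : ∀ p : ℕ × I, w (C p) = if Even p.1 then 0 else C (p.1 + 1, p.2) := by
    intro p; simp [hw, Module.Basis.constr_basis]
  refine ⟨v, w, ?_, ?_, ?_⟩
  · refine C.ext fun p => ?_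
    obtain ⟨n, i⟩ := p
    rw [LinearMap.add_apply, hvC, hwC, hC]
    by_cases h : Even n <;> simp [h]
  · refine C.ext fun p => ?_
    obtain ⟨n, i⟩ := p
    rw [Module.End.mul_apply, hvC]
    by_cases h : Even n
    · simp only [h, if_true, hvC]
      have : ¬ Even (n + 1) := by simp [Nat.even_add_one, h]
      simp [this]
    · simp [h]
  · refine C.ext fun p => ?_
    obtain ⟨n, i⟩ := p
    rw [Module.End.mul_apply, hwC]
    by_cases h : Even n
    · simp [h]
    · simp only [h, if_false, hwC]
      have : Even (n + 1) := Nat.even_add_one.mpr h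
      simp [this]
end

section
/- Every elementary endomorphism of a vector space over a field is the sum of two idempotent endomorphisms. -/
open Polynomial


noncomputable section

namespace ElemAux

variable (F : Type*) [Field F]

def bp : Module.Basis ℕ F (Polynomial F) :=
  (Polynomial.basisMonomials F).map (Polynomial.algEquivAevalXAddC (-1 : F)).toLinearEquiv

lemma bp_apply (n : ℕ) : bp F n = (X - 1 : Polynomial F) ^ n := by
  simp only [bp, Module.Basis.map_apply, Polynomial.coe_basisMonomials]
  rw [← Polynomial.C_1, ← Polynomial.X_pow_eq_monomial]
  simp [Polynomial.algEquivAevalXAddC, map_pow, sub_eq_add_neg]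

lemma X_mul_bp (n : ℕ) : (X : Polynomial F) * bp F n = bp F n + bp F (n + 1) := by
  rw [bp_apply, bp_apply]; ring

def p₁ : Polynomial F →ₗ[F] Polynomial F :=
  (bp F).constr F fun n => if Even n then bp F n + bp F (n + 1) else 0

def q₁ : Polynomial F →ₗ[F] Polynomial F :=
  (bp F).constr F fun n => if Even n then 0 else bp F n + bp F (n + 1)

lemma p₁_bp (n : ℕ) : p₁ F (bp F n) = if Even n then bp F n + bp F (n + 1) else 0 :=
  (bp F).constr_basis F _ n

lemma q₁_bp (n : ℕ) : q₁ F (bp F n) = if Even n then 0 else bp F n + bp F (n + 1) :=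
  (bp F).constr_basis F _ n

lemma p₁_idem : (p₁ F).comp (p₁ F) = p₁ F := by
  refine (bp F).ext fun n => ?_
  rcases Nat.even_or_odd n with h | h
  · have h1 : ¬ Even (n + 1) := by simp [Nat.even_add_one, h]
    simp [LinearMap.comp_apply, p₁_bp, h, h1]
  · simp [LinearMap.comp_apply, p₁_bp, Nat.not_even_iff_odd.mpr h]

lemma q₁_idem : (q₁ F).comp (q₁ F) = q₁ F := by
  refine (bp F).ext fun n => ?_
  rcases Nat.even_or_odd n with h | h
  · simp [LinearMap.comp_apply, q₁_bp, h]
  · have h0 : ¬ Even n := Nat.not_even_iff_odd.mpr h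
    have h1 : Even (n + 1) := Nat.even_add_one.mpr h0
    simp [LinearMap.comp_apply, q₁_bp, h0, h1]

lemma p₁_add_q₁ : p₁ F + q₁ F = LinearMap.mulLeft F (X : Polynomial F) := by
  refine (bp F).ext fun n => ?_
  rcases Nat.even_or_odd n with h | h
  · simp [p₁_bp, q₁_bp, h, LinearMap.mulLeft_apply, X_mul_bp]
  · simp [p₁_bp, q₁_bp, Nat.not_even_iff_odd.mpr h, LinearMap.mulLeft_apply, X_mul_bp]

end ElemAux

end

/-- Every elementary endomorphism is the sum of two idempotent endomorphisms. -/
theorem elementary_sum_two_idempotents (F : Type*) [Field F] (V : Type*) [AddCommGroup V]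
    [Module F V] (u : Module.End F V) (hu : IsElementary u) :
    ∃ p q : Module.End F V, u = p + q ∧ p * p = p ∧ q * q = q := by
  classical
  haveI : Module.Free (Polynomial F) (Module.AEval' u) := hu
  set R := Polynomial F with hR
  set W := Module.AEval' u with hW
  set ι := Module.Free.ChooseBasisIndex R W with hι
  let b : Module.Basis ι R W := Module.Free.chooseBasis R W
  let e : V ≃ₗ[F] W := Module.AEval'.of u
  let r : W ≃ₗ[F] (ι →₀ R) := b.repr.restrictScalars F
  let Φ : (R →ₗ[F] R) → Module.End F V := fun g =>
    e.symm.toLinearMap ∘ₗ r.symm.toLinearMap ∘ₗ Finsupp.mapRange.linearMap g ∘ₗ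
      r.toLinearMap ∘ₗ e.toLinearMap
  have hΦ_apply : ∀ (g : R →ₗ[F] R) (v : V),
      Φ g v = e.symm (r.symm (Finsupp.mapRange.linearMap g (r (e v)))) := fun _ _ => rfl
  have hmul : ∀ g g' : R →ₗ[F] R, Φ g * Φ g' = Φ (g ∘ₗ g') := by
    intro g g'
    ext v
    simp only [Module.End.mul_apply, hΦ_apply]
    rw [LinearEquiv.apply_symm_apply, LinearEquiv.apply_symm_apply,
      Finsupp.mapRange.linearMap_comp, LinearMap.comp_apply]
  have hadd : ∀ g g' : R →ₗ[F] R, Φ g + Φ g' = Φ (g + g') := by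
    intro g g'
    ext v
    simp only [LinearMap.add_apply, hΦ_apply]
    rw [← map_add, ← map_add]
    congr 1
    congr 1
    ext i
    simp [Finsupp.mapRange.linearMap_apply, Finsupp.mapRange_apply]
  have hX : Φ (LinearMap.mulLeft F (X : R)) = u := by
    ext v
    rw [hΦ_apply]
    have h1 : Finsupp.mapRange.linearMap (LinearMap.mulLeft F (X : R)) (r (e v))
        = (X : R) • (r (e v)) := by
      ext i
      simp [Finsupp.mapRange.linearMap_apply, Finsupp.mapRange_apply,
        LinearMap.mulLeft_apply, Finsupp.smul_apply, smul_eq_mul]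
    rw [h1]
    have h2 : r.symm ((X : R) • (r (e v))) = (X : R) • e v := by
      have hs := b.repr.symm.map_smul (X : R) (r (e v))
      have hre : r.symm ((X : R) • (r (e v))) = b.repr.symm ((X : R) • (r (e v))) := rfl
      have hre2 : (b.repr.symm (r (e v)) : W) = e v := r.symm_apply_apply (e v)
      rw [hre, hs, hre2]
    rw [h2]
    rw [show e.symm ((X : R) • e v) = u (e.symm (e v)) from
      Module.AEval'.of_symm_X_smul u (e v), e.symm_apply_apply]
  refine ⟨Φ (ElemAux.p₁ F), Φ (ElemAux.q₁ F), ?_, ?_, ?_⟩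
  · rw [hadd, ElemAux.p₁_add_q₁, hX]
  · rw [hmul, ElemAux.p₁_idem]
  · rw [hmul, ElemAux.q₁_idem]
end

section
/- Let V be an F[t]-module admitting a stratification (V_α)_{α∈D} whose dimension sequence is constant equal to +∞ (i.e., each quotient V_α / Σ_{β<α} V_β is infinite-dimensional over F with a single generator as F[t]-module). Then V is a free F[t]-module. -/
open Polynomial

/-- The sum `Σ_{β<α} V_β` of the earlier terms of a family of submodules. -/
def prevSum {R V : Type*} [CommRing R] [AddCommGroup V] [Module R V]
    {D : Type*} [LinearOrder D] (W : D → Submodule R V) (α : D) : Submodule R V :=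
  ⨆ β, ⨆ _ : β < α, W β

/-- A stratification of a module `V` over `R`, indexed by a well-ordered set `D`:
an increasing family of submodules such that each quotient
`V_α / Σ_{β<α} V_β` is nonzero and cyclic, and whose sum is `V`. -/
def IsStratification {R V : Type*} [CommRing R] [AddCommGroup V] [Module R V]
    {D : Type*} [LinearOrder D] [WellFoundedLT D] (W : D → Submodule R V) : Prop :=
  Monotone W ∧
  (∀ α : D, ∃ x : V ⧸ prevSum W α, x ≠ 0 ∧
    (W α).map (prevSum W α).mkQ = Submodule.span R {x}) ∧
  (⨆ α, W α) = ⊤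

/-- If an `F[t]`-module `V` admits a stratification all of whose successive
quotients are infinite-dimensional over `F`, then `V` is free. -/
theorem free_of_stratification_infinite_dims (F : Type*) [Field F] (V : Type*)
    [AddCommGroup V] [Module F V] [Module (Polynomial F) V]
    [IsScalarTower F (Polynomial F) V]
    (D : Type*) [LinearOrder D] [WellFoundedLT D]
    (W : D → Submodule (Polynomial F) V) (hW : IsStratification W)
    (hdim : ∀ α : D,
      ¬ Module.Finite F (((W α).map (prevSum W α).mkQ).restrictScalars F)) :
    Module.Free (Polynomial F) V := by
  classical
  obtain ⟨hmono, hcyc, hsup⟩ := hW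
  choose xq hxq_ne hxq_span using hcyc
  -- lift the generators to elements of `W α`
  have hlift : ∀ α, ∃ y, y ∈ W α ∧ (prevSum W α).mkQ y = xq α := by
    intro α
    have hx : xq α ∈ (W α).map (prevSum W α).mkQ := by
      rw [hxq_span α]; exact Submodule.mem_span_singleton_self _
    obtain ⟨y, hy, hyq⟩ := hx
    exact ⟨y, hy, hyq⟩
  choose b hbW hbq using hlift
  have hle_prev : ∀ {β α : D}, β < α → W β ≤ prevSum W α := by
    intro β α h
    exact le_iSup₂ (f := fun (β : D) (_ : β < α) => W β) β h
  -- the annihilator of each generator is trivial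
  have hann : ∀ (α : D) (p : Polynomial F), p • xq α = 0 → p = 0 := by
    intro α p hp
    by_contra hp0
    exfalso
    apply hdim α
    set q : Polynomial F := p * C p.leadingCoeff⁻¹ with hqdef
    have hqm : q.Monic := Polynomial.monic_mul_leadingCoeff_inv hp0
    have hq0 : q • xq α = 0 := by
      rw [hqdef, mul_comm, mul_smul, hp, smul_zero]
    have hq1 : q ≠ 1 := by
      intro h1
      apply hxq_ne α
      have := hq0
      rw [h1, one_smul] at this
      exact this
    set n : ℕ := q.natDegree with hndef
    set s : Set (V ⧸ prevSum W α) :=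
      (fun i : ℕ => (X : Polynomial F) ^ i • xq α) '' Set.Iio n with hsdef
    have hsfin : s.Finite := (Set.finite_Iio n).image _
    have key : ((W α).map (prevSum W α).mkQ).restrictScalars F = Submodule.span F s := by
      apply le_antisymm
      · intro v hv
        rw [Submodule.restrictScalars_mem, hxq_span α, Submodule.mem_span_singleton] at hv
        obtain ⟨f, rfl⟩ := hv
        have hmod : f • xq α = (f %ₘ q) • xq α := by
          conv_lhs => rw [← Polynomial.modByMonic_add_div f q]
          rw [add_smul, mul_comm, mul_smul, hq0, smul_zero, add_zero]
        rw [hmod]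
        have hdeg : (f %ₘ q).natDegree < n := Polynomial.natDegree_modByMonic_lt f hqm hq1
        rw [Polynomial.as_sum_range' (f %ₘ q) n hdeg, Finset.sum_smul]
        refine Submodule.sum_mem _ fun i hi => ?_
        have hmono' : (Polynomial.monomial i ((f %ₘ q).coeff i) : Polynomial F) • xq α
            = ((f %ₘ q).coeff i) • ((X : Polynomial F) ^ i • xq α) := by
          rw [← Polynomial.C_mul_X_pow_eq_monomial, mul_smul, ← Polynomial.algebraMap_eq,
            algebraMap_smul]
        rw [hmono']
        exact Submodule.smul_mem _ _ (Submodule.subset_span ⟨i, Finset.mem_range.mp hi, rfl⟩)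
      · rw [Submodule.span_le]
        rintro _ ⟨i, _, rfl⟩
        rw [SetLike.mem_coe, Submodule.restrictScalars_mem, hxq_span α]
        exact Submodule.smul_mem _ _ (Submodule.mem_span_singleton_self _)
    rw [key]
    exact Module.Finite.span_of_finite F hsfin
  -- linear independence of the lifted generators
  have hli : LinearIndependent (Polynomial F) b := by
    rw [linearIndependent_iff']
    suffices h : ∀ s : Finset D, ∀ g : D → Polynomial F,
        (∑ i ∈ s, g i • b i = 0) → ∀ i ∈ s, g i = 0 by
      exact h
    intro s
    induction s using Finset.strongInduction with
    | _ s ih =>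
      intro g hsum i hi
      have hne : s.Nonempty := ⟨i, hi⟩
      set α : D := s.max' hne with hαdef
      have hzero_erase : ∀ j ∈ s.erase α, (prevSum W α).mkQ (b j) = 0 := by
        intro j hj
        have hj' : j < α := Finset.lt_max'_of_mem_erase_max' s hne hj
        have : b j ∈ prevSum W α := hle_prev hj' (hbW j)
        rwa [Submodule.mkQ_apply, Submodule.Quotient.mk_eq_zero]
      have hsum' : g α • xq α = 0 := by
        have h1 : (prevSum W α).mkQ (∑ i ∈ s, g i • b i) = 0 := by rw [hsum, map_zero]
        rw [map_sum] at h1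
        have h2 : ∑ j ∈ s, (prevSum W α).mkQ (g j • b j)
            = g α • (prevSum W α).mkQ (b α) := by
          rw [← Finset.add_sum_erase s _ (s.max'_mem hne)]
          rw [Finset.sum_eq_zero, add_zero, map_smul]
          intro j hj
          rw [map_smul, hzero_erase j hj, smul_zero]
        rw [h2, hbq α] at h1
        exact h1
      have hgα : g α = 0 := hann α _ hsum'
      by_cases hiα : i = α
      · rw [hiα]; exact hgα
      · have hsum'' : ∑ j ∈ s.erase α, g j • b j = 0 := by
          have := Finset.add_sum_erase s (fun j => g j • b j) (s.max'_mem hne)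
          simp only [← hαdef, hgα, zero_smul, zero_add] at this
          rw [this, hsum]
        exact ih (s.erase α) (Finset.erase_ssubset (s.max'_mem hne)) g hsum'' i
          (Finset.mem_erase.mpr ⟨hiα, hi⟩)
  -- the lifted generators span
  have hspan : ∀ α : D, W α ≤ Submodule.span (Polynomial F) (Set.range b) := by
    intro α
    induction α using WellFoundedLT.induction with
    | _ α ih =>
      intro w hw
      have hq : (prevSum W α).mkQ w ∈ (W α).map (prevSum W α).mkQ :=
        Submodule.mem_map_of_mem hw
      rw [hxq_span α, Submodule.mem_span_singleton] at hq
      obtain ⟨p, hp⟩ := hq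
      have hker : w - p • b α ∈ prevSum W α := by
        rw [← Submodule.ker_mkQ (prevSum W α), LinearMap.mem_ker, map_sub, map_smul,
          hbq α, hp, sub_self]
      have hprev : prevSum W α ≤ Submodule.span (Polynomial F) (Set.range b) := by
        refine iSup₂_le fun β hβ => ih β hβ
      have h1 : w - p • b α ∈ Submodule.span (Polynomial F) (Set.range b) := hprev hker
      have h2 : p • b α ∈ Submodule.span (Polynomial F) (Set.range b) :=
        Submodule.smul_mem _ _ (Submodule.subset_span ⟨α, rfl⟩)
      have := Submodule.add_mem _ h1 h2
      rwa [sub_add_cancel] at this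
  have htop : ⊤ ≤ Submodule.span (Polynomial F) (Set.range b) := by
    rw [← hsup]
    exact iSup_le hspan
  exact Module.Free.of_basis (Module.Basis.mk hli htop)
end

section
/- Let u be an endomorphism of an F-vector space V and let (V_α)_{α∈κ} be a stratification of the F[t]-module V^u with associated vector sequence (x_α). Suppose that whenever κ has a maximum M, the quotient at M is infinite-dimensional. Then for any connector v of u with respect to (x_α), the endomorphism u + v is elementary. -/
open Polynomial

/-- `x` is a vector sequence associated to the family of submodules `W`:
each `x α` generates `W α` over `Σ_{β<α} W β`, and lies outside the latter. -/
def IsVectorSeq {R V : Type*} [CommRing R] [AddCommGroup V] [Module R V]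
    {D : Type*} [LinearOrder D] (W : D → Submodule R V) (x : D → V) : Prop :=
  ∀ α : D, x α ∉ prevSum W α ∧ W α = Submodule.span R {x α} ⊔ prevSum W α

/-- `n` is the `F`-dimension of the quotient `W α / Σ_{β<α} W β`, i.e. the
degree of the minimal (monic) polynomial annihilating the class of `x α`. -/
def HasQuotDim {F V : Type*} [Field F] [AddCommGroup V] [Module (Polynomial F) V]
    {D : Type*} [LinearOrder D] (W : D → Submodule (Polynomial F) V) (x : D → V)
    (α : D) (n : ℕ) : Prop :=
  (∃ p : Polynomial F, p.Monic ∧ p.natDegree = n ∧ p • x α ∈ prevSum W α) ∧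
  ∀ p : Polynomial F, p ≠ 0 → p • x α ∈ prevSum W α → n ≤ p.natDegree

/-- `v` is a connector for `u` with respect to the vector sequence `x` of the
stratification `W` of `V^u`: on the basis `(t^k • x α)_{α, 0 ≤ k < n_α}`, for
each `α` with `n_α` finite it sends `t^{n_α - 1} • x α` to `x_{α+1}` modulo
`W α` (where `α + 1` is the successor of `α`) and every other basis vector
to `0`. -/
def IsConnector {F V : Type*} [Field F] [AddCommGroup V] [Module F V]
    {D : Type*} [LinearOrder D] (u : Module.End F V) (v : Module.End F V)
    (W : D → Submodule (Polynomial F) (Module.AEval' u))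
    (x : D → Module.AEval' u) : Prop :=
  ∀ α : D,
    (∀ n : ℕ, HasQuotDim W x α n →
      (∀ k : ℕ, k + 1 < n →
        v ((u ^ k) ((Module.AEval'.of u).symm (x α))) = 0) ∧
      (∀ β : D, α < β → (∀ γ : D, α < γ → β ≤ γ) →
        Module.AEval'.of u (v ((u ^ (n - 1)) ((Module.AEval'.of u).symm (x α))))
          - x β ∈ W α)) ∧
    ((∀ n : ℕ, ¬ HasQuotDim W x α n) →
      ∀ k : ℕ, v ((u ^ k) ((Module.AEval'.of u).symm (x α))) = 0)


section Connect

open scoped Classical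
set_option linter.unusedSectionVars false

variable {F V : Type*} [Field F] [AddCommGroup V] [Module F V]
  {D : Type*} [LinearOrder D] [WellFoundedLT D]
  (u : Module.End F V)
  (W : D → Submodule (Polynomial F) (Module.AEval' u))
  (x : D → Module.AEval' u)

/-- x as elements of `V`. -/
noncomputable def xV (α : D) : V := (Module.AEval'.of u).symm (x α)

/-- `W α` as an `F`-submodule of `V`. -/
noncomputable def WV (α : D) : Submodule F V :=
  Submodule.comap (Module.AEval'.of u : V →ₗ[F] Module.AEval' u)
    ((W α).restrictScalars F)

/-- `prevSum W α` as an `F`-submodule of `V`. -/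
noncomputable def PV (α : D) : Submodule F V :=
  Submodule.comap (Module.AEval'.of u : V →ₗ[F] Module.AEval' u)
    ((prevSum W α).restrictScalars F)

lemma mem_WV {z : V} {α : D} : z ∈ WV u W α ↔ Module.AEval'.of u z ∈ W α := Iff.rfl

lemma mem_PV {z : V} {α : D} : z ∈ PV u W α ↔ Module.AEval'.of u z ∈ prevSum W α := Iff.rfl

lemma of_aeval (p : Polynomial F) (z : V) :
    Module.AEval'.of u ((Polynomial.aeval u p) z) = p • Module.AEval'.of u z := by
  rw [← Module.AEval.of_aeval_smul]
  rfl

lemma aeval_mem_WV {z : V} {α : D} (hz : z ∈ WV u W α) (p : Polynomial F) :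
    (Polynomial.aeval u p) z ∈ WV u W α := by
  rw [mem_WV, of_aeval]
  exact (W α).smul_mem p hz

lemma aeval_mem_PV {z : V} {α : D} (hz : z ∈ PV u W α) (p : Polynomial F) :
    (Polynomial.aeval u p) z ∈ PV u W α := by
  rw [mem_PV, of_aeval]
  exact (prevSum W α).smul_mem p hz

lemma u_mem_WV {z : V} {α : D} (hz : z ∈ WV u W α) : u z ∈ WV u W α := by
  simpa using aeval_mem_WV u W hz X

lemma u_mem_PV {z : V} {α : D} (hz : z ∈ PV u W α) : u z ∈ PV u W α := by
  simpa using aeval_mem_PV u W hz X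

lemma PV_le (hx : IsVectorSeq W x) (α : D) : PV u W α ≤ WV u W α := by
  intro z hz
  rw [mem_WV, (hx α).2]
  exact Submodule.mem_sup_right hz

lemma xV_mem_WV (hx : IsVectorSeq W x) (α : D) : xV u x α ∈ WV u W α := by
  rw [mem_WV, (hx α).2]
  exact Submodule.mem_sup_left (Submodule.mem_span_singleton_self _)

lemma WV_mono (hmono : Monotone W) {α β : D} (h : α ≤ β) : WV u W α ≤ WV u W β :=
  fun _ hz => hmono h hz

lemma WV_le_PV {α β : D} (h : α < β) : WV u W α ≤ PV u W β := by
  intro z hz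
  rw [mem_PV, prevSum]
  exact Submodule.mem_iSup_of_mem α (Submodule.mem_iSup_of_mem h hz)

/-- Universal property to get out of `PV`. -/
lemma PV_le_of (hmono : Monotone W) {α : D} (Q : Submodule F V)
    (hQ : ∀ δ, δ < α → WV u W δ ≤ Q) : PV u W α ≤ Q := by
  intro z hz
  rw [mem_PV, prevSum] at hz
  have hdir : Directed (· ≤ ·) (fun β => ⨆ _ : β < α, W β) := by
    have key : ∀ β₁ β₂ : D, β₁ ≤ β₂ → ∃ γ, (⨆ _ : β₁ < α, W β₁) ≤ (⨆ _ : γ < α, W γ) ∧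
        (⨆ _ : β₂ < α, W β₂) ≤ (⨆ _ : γ < α, W γ) := by
      intro β₁ β₂ h
      by_cases h2 : β₂ < α
      · refine ⟨β₂, ?_, le_rfl⟩
        rw [iSup_pos h2]
        exact iSup_le fun _ => hmono h
      · refine ⟨β₁, le_rfl, ?_⟩
        simp [h2]
    intro β₁ β₂
    rcases le_total β₁ β₂ with h | h
    · exact key β₁ β₂ h
    · obtain ⟨γ, h1, h2⟩ := key β₂ β₁ h
      exact ⟨γ, h2, h1⟩
  haveI : Nonempty D := ⟨α⟩
  obtain ⟨β, hβ⟩ := (Submodule.mem_iSup_of_directed _ hdir).1 hz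
  by_cases hb : β < α
  · rw [iSup_pos hb] at hβ
    exact hQ β hb hβ
  · simp only [hb, iSup_false, Submodule.mem_bot] at hβ
    have : z = 0 := (Module.AEval'.of u).injective (by simpa using hβ)
    rw [this]; exact Q.zero_mem

end Connect

section Connect2
open scoped Classical
set_option linter.unusedSectionVars false

variable {F V : Type*} [Field F] [AddCommGroup V] [Module F V]
  {D : Type*} [LinearOrder D] [WellFoundedLT D]
  (u : Module.End F V)
  (W : D → Submodule (Polynomial F) (Module.AEval' u))
  (x : D → Module.AEval' u)

/-- The quotient at `α` is finite dimensional. -/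
def QFin (α : D) : Prop := ∃ n, HasQuotDim W x α n

/-- The dimension of the quotient at `α` (junk value if infinite). -/
noncomputable def qd (α : D) : ℕ := if h : QFin u W x α then h.choose else 0

lemma HasQuotDim.unique {α : D} {n n' : ℕ} (h : HasQuotDim W x α n)
    (h' : HasQuotDim W x α n') : n = n' := by
  obtain ⟨p, hp, hdeg, hmem⟩ := h.1
  obtain ⟨p', hp', hdeg', hmem'⟩ := h'.1
  have h1 := h.2 p' hp'.ne_zero hmem'
  have h2 := h'.2 p hp.ne_zero hmem
  omega

lemma qd_spec {α : D} (h : QFin u W x α) : HasQuotDim W x α (qd u W x α) := by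
  rw [qd, dif_pos h]
  exact h.choose_spec

lemma qd_eq {α : D} {n : ℕ} (h : HasQuotDim W x α n) : qd u W x α = n :=
  (qd_spec u W x ⟨n, h⟩).unique u W x h

lemma qd_pos (hx : IsVectorSeq W x) {α : D} (h : QFin u W x α) : 1 ≤ qd u W x α := by
  by_contra hn
  have h0 : HasQuotDim W x α 0 := by
    have := qd_spec u W x h
    rwa [Nat.lt_one_iff.1 (not_le.1 hn)] at this
  obtain ⟨p, hp, hdeg, hmem⟩ := h0.1
  rw [hp.natDegree_eq_zero.1 hdeg] at hmem
  rw [one_smul] at hmem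
  exact (hx α).1 hmem

/-- Any nonzero annihilator modulo `prevSum` witnesses finite quotient dimension
and bounds it. -/
lemma qfin_of_torsion {α : D} {p : Polynomial F} (hp : p ≠ 0)
    (hmem : p • x α ∈ prevSum W α) :
    QFin u W x α ∧ qd u W x α ≤ p.natDegree := by
  have hex : ∃ n, ∃ q : Polynomial F, q ≠ 0 ∧ q.natDegree = n ∧ q • x α ∈ prevSum W α :=
    ⟨p.natDegree, p, hp, rfl, hmem⟩
  set n₀ := Nat.find hex with hn₀
  obtain ⟨q, hq0, hqdeg, hqmem⟩ := Nat.find_spec hex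
  have hq : HasQuotDim W x α n₀ := by
    constructor
    · refine ⟨q * Polynomial.C q.leadingCoeff⁻¹, Polynomial.monic_mul_leadingCoeff_inv hq0, ?_, ?_⟩
      · rw [mul_comm, Polynomial.natDegree_C_mul (inv_ne_zero (Polynomial.leadingCoeff_ne_zero.2 hq0))]
        exact hqdeg
      · rw [mul_comm, mul_smul]
        exact (prevSum W α).smul_mem _ hqmem
    · intro r hr hrmem
      exact Nat.find_le ⟨r, hr, rfl, hrmem⟩
  refine ⟨⟨n₀, hq⟩, ?_⟩
  rw [qd_eq u W x hq]
  exact Nat.find_min' hex ⟨p, hp, rfl, hmem⟩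

/-- A finite-dimensional quotient index has a strict upper bound. -/
lemma exists_gt_of_qfin (hmax : ∀ M : D, (∀ β : D, β ≤ M) → ∀ n : ℕ, ¬ HasQuotDim W x M n)
    {α : D} (h : QFin u W x α) : ∃ β, α < β := by
  by_contra hn
  push_neg at hn
  obtain ⟨n, hned⟩ := h
  exact hmax α (fun β => hn β) n hned

/-- The successor of `α` in `D` (junk value `α` if no strict upper bound). -/
noncomputable def succD (α : D) : D :=
  if h : ∃ β, α < β then (wellFounded_lt (α := D)).min {β | α < β} h else α

lemma lt_succD {α : D} (h : ∃ β, α < β) : α < succD α := by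
  rw [succD, dif_pos h]
  exact (wellFounded_lt (α := D)).min_mem {β | α < β} h

lemma succD_le {α β : D} (h : α < β) : succD α ≤ β := by
  rw [succD, dif_pos ⟨β, h⟩]
  exact not_lt.1 ((wellFounded_lt (α := D)).not_lt_min {γ | α < γ} h)

lemma succD_inj (hmax : ∀ M : D, (∀ β : D, β ≤ M) → ∀ n : ℕ, ¬ HasQuotDim W x M n)
    {α β : D} (hα : QFin u W x α) (hβ : QFin u W x β) (h : succD α = succD β) : α = β := by
  by_contra hne
  rcases lt_or_gt_of_ne hne with hlt | hlt
  · have h1 : succD α ≤ β := succD_le hlt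
    have h2 : β < succD β := lt_succD (exists_gt_of_qfin u W x hmax hβ)
    rw [h] at h1
    exact absurd h1 (not_le.2 h2)
  · have h1 : succD β ≤ α := succD_le hlt
    have h2 : α < succD α := lt_succD (exists_gt_of_qfin u W x hmax hα)
    rw [← h] at h1
    exact absurd h1 (not_le.2 h2)

end Connect2

section Connect3
open scoped Classical
set_option linter.unusedSectionVars false
set_option maxHeartbeats 1000000

variable {F V : Type*} [Field F] [AddCommGroup V] [Module F V]
  {D : Type*} [LinearOrder D] [WellFoundedLT D]
  (u : Module.End F V)
  (W : D → Submodule (Polynomial F) (Module.AEval' u))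
  (x : D → Module.AEval' u)

/-- Position in the chain after `j` steps starting at `α`. -/
noncomputable def posn (α : D) : ℕ → D × ℕ
  | 0 => (α, 0)
  | (j+1) =>
    if QFin u W x (posn α j).1 ∧ (posn α j).2 + 1 = qd u W x (posn α j).1
    then (succD (posn α j).1, 0) else ((posn α j).1, (posn α j).2 + 1)

/-- `α` is a starting point of a chain. -/
def IsStart (α : D) : Prop := ¬ ∃ γ, QFin u W x γ ∧ succD γ = α

/-- Span of `u^s (x β)` for `s < r`. -/
noncomputable def SpanLow (β : D) (r : ℕ) : Submodule F V :=
  Submodule.span F ((fun s => (u ^ s) (xV u x β)) '' Set.Iio r)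

/-- The "lower" submodule at position `(β, r)`. -/
noncomputable def Tsub (β : D) (r : ℕ) : Submodule F V :=
  PV u W β ⊔ SpanLow u x β r

lemma pow_mem_SpanLow {β : D} {s r : ℕ} (h : s < r) :
    (u ^ s) (xV u x β) ∈ SpanLow u x β r :=
  Submodule.subset_span ⟨s, h, rfl⟩

lemma SpanLow_mono {β : D} {r r' : ℕ} (h : r ≤ r') : SpanLow u x β r ≤ SpanLow u x β r' :=
  Submodule.span_mono (Set.image_mono fun _ hs => lt_of_lt_of_le hs h)

lemma pow_mem_WV {z : V} {α : D} (hz : z ∈ WV u W α) (s : ℕ) : (u ^ s) z ∈ WV u W α := by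
  induction s with
  | zero => simpa using hz
  | succ n ih => rw [pow_succ', Module.End.mul_apply]; exact u_mem_WV u W ih

lemma SpanLow_le_WV (hx : IsVectorSeq W x) (β : D) (r : ℕ) :
    SpanLow u x β r ≤ WV u W β := by
  rw [SpanLow, Submodule.span_le]
  rintro _ ⟨s, _, rfl⟩
  exact pow_mem_WV u W (xV_mem_WV u W x hx β) s

lemma Tsub_le_WV (hx : IsVectorSeq W x) (β : D) (r : ℕ) : Tsub u W x β r ≤ WV u W β :=
  sup_le (PV_le u W x hx β) (SpanLow_le_WV u W x hx β r)

lemma Tsub_mono {β : D} {r r' : ℕ} (h : r ≤ r') : Tsub u W x β r ≤ Tsub u W x β r' :=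
  sup_le_sup_left (SpanLow_mono u x h) _

/-- Apply a polynomial in `u` to an element all whose `u`-power images lie in `Q`. -/
lemma aeval_mem_of_pow_mem (Q : Submodule F V) (z : V) (k : ℕ)
    (h : ∀ i, i < k → (u ^ i) z ∈ Q) (p : Polynomial F) (hp : p.natDegree < k) :
    (Polynomial.aeval u p) z ∈ Q := by
  rw [Polynomial.aeval_eq_sum_range' hp]
  rw [LinearMap.coe_sum, Finset.sum_apply]
  refine Submodule.sum_mem Q fun i hi => ?_
  rw [LinearMap.smul_apply]
  exact Q.smul_mem _ (h i (Finset.mem_range.1 hi))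

lemma map_aeval_mem_of_pow_mem (v : Module.End F V) (Q : Submodule F V) (z : V) (k : ℕ)
    (h : ∀ i, i < k → v ((u ^ i) z) ∈ Q) (p : Polynomial F) (hp : p.natDegree < k) :
    v ((Polynomial.aeval u p) z) ∈ Q := by
  rw [Polynomial.aeval_eq_sum_range' hp]
  rw [LinearMap.coe_sum, Finset.sum_apply, map_sum]
  refine Submodule.sum_mem Q fun i hi => ?_
  rw [LinearMap.smul_apply, map_smul]
  exact Q.smul_mem _ (h i (Finset.mem_range.1 hi))

/-- The evaluation-at-`x β` linear map. -/
noncomputable def evalAt (β : D) : Polynomial F →ₗ[F] V where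
  toFun p := (Polynomial.aeval u p) (xV u x β)
  map_add' p q := by simp
  map_smul' c p := by simp

lemma exists_poly_of_mem_SpanLow {β : D} {r : ℕ} {z : V} (hz : z ∈ SpanLow u x β r) :
    ∃ p : Polynomial F, p.degree < (r : WithBot ℕ) ∧ (Polynomial.aeval u p) (xV u x β) = z := by
  have : SpanLow u x β r ≤ Submodule.map (evalAt u x β) (Polynomial.degreeLT F r) := by
    rw [SpanLow, Submodule.span_le]
    rintro _ ⟨s, hs, rfl⟩
    refine ⟨Polynomial.X ^ s, ?_, by simp [evalAt]⟩
    simp only [SetLike.mem_coe, Polynomial.mem_degreeLT, Polynomial.degree_X_pow]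
    exact_mod_cast hs
  obtain ⟨p, hp, hpz⟩ := this hz
  exact ⟨p, Polynomial.mem_degreeLT.1 hp, hpz⟩

lemma of_xV (α : D) : Module.AEval'.of u (xV u x α) = x α := by
  rw [xV]; exact (Module.AEval'.of u).apply_symm_apply _

lemma aeval_xV_mem_PV {α : D} {p : Polynomial F} (h : p • x α ∈ prevSum W α) :
    (Polynomial.aeval u p) (xV u x α) ∈ PV u W α := by
  rw [mem_PV, of_aeval, of_xV]
  exact h

lemma monic_sub_pow_natDegree_lt {p : Polynomial F} {n : ℕ} (hp : p.Monic)
    (hdeg : p.natDegree = n) (hn : 1 ≤ n) : (p - Polynomial.X ^ n).natDegree < n := by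
  by_cases h : p = Polynomial.X ^ n
  · simp [h]; omega
  · have hd : (p - Polynomial.X ^ n).degree < p.degree := by
      refine Polynomial.degree_sub_lt ?_ hp.ne_zero ?_
      · rw [Polynomial.degree_X_pow, Polynomial.degree_eq_natDegree hp.ne_zero, hdeg]
      · rw [Polynomial.monic_X_pow n |>.leadingCoeff, hp.leadingCoeff]
    rw [Polynomial.degree_eq_natDegree hp.ne_zero, hdeg] at hd
    exact Polynomial.natDegree_lt_iff_degree_lt (fun h0 => h (by rwa [sub_eq_zero] at h0)) |>.2 hd

/-- `u^n (x β) ∈ Tsub β n` when the quotient dimension is `n`. -/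
lemma pow_qd_mem_Tsub (hx : IsVectorSeq W x) {β : D} (h : QFin u W x β) :
    (u ^ (qd u W x β)) (xV u x β) ∈ Tsub u W x β (qd u W x β) := by
  set n := qd u W x β with hn
  obtain ⟨p, hp, hdeg, hmem⟩ := (qd_spec u W x h).1
  have h1 : (Polynomial.aeval u p) (xV u x β) ∈ PV u W β := aeval_xV_mem_PV u W x hmem
  have h2 : (Polynomial.aeval u (p - Polynomial.X ^ n)) (xV u x β) ∈ SpanLow u x β n := by
    refine aeval_mem_of_pow_mem u (SpanLow u x β n) _ n
      (fun i hi => pow_mem_SpanLow u x hi) _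
      (monic_sub_pow_natDegree_lt hp hdeg (qd_pos u W x hx h))
  have key : (u ^ n) (xV u x β) =
      (Polynomial.aeval u p) (xV u x β)
        - (Polynomial.aeval u (p - Polynomial.X ^ n)) (xV u x β) := by
    rw [map_sub, LinearMap.sub_apply]
    simp
  rw [key]
  exact sub_mem (Submodule.mem_sup_left h1) (Submodule.mem_sup_right h2)

/-- The independence kernel: `u^r (x β)` does not lie in `Tsub β r` for valid `r`. -/
lemma pow_not_mem_Tsub (hx : IsVectorSeq W x) {β : D} {r : ℕ}
    (hvalid : QFin u W x β → r < qd u W x β) :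
    (u ^ r) (xV u x β) ∉ Tsub u W x β r := by
  intro hmem
  rw [Tsub] at hmem
  obtain ⟨zP, hzP, zS, hzS, hsum⟩ := Submodule.mem_sup.1 hmem
  obtain ⟨p, hpdeg, hpz⟩ := exists_poly_of_mem_SpanLow u x hzS
  set q : Polynomial F := Polynomial.X ^ r - p with hq
  have hqdeg : q.natDegree ≤ r := by
    refine le_trans (Polynomial.natDegree_sub_le _ _) ?_
    simp only [Polynomial.natDegree_X_pow, max_le_iff, le_refl, true_and]
    rcases eq_or_ne p 0 with h0 | h0
    · simp [h0]
    · exact Polynomial.natDegree_le_iff_degree_le.2 (le_of_lt hpdeg)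
  have hq0 : q ≠ 0 := by
    intro h0
    have : q.coeff r = 0 := by rw [h0]; simp
    rw [hq, Polynomial.coeff_sub, Polynomial.coeff_X_pow, if_pos rfl,
      Polynomial.coeff_eq_zero_of_degree_lt hpdeg] at this
    simp at this
  have hqx : (Polynomial.aeval u q) (xV u x β) ∈ PV u W β := by
    have : (Polynomial.aeval u q) (xV u x β) = (u ^ r) (xV u x β) - zS := by
      rw [hq, map_sub, LinearMap.sub_apply, hpz]
      simp
    rw [this, ← hsum]
    simpa using hzP
  have hqmem : q • x β ∈ prevSum W β := by
    rw [mem_PV, of_aeval, of_xV] at hqx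
    exact hqx
  obtain ⟨hfin, hle⟩ := qfin_of_torsion u W x hq0 hqmem
  have := hvalid hfin
  omega

end Connect3

section Connect4
open scoped Classical
set_option linter.unusedSectionVars false
set_option maxHeartbeats 1000000

variable {F V : Type*} [Field F] [AddCommGroup V] [Module F V]
  {D : Type*} [LinearOrder D] [WellFoundedLT D]
  (u : Module.End F V)
  (W : D → Submodule (Polynomial F) (Module.AEval' u))
  (x : D → Module.AEval' u)
  (v : Module.End F V)

lemma pow_mem_PV {z : V} {α : D} (hz : z ∈ PV u W α) (s : ℕ) : (u ^ s) z ∈ PV u W α := by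
  induction s with
  | zero => simpa using hz
  | succ n ih => rw [pow_succ', Module.End.mul_apply]; exact u_mem_PV u W ih

/-- C1 : `v` kills the non-top basis vectors. -/
lemma v_pow_eq_zero (hv : IsConnector u v W x) {β : D} {k : ℕ}
    (h : QFin u W x β → k + 1 < qd u W x β) : v ((u ^ k) (xV u x β)) = 0 := by
  by_cases hf : QFin u W x β
  · exact ((hv β).1 (qd u W x β) (qd_spec u W x hf)).1 k (h hf)
  · exact (hv β).2 (fun n hn => hf ⟨n, hn⟩) k

/-- C2 : `v` sends the top basis vector to `x (succD β)` mod `W β`. -/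
lemma v_top_mem (hv : IsConnector u v W x)
    (hmax : ∀ M : D, (∀ β : D, β ≤ M) → ∀ n : ℕ, ¬ HasQuotDim W x M n)
    {β : D} (hf : QFin u W x β) :
    v ((u ^ (qd u W x β - 1)) (xV u x β)) - xV u x (succD β) ∈ WV u W β := by
  have hlt : β < succD β := lt_succD (exists_gt_of_qfin u W x hmax hf)
  have hmin : ∀ γ, β < γ → succD β ≤ γ := fun γ hγ => succD_le hγ
  have := ((hv β).1 (qd u W x β) (qd_spec u W x hf)).2 (succD β) hlt hmin
  rw [mem_WV, map_sub, of_xV]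
  exact this

/-- The bound submodule for the image of `W γ` under `v`. -/
noncomputable def VB (γ : D) : Submodule F V :=
  if QFin u W x γ then WV u W γ ⊔ Submodule.span F {xV u x (succD γ)} else WV u W γ

lemma WV_le_VB (γ : D) : WV u W γ ≤ VB u W x γ := by
  rw [VB]
  split
  · exact le_sup_left
  · exact le_rfl

lemma VB_le_WV_of_lt (hmono : Monotone W) (hx : IsVectorSeq W x) {γ δ : D} (h : γ < δ) :
    VB u W x γ ≤ WV u W δ := by
  rw [VB]
  split
  · refine sup_le (WV_mono u W hmono h.le) ?_
    rw [Submodule.span_le, Set.singleton_subset_iff]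
    exact WV_mono u W hmono (succD_le h) (xV_mem_WV u W x hx (succD γ))
  · exact WV_mono u W hmono h.le

lemma VB_le_PV_sup_span (hmono : Monotone W) (hx : IsVectorSeq W x) {γ δ : D} (h : δ < γ) :
    VB u W x δ ≤ PV u W γ ⊔ Submodule.span F {xV u x γ} := by
  rw [VB]
  split
  · refine sup_le (le_trans (WV_le_PV u W h) le_sup_left) ?_
    rw [Submodule.span_le, Set.singleton_subset_iff]
    rcases lt_or_eq_of_le (succD_le h) with hlt | heq
    · exact Submodule.mem_sup_left (WV_le_PV u W hlt (xV_mem_WV u W x hx (succD δ)))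
    · rw [heq]
      exact Submodule.mem_sup_right (Submodule.mem_span_singleton_self _)
  · exact le_trans (WV_le_PV u W h) le_sup_left

/-- C3-prelim : image of `prevSum` under `v`, given inductive control below `γ`. -/
lemma v_mem_PV_sup_of_IH (hmono : Monotone W) (hx : IsVectorSeq W x) {γ : D}
    (IH : ∀ δ, δ < γ → ∀ z ∈ WV u W δ, v z ∈ VB u W x δ) :
    ∀ z ∈ PV u W γ, v z ∈ PV u W γ ⊔ Submodule.span F {xV u x γ} := by
  have := PV_le_of u W hmono (α := γ)
    (Submodule.comap v (PV u W γ ⊔ Submodule.span F {xV u x γ}))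
    (fun δ hδ z hz => VB_le_PV_sup_span u W x hmono hx hδ (IH δ hδ z hz))
  exact fun z hz => this hz

/-- C3 : the image of `W γ` under `v` is controlled. -/
lemma v_mem_VB (hmono : Monotone W) (hx : IsVectorSeq W x)
    (hmax : ∀ M : D, (∀ β : D, β ≤ M) → ∀ n : ℕ, ¬ HasQuotDim W x M n)
    (hv : IsConnector u v W x) :
    ∀ γ : D, ∀ z ∈ WV u W γ, v z ∈ VB u W x γ := by
  intro γ
  induction γ using WellFounded.induction (wellFounded_lt (α := D)) with
  | _ γ IH =>
  have hPV : ∀ z ∈ PV u W γ, v z ∈ PV u W γ ⊔ Submodule.span F {xV u x γ} :=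
    v_mem_PV_sup_of_IH u W x v hmono hx IH
  have hPVle : PV u W γ ⊔ Submodule.span F {xV u x γ} ≤ VB u W x γ := by
    refine sup_le (le_trans (PV_le u W x hx γ) (WV_le_VB u W x γ)) ?_
    rw [Submodule.span_le, Set.singleton_subset_iff]
    exact WV_le_VB u W x γ (xV_mem_WV u W x hx γ)
  have hpow : ∀ k : ℕ, v ((u ^ k) (xV u x γ)) ∈ VB u W x γ := by
    intro k
    induction k using Nat.strong_induction_on with
    | _ k IHk =>
    by_cases hf : QFin u W x γ
    · set n := qd u W x γ with hn
      have hn1 : 1 ≤ n := qd_pos u W x hx hf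
      by_cases hk : k < n
      · by_cases hk1 : k + 1 < n
        · rw [v_pow_eq_zero u W x v hv (fun _ => hk1)]
          exact (VB u W x γ).zero_mem
        · have hkeq : k = n - 1 := by omega
          rw [hkeq]
          have h1 := v_top_mem u W x v hv hmax hf
          have h2 : v ((u ^ (n - 1)) (xV u x γ)) =
              (v ((u ^ (n - 1)) (xV u x γ)) - xV u x (succD γ)) + xV u x (succD γ) := by
            abel
          rw [h2, VB, if_pos hf]
          exact add_mem (Submodule.mem_sup_left h1)
            (Submodule.mem_sup_right (Submodule.mem_span_singleton_self _))
      · push_neg at hk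
        obtain ⟨p, hp, hdeg, hmem⟩ := (qd_spec u W x hf).1
        have key : (u ^ k) (xV u x γ) =
            (u ^ (k - n)) ((Polynomial.aeval u p) (xV u x γ))
              - (Polynomial.aeval u (Polynomial.X ^ (k - n) * (p - Polynomial.X ^ n)))
                  (xV u x γ) := by
          have : (u ^ (k - n)) ((Polynomial.aeval u p) (xV u x γ)) =
              (Polynomial.aeval u (Polynomial.X ^ (k - n) * p)) (xV u x γ) := by
            rw [map_mul, Module.End.mul_apply]
            simp
          rw [this, ← LinearMap.sub_apply, ← map_sub]
          have harith : Polynomial.X ^ (k - n) * p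
              - Polynomial.X ^ (k - n) * (p - Polynomial.X ^ n)
              = (Polynomial.X : Polynomial F) ^ k := by
            rw [mul_sub, sub_sub_cancel, ← pow_add]
            congr 1
            omega
          rw [harith]
          simp
        rw [key, map_sub]
        refine sub_mem ?_ ?_
        · refine hPVle (hPV _ ?_)
          exact pow_mem_PV u W (aeval_xV_mem_PV u W x hmem) (k - n)
        · refine map_aeval_mem_of_pow_mem u v (VB u W x γ) _ k
            (fun i hi => IHk i hi) _ ?_
          refine lt_of_le_of_lt (Polynomial.natDegree_mul_le) ?_
          have h1 : (Polynomial.X ^ (k - n) : Polynomial F).natDegree = k - n :=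
            Polynomial.natDegree_X_pow _
          have h2 : (p - Polynomial.X ^ n).natDegree < n :=
            monic_sub_pow_natDegree_lt hp hdeg hn1
          omega
    · rw [v_pow_eq_zero u W x v hv (fun h => absurd h hf)]
      exact (VB u W x γ).zero_mem
  intro z hz
  rw [mem_WV, (hx γ).2] at hz
  obtain ⟨a, ha, b, hb, hab⟩ := Submodule.mem_sup.1 hz
  obtain ⟨p, rfl⟩ := Submodule.mem_span_singleton.1 ha
  have hz' : z = (Polynomial.aeval u p) (xV u x γ) + (Module.AEval'.of u).symm b := by
    apply (Module.AEval'.of u).injective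
    rw [map_add, of_aeval, of_xV, (Module.AEval'.of u).apply_symm_apply]
    exact hab.symm
  rw [hz', map_add]
  refine add_mem ?_ (hPVle (hPV _ hb))
  exact map_aeval_mem_of_pow_mem u v (VB u W x γ) _ (p.natDegree + 1)
    (fun i _ => hpow i) p (Nat.lt_succ_self _)

/-- C4 : image of `prevSum` under `v`. -/
lemma v_mem_PV_sup (hmono : Monotone W) (hx : IsVectorSeq W x)
    (hmax : ∀ M : D, (∀ β : D, β ≤ M) → ∀ n : ℕ, ¬ HasQuotDim W x M n)
    (hv : IsConnector u v W x) (γ : D) :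
    ∀ z ∈ PV u W γ, v z ∈ PV u W γ ⊔ Submodule.span F {xV u x γ} :=
  v_mem_PV_sup_of_IH u W x v hmono hx
    (fun δ _ => v_mem_VB u W x v hmono hx hmax hv δ)

end Connect4

section Connect5
open scoped Classical
set_option linter.unusedSectionVars false
set_option maxHeartbeats 1000000

variable {F V : Type*} [Field F] [AddCommGroup V] [Module F V]
  {D : Type*} [LinearOrder D] [WellFoundedLT D]
  (u : Module.End F V)
  (W : D → Submodule (Polynomial F) (Module.AEval' u))
  (x : D → Module.AEval' u)
  (v : Module.End F V)

lemma posn_valid (hx : IsVectorSeq W x) (α : D) (j : ℕ) :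
    QFin u W x (posn u W x α j).1 → (posn u W x α j).2 < qd u W x (posn u W x α j).1 := by
  induction j with
  | zero =>
    intro h
    exact lt_of_lt_of_le Nat.zero_lt_one (qd_pos u W x hx h)
  | succ j IH =>
    by_cases hc : QFin u W x (posn u W x α j).1 ∧
        (posn u W x α j).2 + 1 = qd u W x (posn u W x α j).1
    · rw [posn, if_pos hc]
      intro h
      exact lt_of_lt_of_le Nat.zero_lt_one (qd_pos u W x hx h)
    · rw [posn, if_neg hc]
      intro h
      have h1 := IH h
      have h2 : ¬((posn u W x α j).2 + 1 = qd u W x (posn u W x α j).1) := fun he => hc ⟨h, he⟩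
      simp only at h1 h2 ⊢
      omega

/-- A2 : `u + v` maps `Tsub β r` into `Tsub β (r+1)`. -/
lemma w_maps_Tsub (hmono : Monotone W) (hx : IsVectorSeq W x)
    (hmax : ∀ M : D, (∀ β : D, β ≤ M) → ∀ n : ℕ, ¬ HasQuotDim W x M n)
    (hv : IsConnector u v W x) {β : D} {r : ℕ} (hval : QFin u W x β → r < qd u W x β) :
    ∀ z ∈ Tsub u W x β r, (u + v) z ∈ Tsub u W x β (r + 1) := by
  have hsuff : Tsub u W x β r ≤ Submodule.comap (u + v) (Tsub u W x β (r + 1)) := by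
    rw [Tsub]
    refine sup_le ?_ ?_
    · intro z hz
      rw [Submodule.mem_comap, LinearMap.add_apply]
      refine add_mem (Submodule.mem_sup_left (u_mem_PV u W hz)) ?_
      have h1 := v_mem_PV_sup u W x v hmono hx hmax hv β z hz
      have hspan : Submodule.span F {xV u x β} ≤ SpanLow u x β (r + 1) := by
        rw [Submodule.span_le, Set.singleton_subset_iff]
        have h0 : xV u x β = (u ^ 0) (xV u x β) := by simp
        rw [h0]
        exact SetLike.mem_coe.2 (pow_mem_SpanLow u x (Nat.zero_lt_succ r))
      exact sup_le_sup_left hspan (PV u W β) h1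
    · rw [SpanLow, Submodule.span_le]
      rintro _ ⟨s, hs, rfl⟩
      rw [Set.mem_Iio] at hs
      rw [SetLike.mem_coe, Submodule.mem_comap, LinearMap.add_apply]
      refine add_mem ?_ ?_
      · have : u ((u ^ s) (xV u x β)) = (u ^ (s + 1)) (xV u x β) := by
          rw [pow_succ', Module.End.mul_apply]
        rw [this]
        exact Submodule.mem_sup_right (pow_mem_SpanLow u x (by omega))
      · rw [v_pow_eq_zero u W x v hv (fun hf => by have := hval hf; omega)]
        exact zero_mem _
  exact fun z hz => hsuff hz

lemma posn_succ (α : D) (j : ℕ) : posn u W x α (j + 1) =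
    if QFin u W x (posn u W x α j).1 ∧
        (posn u W x α j).2 + 1 = qd u W x (posn u W x α j).1
    then (succD (posn u W x α j).1, 0)
    else ((posn u W x α j).1, (posn u W x α j).2 + 1) := by
  rw [posn]

/-- A1, the KEY lemma: tracking `(u+v)^j (x α)` along the chain. -/
lemma key_posn (hmono : Monotone W) (hx : IsVectorSeq W x)
    (hmax : ∀ M : D, (∀ β : D, β ≤ M) → ∀ n : ℕ, ¬ HasQuotDim W x M n)
    (hv : IsConnector u v W x) (α : D) (j : ℕ) :
    ((u + v) ^ j) (xV u x α)
      - (u ^ (posn u W x α j).2) (xV u x (posn u W x α j).1)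
      ∈ Tsub u W x (posn u W x α j).1 (posn u W x α j).2 := by
  induction j with
  | zero =>
    have : posn u W x α 0 = (α, 0) := rfl
    rw [this]
    simp only [pow_zero, Module.End.one_apply]
    rw [sub_self]
    exact zero_mem _
  | succ j IH =>
    set β := (posn u W x α j).1 with hβ
    set r := (posn u W x α j).2 with hr
    have hval : QFin u W x β → r < qd u W x β := posn_valid u W x hx α j
    have hwj : ((u + v) ^ (j + 1)) (xV u x α) = (u + v) (((u + v) ^ j) (xV u x α)) := by
      rw [pow_succ', Module.End.mul_apply]
    set e := ((u + v) ^ j) (xV u x α) - (u ^ r) (xV u x β) with he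
    have hsplit : ((u + v) ^ (j + 1)) (xV u x α)
        = (u ^ (r + 1)) (xV u x β) + v ((u ^ r) (xV u x β)) + (u + v) e := by
      rw [hwj]
      have : ((u + v) ^ j) (xV u x α) = (u ^ r) (xV u x β) + e := by rw [he]; abel
      rw [this, map_add, LinearMap.add_apply]
      have : u ((u ^ r) (xV u x β)) = (u ^ (r + 1)) (xV u x β) := by
        rw [pow_succ', Module.End.mul_apply]
      rw [this]
    by_cases hc : QFin u W x β ∧ r + 1 = qd u W x β
    · have hstep : posn u W x α (j + 1) = (succD β, 0) := by
        rw [posn_succ, ← hβ, ← hr, if_pos hc]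
      rw [hstep]
      simp only [pow_zero, Module.End.one_apply]
      have hβsucc : β < succD β := lt_succD (exists_gt_of_qfin u W x hmax hc.1)
      have hWle : WV u W β ≤ PV u W (succD β) := WV_le_PV u W hβsucc
      have hTle : Tsub u W x β (r + 1) ≤ WV u W β := Tsub_le_WV u W x hx β (r + 1)
      have m1 : (u ^ (r + 1)) (xV u x β) ∈ PV u W (succD β) := by
        apply hWle; apply hTle
        rw [hc.2]
        exact pow_qd_mem_Tsub u W x hx hc.1
      have m2 : v ((u ^ r) (xV u x β)) - xV u x (succD β) ∈ PV u W (succD β) := by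
        apply hWle
        have : r = qd u W x β - 1 := by
          have := qd_pos u W x hx hc.1; omega
        rw [this]
        exact v_top_mem u W x v hv hmax hc.1
      have m3 : (u + v) e ∈ PV u W (succD β) := by
        apply hWle; apply hTle
        exact w_maps_Tsub u W x v hmono hx hmax hv hval e IH
      have heq : ((u + v) ^ (j + 1)) (xV u x α) - xV u x (succD β)
          = (u ^ (r + 1)) (xV u x β) + (v ((u ^ r) (xV u x β)) - xV u x (succD β))
            + (u + v) e := by
        rw [hsplit]; abel
      rw [heq]
      exact Submodule.mem_sup_left (add_mem (add_mem m1 m2) m3)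
    · have hstep : posn u W x α (j + 1) = (β, r + 1) := by
        rw [posn_succ, ← hβ, ← hr, if_neg hc]
      rw [hstep]
      have hv0 : v ((u ^ r) (xV u x β)) = 0 := by
        refine v_pow_eq_zero u W x v hv (fun hf => ?_)
        have h1 := hval hf
        have h2 : ¬(r + 1 = qd u W x β) := fun he => hc ⟨hf, he⟩
        omega
      have heq : ((u + v) ^ (j + 1)) (xV u x α) - (u ^ (r + 1)) (xV u x β)
          = (u + v) e := by
        rw [hsplit, hv0]; abel
      rw [heq]
      exact w_maps_Tsub u W x v hmono hx hmax hv hval e IH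

end Connect5

section Connect6
open scoped Classical
set_option linter.unusedSectionVars false
set_option maxHeartbeats 1000000

variable {F V : Type*} [Field F] [AddCommGroup V] [Module F V]
  {D : Type*} [LinearOrder D] [WellFoundedLT D]
  (u : Module.End F V)
  (W : D → Submodule (Polynomial F) (Module.AEval' u))
  (x : D → Module.AEval' u)

/-- A4 : lex-monotonicity of `Tsub`. -/
lemma lex_lt_Tsub (hmono : Monotone W) (hx : IsVectorSeq W x) {β' β : D} {r' r : ℕ}
    (h : β' < β ∨ (β' = β ∧ r' < r)) :
    (u ^ r') (xV u x β') ∈ Tsub u W x β r ∧ Tsub u W x β' r' ≤ Tsub u W x β r := by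
  rcases h with h | ⟨rfl, hr⟩
  · constructor
    · exact Submodule.mem_sup_left
        (WV_le_PV u W h (pow_mem_WV u W (xV_mem_WV u W x hx β') r'))
    · exact le_trans (Tsub_le_WV u W x hx β' r')
        (le_trans (WV_le_PV u W h) le_sup_left)
  · constructor
    · exact Submodule.mem_sup_right (pow_mem_SpanLow u x hr)
    · exact Tsub_mono u W x (le_of_lt hr)

lemma posn_inj_aux (hmax : ∀ M : D, (∀ β : D, β ≤ M) → ∀ n : ℕ, ¬ HasQuotDim W x M n) :
    ∀ N : ℕ, ∀ α α' : D, IsStart u W x α → IsStart u W x α' → ∀ j j' : ℕ, j + j' ≤ N →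
      posn u W x α j = posn u W x α' j' → α = α' ∧ j = j' := by
  intro N
  induction N with
  | zero =>
    intro α α' hα hα' j j' hle heq
    have hj : j = 0 := by omega
    have hj' : j' = 0 := by omega
    subst hj; subst hj'
    have h1 : posn u W x α 0 = (α, 0) := rfl
    have h2 : posn u W x α' 0 = (α', 0) := rfl
    rw [h1, h2, Prod.mk.injEq] at heq
    exact ⟨heq.1, rfl⟩
  | succ N IHN =>
    intro α α' hα hα' j j' hle heq
    match j, j' with
    | 0, 0 =>
      have h1 : posn u W x α 0 = (α, 0) := rfl
      have h2 : posn u W x α' 0 = (α', 0) := rfl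
      rw [h1, h2, Prod.mk.injEq] at heq
      exact ⟨heq.1, rfl⟩
    | 0, (j' + 1) =>
      exfalso
      have h1 : posn u W x α 0 = (α, 0) := rfl
      rw [h1, posn_succ] at heq
      by_cases hc : QFin u W x (posn u W x α' j').1 ∧
          (posn u W x α' j').2 + 1 = qd u W x (posn u W x α' j').1
      · rw [if_pos hc, Prod.mk.injEq] at heq
        exact hα ⟨(posn u W x α' j').1, hc.1, heq.1.symm⟩
      · rw [if_neg hc, Prod.mk.injEq] at heq
        omega
    | (j + 1), 0 =>
      exfalso
      have h1 : posn u W x α' 0 = (α', 0) := rfl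
      rw [h1, posn_succ] at heq
      by_cases hc : QFin u W x (posn u W x α j).1 ∧
          (posn u W x α j).2 + 1 = qd u W x (posn u W x α j).1
      · rw [if_pos hc, Prod.mk.injEq] at heq
        exact hα' ⟨(posn u W x α j).1, hc.1, heq.1⟩
      · rw [if_neg hc, Prod.mk.injEq] at heq
        omega
    | (j + 1), (j' + 1) =>
      rw [posn_succ, posn_succ] at heq
      by_cases hc : QFin u W x (posn u W x α j).1 ∧
          (posn u W x α j).2 + 1 = qd u W x (posn u W x α j).1
      · by_cases hc' : QFin u W x (posn u W x α' j').1 ∧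
            (posn u W x α' j').2 + 1 = qd u W x (posn u W x α' j').1
        · rw [if_pos hc, if_pos hc', Prod.mk.injEq] at heq
          have hfst : (posn u W x α j).1 = (posn u W x α' j').1 :=
            succD_inj u W x hmax hc.1 hc'.1 heq.1
          have hsnd : (posn u W x α j).2 = (posn u W x α' j').2 := by
            have e1 := hc.2
            have e2 := hc'.2
            rw [hfst] at e1
            omega
          have heq' : posn u W x α j = posn u W x α' j' := Prod.ext hfst hsnd
          obtain ⟨ha, hj⟩ := IHN α α' hα hα' j j' (by omega) heq'
          exact ⟨ha, by omega⟩
        · rw [if_pos hc, if_neg hc', Prod.mk.injEq] at heq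
          omega
      · by_cases hc' : QFin u W x (posn u W x α' j').1 ∧
            (posn u W x α' j').2 + 1 = qd u W x (posn u W x α' j').1
        · rw [if_neg hc, if_pos hc', Prod.mk.injEq] at heq
          omega
        · rw [if_neg hc, if_neg hc', Prod.mk.injEq] at heq
          have heq' : posn u W x α j = posn u W x α' j' :=
            Prod.ext heq.1 (by omega)
          obtain ⟨ha, hj⟩ := IHN α α' hα hα' j j' (by omega) heq'
          exact ⟨ha, by omega⟩

lemma posn_inj (hmax : ∀ M : D, (∀ β : D, β ≤ M) → ∀ n : ℕ, ¬ HasQuotDim W x M n)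
    {α α' : D} (hα : IsStart u W x α) (hα' : IsStart u W x α') {j j' : ℕ}
    (heq : posn u W x α j = posn u W x α' j') : α = α' ∧ j = j' :=
  posn_inj_aux u W x hmax (j + j') α α' hα hα' j j' le_rfl heq

/-- COV : every valid position is reached by a chain from a start. -/
lemma posn_surj (hx : IsVectorSeq W x)
    (hmax : ∀ M : D, (∀ β : D, β ≤ M) → ∀ n : ℕ, ¬ HasQuotDim W x M n) :
    ∀ β : D, ∀ r : ℕ, (QFin u W x β → r < qd u W x β) →
      ∃ α j, IsStart u W x α ∧ posn u W x α j = (β, r) := by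
  intro β
  induction β using WellFounded.induction (wellFounded_lt (α := D)) with
  | _ β IHβ =>
  intro r
  induction r with
  | zero =>
    intro _
    by_cases hs : IsStart u W x β
    · exact ⟨β, 0, hs, rfl⟩
    · rw [IsStart] at hs
      obtain ⟨γ, hγf, hγs⟩ := not_not.1 hs
      have hγβ : γ < β := hγs ▸ lt_succD (exists_gt_of_qfin u W x hmax hγf)
      have hqpos := qd_pos u W x hx hγf
      obtain ⟨α, j, hα, hpos⟩ := IHβ γ hγβ (qd u W x γ - 1) (fun _ => by omega)
      refine ⟨α, j + 1, hα, ?_⟩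
      rw [posn_succ]
      simp only [hpos]
      rw [if_pos ⟨hγf, by omega⟩]
      rw [hγs]
  | succ r IHr =>
    intro hval
    obtain ⟨α, j, hα, hpos⟩ := IHr (fun hf => by have := hval hf; omega)
    refine ⟨α, j + 1, hα, ?_⟩
    rw [posn_succ]
    simp only [hpos]
    have hcond : ¬(QFin u W x ((β, r) : D × ℕ).1 ∧
        ((β, r) : D × ℕ).2 + 1 = qd u W x ((β, r) : D × ℕ).1) := by
      rintro ⟨hf, he⟩
      have he' : r + 1 = qd u W x β := he
      have := hval hf
      omega
    rw [if_neg hcond]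

end Connect6

section Connect7
open scoped Classical
set_option linter.unusedSectionVars false
set_option maxHeartbeats 1000000

variable {F V : Type*} [Field F] [AddCommGroup V] [Module F V]
  {D : Type*} [LinearOrder D] [WellFoundedLT D]
  (u : Module.End F V)
  (W : D → Submodule (Polynomial F) (Module.AEval' u))
  (x : D → Module.AEval' u)
  (v : Module.End F V)

/-- Finite `F`-linear independence of the family `(u+v)^j (x α)` over starts. -/
lemma indep_finset (hmono : Monotone W) (hx : IsVectorSeq W x)
    (hmax : ∀ M : D, (∀ β : D, β ≤ M) → ∀ n : ℕ, ¬ HasQuotDim W x M n)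
    (hv : IsConnector u v W x) :
    ∀ (t : Finset (D × ℕ)) (c : D × ℕ → F),
      (∀ p ∈ t, IsStart u W x p.1) →
      (∑ p ∈ t, c p • (((u + v) ^ p.2) (xV u x p.1))) = 0 → ∀ p ∈ t, c p = 0 := by
  intro t
  induction t using Finset.strongInduction with
  | _ t IHt =>
  intro c hstart hsum p hp
  have hne : t.Nonempty := ⟨p, hp⟩
  obtain ⟨q, hq, hqmax⟩ := Finset.exists_max_image t
    (fun p' => toLex (posn u W x p'.1 p'.2)) hne
  have hval : QFin u W x (posn u W x q.1 q.2).1 →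
      (posn u W x q.1 q.2).2 < qd u W x (posn u W x q.1 q.2).1 :=
    posn_valid u W x hx q.1 q.2
  have heT : ((u + v) ^ q.2) (xV u x q.1)
      - (u ^ (posn u W x q.1 q.2).2) (xV u x (posn u W x q.1 q.2).1)
      ∈ Tsub u W x (posn u W x q.1 q.2).1 (posn u W x q.1 q.2).2 :=
    key_posn u W x v hmono hx hmax hv q.1 q.2
  have hsplit : c q • (((u + v) ^ q.2) (xV u x q.1))
      + ∑ p' ∈ t.erase q, c p' • (((u + v) ^ p'.2) (xV u x p'.1)) = 0 := by
    have h0 := Finset.add_sum_erase t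
      (fun p' => c p' • (((u + v) ^ p'.2) (xV u x p'.1))) hq
    rw [h0]
    exact hsum
  have hqterm : c q • (((u + v) ^ q.2) (xV u x q.1))
      = -∑ p' ∈ t.erase q, c p' • (((u + v) ^ p'.2) (xV u x p'.1)) :=
    eq_neg_of_add_eq_zero_left hsplit
  have hmem : c q • ((u ^ (posn u W x q.1 q.2).2) (xV u x (posn u W x q.1 q.2).1))
      ∈ Tsub u W x (posn u W x q.1 q.2).1 (posn u W x q.1 q.2).2 := by
    have hrw : c q • ((u ^ (posn u W x q.1 q.2).2) (xV u x (posn u W x q.1 q.2).1))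
        = c q • (((u + v) ^ q.2) (xV u x q.1))
          - c q • (((u + v) ^ q.2) (xV u x q.1)
              - (u ^ (posn u W x q.1 q.2).2) (xV u x (posn u W x q.1 q.2).1)) := by
      rw [smul_sub]
      abel
    rw [hrw, hqterm]
    refine sub_mem (neg_mem ?_) (Submodule.smul_mem _ _ heT)
    refine Submodule.sum_mem _ fun p' hp' => ?_
    have hp't : p' ∈ t := Finset.mem_of_mem_erase hp'
    have hle : toLex (posn u W x p'.1 p'.2) ≤ toLex (posn u W x q.1 q.2) := hqmax p' hp't
    have hne' : posn u W x p'.1 p'.2 ≠ posn u W x q.1 q.2 := by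
      intro heq
      obtain ⟨h1, h2⟩ := posn_inj u W x hmax (hstart p' hp't) (hstart q hq) heq
      exact (Finset.ne_of_mem_erase hp') (Prod.ext h1 h2)
    have hlt : toLex (posn u W x p'.1 p'.2) < toLex (posn u W x q.1 q.2) := by
      refine lt_of_le_of_ne hle (fun h => hne' ?_)
      exact congrArg ofLex h
    rw [Prod.Lex.lt_iff] at hlt
    obtain ⟨hmem1, hle1⟩ := lex_lt_Tsub u W x hmono hx hlt
    have hterm : ((u + v) ^ p'.2) (xV u x p'.1)
        = (u ^ (posn u W x p'.1 p'.2).2) (xV u x (posn u W x p'.1 p'.2).1)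
          + (((u + v) ^ p'.2) (xV u x p'.1)
              - (u ^ (posn u W x p'.1 p'.2).2) (xV u x (posn u W x p'.1 p'.2).1)) := by
      abel
    rw [hterm, smul_add]
    exact add_mem (Submodule.smul_mem _ _ hmem1)
      (Submodule.smul_mem _ _ (hle1 (key_posn u W x v hmono hx hmax hv p'.1 p'.2)))
  have hcq : c q = 0 := by
    by_contra hne0
    have h2 : (u ^ (posn u W x q.1 q.2).2) (xV u x (posn u W x q.1 q.2).1)
        ∈ Tsub u W x (posn u W x q.1 q.2).1 (posn u W x q.1 q.2).2 := by
      have := Submodule.smul_mem (Tsub u W x (posn u W x q.1 q.2).1 (posn u W x q.1 q.2).2)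
        (c q)⁻¹ hmem
      rwa [inv_smul_smul₀ hne0] at this
    exact pow_not_mem_Tsub u W x hx hval h2
  rw [hcq, zero_smul, zero_add] at hsplit
  have hrest := IHt (t.erase q) (Finset.erase_ssubset hq) c
    (fun p' hp' => hstart p' (Finset.mem_of_mem_erase hp')) hsplit
  by_cases hpq : p = q
  · rw [hpq]; exact hcq
  · exact hrest p (Finset.mem_erase.2 ⟨hpq, hp⟩)

end Connect7

section Connect8
open scoped Classical
set_option linter.unusedSectionVars false
set_option maxHeartbeats 1000000

variable {F V : Type*} [Field F] [AddCommGroup V] [Module F V]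
  {D : Type*} [LinearOrder D] [WellFoundedLT D]
  (u : Module.End F V)
  (W : D → Submodule (Polynomial F) (Module.AEval' u))
  (x : D → Module.AEval' u)
  (v : Module.End F V)

lemma WV_top (hmono : Monotone W) (htop : (⨆ α, W α) = ⊤) (Q : Submodule F V)
    (hQ : ∀ δ, WV u W δ ≤ Q) (z : V) : z ∈ Q := by
  have hz : Module.AEval'.of u z ∈ ⨆ α, W α := by
    rw [htop]; exact Submodule.mem_top
  cases isEmpty_or_nonempty D with
  | inl h =>
    rw [iSup_of_empty] at hz
    have hz0 : z = 0 := (Module.AEval'.of u).injective (by simpa using hz)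
    rw [hz0]; exact Q.zero_mem
  | inr h =>
    obtain ⟨β, hβ⟩ := (Submodule.mem_iSup_of_directed _ hmono.directed_le).1 hz
    exact hQ β hβ

lemma WV_le_span (hmono : Monotone W) (hx : IsVectorSeq W x)
    (hmax : ∀ M : D, (∀ β : D, β ≤ M) → ∀ n : ℕ, ¬ HasQuotDim W x M n)
    (hv : IsConnector u v W x) (Y : Submodule F V)
    (hY1 : ∀ α, IsStart u W x α → xV u x α ∈ Y)
    (hY2 : ∀ z ∈ Y, (u + v) z ∈ Y) :
    ∀ β, WV u W β ≤ Y := by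
  have hY3 : ∀ α, IsStart u W x α → ∀ j, ((u + v) ^ j) (xV u x α) ∈ Y := by
    intro α hα j
    induction j with
    | zero => simpa using hY1 α hα
    | succ j IH =>
      rw [pow_succ', Module.End.mul_apply]
      exact hY2 _ IH
  intro β
  induction β using WellFounded.induction (wellFounded_lt (α := D)) with
  | _ β IHβ =>
  have hPle : PV u W β ≤ Y := PV_le_of u W hmono Y IHβ
  have inner1 : ∀ r, (QFin u W x β → r < qd u W x β) → (u ^ r) (xV u x β) ∈ Y := by
    intro r
    induction r using Nat.strong_induction_on with
    | _ r IHr =>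
    intro hval
    obtain ⟨α, j, hα, hpos⟩ := posn_surj u W x hx hmax β r hval
    have hkey := key_posn u W x v hmono hx hmax hv α j
    rw [hpos] at hkey
    have hTle : Tsub u W x β r ≤ Y := by
      refine sup_le hPle ?_
      rw [SpanLow, Submodule.span_le]
      rintro _ ⟨s, hs, rfl⟩
      rw [Set.mem_Iio] at hs
      exact IHr s hs (fun hf => lt_trans hs (hval hf))
    have hsub : (u ^ r) (xV u x β) = ((u + v) ^ j) (xV u x α)
        - (((u + v) ^ j) (xV u x α) - (u ^ r) (xV u x β)) := by abel
    rw [hsub]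
    exact sub_mem (hY3 α hα j) (hTle hkey)
  have inner2 : ∀ k, (u ^ k) (xV u x β) ∈ Y := by
    intro k
    by_cases hf : QFin u W x β
    · induction k using Nat.strong_induction_on with
      | _ k IHk =>
      by_cases hk : k < qd u W x β
      · exact inner1 k (fun _ => hk)
      · push_neg at hk
        set n := qd u W x β with hn
        have hn1 : 1 ≤ n := qd_pos u W x hx hf
        obtain ⟨pm, hpm, hdeg, hmem⟩ := (qd_spec u W x hf).1
        have key : (u ^ k) (xV u x β) =
            (u ^ (k - n)) ((Polynomial.aeval u pm) (xV u x β))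
              - (Polynomial.aeval u (Polynomial.X ^ (k - n) * (pm - Polynomial.X ^ n)))
                  (xV u x β) := by
          have h1 : (u ^ (k - n)) ((Polynomial.aeval u pm) (xV u x β)) =
              (Polynomial.aeval u (Polynomial.X ^ (k - n) * pm)) (xV u x β) := by
            rw [map_mul, Module.End.mul_apply]
            simp
          rw [h1, ← LinearMap.sub_apply, ← map_sub]
          have harith : Polynomial.X ^ (k - n) * pm
              - Polynomial.X ^ (k - n) * (pm - Polynomial.X ^ n)
              = (Polynomial.X : Polynomial F) ^ k := by
            rw [mul_sub, sub_sub_cancel, ← pow_add]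
            congr 1
            omega
          rw [harith]
          simp
        rw [key]
        refine sub_mem (hPle (pow_mem_PV u W (aeval_xV_mem_PV u W x hmem) (k - n))) ?_
        refine aeval_mem_of_pow_mem u Y _ k (fun i hi => IHk i hi) _ ?_
        refine lt_of_le_of_lt (Polynomial.natDegree_mul_le) ?_
        have h1 : (Polynomial.X ^ (k - n) : Polynomial F).natDegree = k - n :=
          Polynomial.natDegree_X_pow _
        have h2 : (pm - Polynomial.X ^ n).natDegree < n :=
          monic_sub_pow_natDegree_lt hpm hdeg hn1
        omega
    · exact inner1 k (fun h => absurd h hf)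
  intro z hz
  rw [mem_WV, (hx β).2] at hz
  obtain ⟨a, ha, b, hb, hab⟩ := Submodule.mem_sup.1 hz
  obtain ⟨p, rfl⟩ := Submodule.mem_span_singleton.1 ha
  have hz' : z = (Polynomial.aeval u p) (xV u x β) + (Module.AEval'.of u).symm b := by
    apply (Module.AEval'.of u).injective
    rw [map_add, of_aeval, of_xV, (Module.AEval'.of u).apply_symm_apply]
    exact hab.symm
  rw [hz']
  refine add_mem ?_ (hPle ?_)
  · exact aeval_mem_of_pow_mem u Y _ (p.natDegree + 1) (fun i _ => inner2 i) p
      (Nat.lt_succ_self _)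
  · rw [mem_PV, (Module.AEval'.of u).apply_symm_apply]
    exact hb

end Connect8

/-- If `(W α)` is a stratification of `V^u` with vector sequence `(x α)` such
that the quotient at a maximal index (if any) is infinite-dimensional, then for
any connector `v`, the endomorphism `u + v` is elementary. -/
theorem elementary_of_connector (F : Type*) [Field F] (V : Type*) [AddCommGroup V]
    [Module F V] (u : Module.End F V)
    (D : Type*) [LinearOrder D] [WellFoundedLT D]
    (W : D → Submodule (Polynomial F) (Module.AEval' u))
    (x : D → Module.AEval' u)
    (hmono : Monotone W) (hx : IsVectorSeq W x) (htop : (⨆ α, W α) = ⊤)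
    (hmax : ∀ M : D, (∀ β : D, β ≤ M) → ∀ n : ℕ, ¬ HasQuotDim W x M n)
    (v : Module.End F V) (hv : IsConnector u v W x) :
    Module.Free (Polynomial F) (Module.AEval' (u + v)) := by
  classical
  let ι := {α : D // IsStart u W x α}
  let y : ι → Module.AEval' (u + v) := fun α => Module.AEval'.of (u + v) (xV u x α.1)
  have hli : LinearIndependent (Polynomial F) y := by
    rw [linearIndependent_iff]
    intro l hl
    set N := (l.support.sup fun α => (l α).natDegree) + 1 with hN
    have hdeg : ∀ α ∈ l.support, (l α).natDegree < N := fun α hα =>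
      Nat.lt_succ_of_le (Finset.le_sup (f := fun α => (l α).natDegree) hα)
    set emb : ι ↪ D := ⟨Subtype.val, Subtype.val_injective⟩ with hemb
    set t : Finset (D × ℕ) := (l.support.map emb) ×ˢ Finset.range N with ht
    set c : D × ℕ → F :=
      fun pr => if h : IsStart u W x pr.1 then (l ⟨pr.1, h⟩).coeff pr.2 else 0 with hc
    have hstart : ∀ pr ∈ t, IsStart u W x pr.1 := by
      intro pr hpr
      rw [ht, Finset.mem_product] at hpr
      obtain ⟨a, _, hval⟩ := Finset.mem_map.1 hpr.1
      rw [← hval]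
      exact a.2
    have hsum : ∑ pr ∈ t, c pr • (((u + v) ^ pr.2) (xV u x pr.1)) = 0 := by
      rw [ht, Finset.sum_product, Finset.sum_map]
      have hterm : ∀ α ∈ l.support,
          ∑ k ∈ Finset.range N, c (emb α, k) • (((u + v) ^ k) (xV u x (emb α)))
            = (Polynomial.aeval (u + v) (l α)) (xV u x α.1) := by
        intro α hα
        rw [Polynomial.aeval_eq_sum_range' (hdeg α hα)]
        rw [LinearMap.coe_sum, Finset.sum_apply]
        refine Finset.sum_congr rfl fun k hk => ?_
        rw [LinearMap.smul_apply]
        have hcval : c (emb α, k) = (l α).coeff k := by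
          rw [hc]
          simp only [hemb, Function.Embedding.coeFn_mk]
          rw [dif_pos α.2]
        rw [hcval]
        rfl
      rw [Finset.sum_congr rfl hterm]
      have hl' := congrArg (Module.AEval'.of (u + v)).symm hl
      rw [map_zero] at hl'
      rw [Finsupp.linearCombination_apply, Finsupp.sum, map_sum] at hl'
      rw [← hl']
      refine Finset.sum_congr rfl fun α hα => ?_
      rw [Module.AEval.of_symm_smul]
      rw [LinearEquiv.symm_apply_apply]
      rfl
    have hall := indep_finset u W x v hmono hx hmax hv t c hstart hsum
    refine Finsupp.ext fun α => ?_
    show l α = 0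
    by_cases hα : α ∈ l.support
    · refine Polynomial.ext fun k => ?_
      rw [Polynomial.coeff_zero]
      by_cases hk : k < N
      · have hmem : ((α : D), k) ∈ t := by
          rw [ht, Finset.mem_product]
          exact ⟨Finset.mem_map.2 ⟨α, hα, rfl⟩, Finset.mem_range.2 hk⟩
        have h0 := hall ((α : D), k) hmem
        rw [hc] at h0
        simp only at h0
        rw [dif_pos α.2] at h0
        rw [← h0]
      · push_neg at hk
        exact Polynomial.coeff_eq_zero_of_natDegree_lt
          (lt_of_lt_of_le (hdeg α hα) hk)
    · exact Finsupp.notMem_support_iff.1 hα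
  have hsp : ⊤ ≤ Submodule.span (Polynomial F) (Set.range y) := by
    intro m _
    set Y : Submodule F V :=
      Submodule.comap (Module.AEval'.of (u + v) : V →ₗ[F] Module.AEval' (u + v))
        ((Submodule.span (Polynomial F) (Set.range y)).restrictScalars F) with hY
    have hY1 : ∀ α, IsStart u W x α → xV u x α ∈ Y := by
      intro α hα
      show Module.AEval'.of (u + v) (xV u x α) ∈
        (Submodule.span (Polynomial F) (Set.range y)).restrictScalars F
      rw [Submodule.restrictScalars_mem]
      exact Submodule.subset_span ⟨⟨α, hα⟩, rfl⟩
    have hY2 : ∀ z ∈ Y, (u + v) z ∈ Y := by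
      intro z hz
      have hz' : Module.AEval'.of (u + v) z
          ∈ Submodule.span (Polynomial F) (Set.range y) := hz
      show Module.AEval'.of (u + v) ((u + v) z) ∈
        (Submodule.span (Polynomial F) (Set.range y)).restrictScalars F
      rw [Submodule.restrictScalars_mem, ← Module.AEval'.X_smul_of]
      exact Submodule.smul_mem _ _ hz'
    have hWle : ∀ β, WV u W β ≤ Y := WV_le_span u W x v hmono hx hmax hv Y hY1 hY2
    have hzY : (Module.AEval'.of (u + v)).symm m ∈ Y := WV_top u W hmono htop Y hWle _
    have hfin : Module.AEval'.of (u + v) ((Module.AEval'.of (u + v)).symm m)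
        ∈ Submodule.span (Polynomial F) (Set.range y) := hzY
    rwa [LinearEquiv.apply_symm_apply] at hfin
  exact Module.Free.of_basis (Module.Basis.mk hli hsp)
end
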